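/- arXiv:2205.12246 — 7 statements merged into one kernel-verified Lean document; each statement's English description precedes it below -/
import Mathlib

section
/- Let G be a simple graph on n vertices. For each edge e of G, let c(e) denote the largest integer r such that e is an edge of a subgraph of G isomorphic to the complete graph K_r. Then the sum over all edges e of G of c(e)/(c(e)-1) is at most n²/2. -/
open Finset

lemma ratio_antitone {a b : ℕ} (ha : 2 ≤ a) (hab : a ≤ b) :
    (b : ℝ) / ((b : ℝ) - 1) ≤ (a : ℝ) / ((a : ℝ) - 1) := by
  have ha' : (2:ℝ) ≤ a := by exact_mod_cast ha
  have hab' : (a:ℝ) ≤ b := by exact_mod_cast hab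
  rw [div_le_div_iff₀ (by linarith) (by linarith)]
  nlinarith

lemma ratio_cast_nonneg (c : ℕ) : 0 ≤ (c : ℝ) / ((c : ℝ) - 1) := by
  match c with
  | 0 => norm_num
  | 1 => norm_num
  | (n+2) =>
    have : (2:ℝ) ≤ ((n+2 : ℕ) : ℝ) := by push_cast; linarith
    apply div_nonneg <;> linarith

lemma sum_image_le' {α β : Type*} [DecidableEq α] [DecidableEq β] (s : Finset α) (g : α → β)
    (f : β → ℝ) (hf : ∀ b, 0 ≤ f b) : ∑ b ∈ s.image g, f b ≤ ∑ a ∈ s, f (g a) := by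
  induction s using Finset.induction with
  | empty => simp
  | insert _ _ ha ih =>
    rename_i a s
    rw [Finset.image_insert, Finset.sum_insert ha]
    by_cases h : g a ∈ s.image g
    · rw [Finset.insert_eq_self.2 h]
      have := hf (g a)
      linarith
    · rw [Finset.sum_insert h]
      linarith

noncomputable def pairFinset {V : Type*} [DecidableEq V] : Sym2 V → Finset V :=
  Sym2.lift ⟨fun x y => ({x, y} : Finset V), fun a b => Finset.pair_comm a b⟩

@[simp] lemma pairFinset_mk {V : Type*} [DecidableEq V] (a b : V) :
    pairFinset s(a, b) = ({a, b} : Finset V) := rfl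

lemma pair_eq_sym2 {V : Type*} [DecidableEq V] {a b c d : V}
    (h : ({a, b} : Finset V) = {c, d}) : s(a, b) = s(c, d) := by
  have hc : c ∈ ({a, b} : Finset V) := by rw [h]; simp
  have hd : d ∈ ({a, b} : Finset V) := by rw [h]; simp
  have ha : a ∈ ({c, d} : Finset V) := by rw [← h]; simp
  have hb : b ∈ ({c, d} : Finset V) := by rw [← h]; simp
  simp only [mem_insert, mem_singleton] at hc hd ha hb
  rw [Sym2.eq_iff]
  tauto

section CS
variable {V : Type*} [Fintype V] [DecidableEq V]

def eSet (G : SimpleGraph V) (s : Finset V) (e : Sym2 V) : Set ℕ :=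
  {r | ∃ t : Finset V, t ⊆ s ∧ G.IsNClique r t ∧ ∀ v ∈ e, v ∈ t}

noncomputable def csz (G : SimpleGraph V) (s : Finset V) (e : Sym2 V) : ℕ := sSup (eSet G s e)

variable (G : SimpleGraph V) [DecidableRel G.Adj]

lemma eSet_bdd (s : Finset V) (e : Sym2 V) : ∀ r ∈ eSet G s e, r ≤ s.card := by
  rintro r ⟨t, hts, ht, -⟩
  rw [← ht.2]; exact Finset.card_le_card hts

lemma two_mem_eSet {s : Finset V} {e : Sym2 V} (he : e ∈ G.edgeFinset)
    (hes : ∀ v ∈ e, v ∈ s) : 2 ∈ eSet G s e := by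
  revert he hes
  refine Sym2.inductionOn e ?_
  intro a b he hes
  · have hadj : G.Adj a b := by rwa [SimpleGraph.mem_edgeFinset, SimpleGraph.mem_edgeSet] at he
    refine ⟨{a, b}, ?_, ⟨?_, ?_⟩, ?_⟩
    · intro v hv
      simp only [mem_insert, mem_singleton] at hv
      rcases hv with rfl | rfl
      · exact hes _ (by simp)
      · exact hes _ (by simp)
    · rw [coe_insert, coe_singleton]
      exact SimpleGraph.isClique_pair.2 fun _ => hadj
    · exact card_pair hadj.ne
    · intro v hv
      rw [Sym2.mem_iff] at hv
      rcases hv with rfl | rfl <;> simp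

lemma csz_isGreatest {s : Finset V} {e : Sym2 V} (he : e ∈ G.edgeFinset)
    (hes : ∀ v ∈ e, v ∈ s) : IsGreatest (eSet G s e) (csz G s e) := by
  have hbdd : BddAbove (eSet G s e) := ⟨s.card, fun r hr => eSet_bdd G s e r hr⟩
  constructor
  · exact Nat.sSup_mem ⟨2, two_mem_eSet G he hes⟩ hbdd
  · exact fun r hr => le_csSup hbdd hr

lemma two_le_csz {s : Finset V} {e : Sym2 V} (he : e ∈ G.edgeFinset)
    (hes : ∀ v ∈ e, v ∈ s) : 2 ≤ csz G s e :=
  (csz_isGreatest G he hes).2 (two_mem_eSet G he hes)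

lemma csz_mono {s s' : Finset V} (hss : s ⊆ s') {e : Sym2 V} (he : e ∈ G.edgeFinset)
    (hes : ∀ v ∈ e, v ∈ s) : csz G s e ≤ csz G s' e :=
  (csz_isGreatest G he fun v hv => hss (hes v hv)).2 <| by
    obtain ⟨t, hts, ht⟩ := (csz_isGreatest G he hes).1
    exact ⟨t, fun x hx => hss (hts hx), ht⟩

lemma key : ∀ (n : ℕ) (s : Finset V), s.card ≤ n →
    ∑ e ∈ G.edgeFinset.filter (fun e => ∀ v ∈ e, v ∈ s),
      (csz G s e : ℝ) / ((csz G s e : ℝ) - 1) ≤ (s.card : ℝ) ^ 2 / 2 := by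
  intro n
  induction n with
  | zero =>
    intro s hs
    rw [Nat.le_zero, Finset.card_eq_zero] at hs
    subst hs
    have : G.edgeFinset.filter (fun e => ∀ v ∈ e, v ∈ (∅ : Finset V)) = ∅ := by
      rw [Finset.filter_eq_empty_iff]
      intro e he
      revert he
      refine Sym2.inductionOn e ?_
      intro a b he h
      exact absurd (h a (by simp)) (Finset.notMem_empty a)
    rw [this, Finset.sum_empty]
    positivity
  | succ n ih =>
    intro s hs
    by_cases hne : (G.edgeFinset.filter (fun e => ∀ v ∈ e, v ∈ s)).Nonempty
    swap
    · rw [Finset.not_nonempty_iff_eq_empty] at hne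
      rw [hne, Finset.sum_empty]
      positivity
    obtain ⟨e₀, he₀⟩ := hne
    rw [mem_filter] at he₀
    -- the clique number within s
    set Q : Set ℕ := {r | ∃ t : Finset V, t ⊆ s ∧ G.IsNClique r t} with hQdef
    have hQbdd : BddAbove Q := by
      refine ⟨s.card, ?_⟩
      rintro r ⟨t, hts, ht⟩
      rw [← ht.2]; exact Finset.card_le_card hts
    have hQ2 : 2 ∈ Q := by
      obtain ⟨t, hts, ht, -⟩ := two_mem_eSet G he₀.1 he₀.2
      exact ⟨t, hts, ht⟩
    set w : ℕ := sSup Q with hwdef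
    have hw2 : 2 ≤ w := le_csSup hQbdd hQ2
    have hmax : ∀ r ∈ Q, r ≤ w := fun r hr => le_csSup hQbdd hr
    obtain ⟨K, hKs, hK⟩ : w ∈ Q := Nat.sSup_mem ⟨2, hQ2⟩ hQbdd
    have hKcard : K.card = w := hK.2
    have hwcard : w ≤ s.card := hKcard ▸ Finset.card_le_card hKs
    -- split the sum
    rw [← Finset.sum_filter_add_sum_filter_not
      (G.edgeFinset.filter (fun e => ∀ v ∈ e, v ∈ s)) (fun e => ∀ v ∈ e, v ∉ K),
      ← Finset.sum_filter_add_sum_filter_not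
      (((G.edgeFinset.filter (fun e => ∀ v ∈ e, v ∈ s))).filter (fun e => ¬ ∀ v ∈ e, v ∉ K))
      (fun e => ∀ v ∈ e, v ∈ K)]
    -- Part 3 : edges inside s \ K
    have hs'card : (s \ K).card = s.card - w := by rw [card_sdiff_of_subset hKs, hKcard]
    have hs'n : (s \ K).card ≤ n := by omega
    have hfilter3 : (G.edgeFinset.filter (fun e => ∀ v ∈ e, v ∈ s)).filter
        (fun e => ∀ v ∈ e, v ∉ K) = G.edgeFinset.filter (fun e => ∀ v ∈ e, v ∈ s \ K) := by
      rw [Finset.filter_filter]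
      refine Finset.filter_congr fun e he => ?_
      constructor
      · rintro ⟨h1, h2⟩ v hv
        exact Finset.mem_sdiff.2 ⟨h1 v hv, h2 v hv⟩
      · exact fun h => ⟨fun v hv => (Finset.mem_sdiff.1 (h v hv)).1,
          fun v hv => (Finset.mem_sdiff.1 (h v hv)).2⟩
    have hb3 : ∑ e ∈ (G.edgeFinset.filter (fun e => ∀ v ∈ e, v ∈ s)).filter
        (fun e => ∀ v ∈ e, v ∉ K), (csz G s e : ℝ) / ((csz G s e : ℝ) - 1)
        ≤ (((s \ K).card : ℕ) : ℝ) ^ 2 / 2 := by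
      rw [hfilter3]
      refine le_trans (Finset.sum_le_sum fun e he => ?_) (ih (s \ K) hs'n)
      rw [mem_filter] at he
      exact ratio_antitone (two_le_csz G he.1 he.2)
        (csz_mono G sdiff_subset he.1 he.2)
    -- Part 1 : edges inside K
    have hb1 : ∑ e ∈ ((G.edgeFinset.filter (fun e => ∀ v ∈ e, v ∈ s)).filter
        (fun e => ¬ ∀ v ∈ e, v ∉ K)).filter (fun e => ∀ v ∈ e, v ∈ K),
        (csz G s e : ℝ) / ((csz G s e : ℝ) - 1) ≤ (w : ℝ) ^ 2 / 2 := by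
      set A1 := ((G.edgeFinset.filter (fun e => ∀ v ∈ e, v ∈ s)).filter
        (fun e => ¬ ∀ v ∈ e, v ∉ K)).filter (fun e => ∀ v ∈ e, v ∈ K) with hA1
      have hterm : ∀ e ∈ A1, (csz G s e : ℝ) / ((csz G s e : ℝ) - 1)
          ≤ (w : ℝ) / ((w : ℝ) - 1) := by
        intro e he
        rw [hA1, mem_filter, mem_filter, mem_filter] at he
        exact ratio_antitone hw2
          ((csz_isGreatest G he.1.1.1 he.1.1.2).2 ⟨K, hKs, hK, he.2⟩)
      have hcard : A1.card ≤ w.choose 2 := by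
        have h := Finset.card_le_card_of_injOn (s := A1) (t := K.powersetCard 2) pairFinset ?_ ?_
        · rwa [Finset.card_powersetCard, hKcard] at h
        · intro e he
          rw [Finset.mem_coe, hA1, mem_filter, mem_filter, mem_filter] at he
          obtain ⟨⟨⟨heE, -⟩, -⟩, heK⟩ := he
          revert heE heK
          refine Sym2.inductionOn e ?_
          intro a b heK heE
          have hadj : G.Adj a b := by
            rwa [SimpleGraph.mem_edgeFinset, SimpleGraph.mem_edgeSet] at heE
          rw [pairFinset_mk, Finset.mem_coe, Finset.mem_powersetCard]
          constructor
          · intro x hx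
            simp only [mem_insert, mem_singleton] at hx
            rcases hx with rfl | rfl
            · exact heK _ (by simp)
            · exact heK _ (by simp)
          · exact card_pair hadj.ne
        · intro e₁ he₁ e₂ he₂ h
          revert he₁ he₂ h
          refine Sym2.inductionOn₂ e₁ e₂ ?_
          intro a b c d _ _ h
          rw [pairFinset_mk, pairFinset_mk] at h
          exact pair_eq_sym2 h
      calc ∑ e ∈ A1, (csz G s e : ℝ) / ((csz G s e : ℝ) - 1)
          ≤ A1.card • ((w : ℝ) / ((w : ℝ) - 1)) := Finset.sum_le_card_nsmul _ _ _ hterm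
        _ = (A1.card : ℝ) * ((w : ℝ) / ((w : ℝ) - 1)) := nsmul_eq_mul _ _
        _ ≤ (w.choose 2 : ℝ) * ((w : ℝ) / ((w : ℝ) - 1)) := by
            apply mul_le_mul_of_nonneg_right (by exact_mod_cast hcard)
            have : (2 : ℝ) ≤ (w : ℝ) := by exact_mod_cast hw2
            apply div_nonneg <;> linarith
        _ = (w : ℝ) ^ 2 / 2 := by
            have hw2' : (2 : ℝ) ≤ (w : ℝ) := by exact_mod_cast hw2
            have hne : (w : ℝ) - 1 ≠ 0 := by linarith
            rw [Nat.cast_choose_two]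
            field_simp
    -- Part 2 : edges crossing between s \ K and K
    have hb2 : ∑ e ∈ ((G.edgeFinset.filter (fun e => ∀ v ∈ e, v ∈ s)).filter
        (fun e => ¬ ∀ v ∈ e, v ∉ K)).filter (fun e => ¬ ∀ v ∈ e, v ∈ K),
        (csz G s e : ℝ) / ((csz G s e : ℝ) - 1) ≤ ((s \ K).card : ℝ) * (w : ℝ) := by
      set A2 := ((G.edgeFinset.filter (fun e => ∀ v ∈ e, v ∈ s)).filter
        (fun e => ¬ ∀ v ∈ e, v ∉ K)).filter (fun e => ¬ ∀ v ∈ e, v ∈ K) with hA2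
      set P := ((s \ K) ×ˢ K).filter (fun p => G.Adj p.1 p.2) with hP
      have hsub : A2 ⊆ P.image (fun p => s(p.1, p.2)) := by
        intro e he
        rw [hA2, mem_filter, mem_filter, mem_filter] at he
        obtain ⟨⟨⟨heE, hesS⟩, h1⟩, h2⟩ := he
        revert heE hesS h1 h2
        refine Sym2.inductionOn e ?_
        intro a b h2 h1 heE hesS
        have hadj : G.Adj a b := by
          rwa [SimpleGraph.mem_edgeFinset, SimpleGraph.mem_edgeSet] at heE
        rw [Finset.mem_image]
        have haS : a ∈ s := hesS _ (by simp)
        have hbS : b ∈ s := hesS _ (by simp)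
        by_cases haK : a ∈ K <;> by_cases hbK : b ∈ K
        · exact absurd (fun v hv => by
            rw [Sym2.mem_iff] at hv
            rcases hv with rfl | rfl
            exacts [haK, hbK]) h2
        · refine ⟨(b, a), ?_, Sym2.eq_swap⟩
          rw [hP, mem_filter, Finset.mem_product]
          exact ⟨⟨Finset.mem_sdiff.2 ⟨hbS, hbK⟩, haK⟩, hadj.symm⟩
        · refine ⟨(a, b), ?_, rfl⟩
          rw [hP, mem_filter, Finset.mem_product]
          exact ⟨⟨Finset.mem_sdiff.2 ⟨haS, haK⟩, hbK⟩, hadj⟩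
        · exact absurd (fun v hv => by
            rw [Sym2.mem_iff] at hv
            rcases hv with rfl | rfl
            exacts [haK, hbK]) h1
      have h1 : ∑ e ∈ A2, (csz G s e : ℝ) / ((csz G s e : ℝ) - 1)
          ≤ ∑ e ∈ P.image (fun p => s(p.1, p.2)), (csz G s e : ℝ) / ((csz G s e : ℝ) - 1) :=
        Finset.sum_le_sum_of_subset_of_nonneg hsub fun e _ _ => ratio_cast_nonneg _
      have h2 : ∑ e ∈ P.image (fun p => s(p.1, p.2)), (csz G s e : ℝ) / ((csz G s e : ℝ) - 1)
          ≤ ∑ p ∈ P, (csz G s s(p.1, p.2) : ℝ) / ((csz G s s(p.1, p.2) : ℝ) - 1) :=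
        sum_image_le' _ _ _ fun e => ratio_cast_nonneg _
      have h3 : ∑ p ∈ P, (csz G s s(p.1, p.2) : ℝ) / ((csz G s s(p.1, p.2) : ℝ) - 1)
          = ∑ u ∈ s \ K, ∑ v ∈ K.filter (G.Adj u),
            (csz G s s(u, v) : ℝ) / ((csz G s s(u, v) : ℝ) - 1) := by
        rw [hP, Finset.sum_filter, Finset.sum_product]
        exact Finset.sum_congr rfl fun u _ => (Finset.sum_filter _ _).symm
      have h4 : ∀ u ∈ s \ K, ∑ v ∈ K.filter (G.Adj u),
          (csz G s s(u, v) : ℝ) / ((csz G s s(u, v) : ℝ) - 1) ≤ (w : ℝ) := by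
        intro u hu
        rw [Finset.mem_sdiff] at hu
        set F := K.filter (G.Adj u) with hF
        rcases Nat.eq_zero_or_pos F.card with h0 | hpos
        · rw [Finset.card_eq_zero] at h0
          rw [h0, Finset.sum_empty]
          positivity
        have huF : u ∉ F := fun h => hu.2 (Finset.mem_filter.1 h).1
        have hclique : G.IsNClique (F.card + 1) (insert u F) := by
          constructor
          · rw [coe_insert]
            refine SimpleGraph.IsClique.insert
              (hK.1.subset (Finset.coe_subset.2 (Finset.filter_subset _ _))) ?_
            intro b hb _
            exact (Finset.mem_filter.1 hb).2
          · rw [Finset.card_insert_of_notMem huF]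
        have hTs : insert u F ⊆ s := by
          intro x hx
          rcases Finset.mem_insert.1 hx with rfl | hx
          · exact hu.1
          · exact hKs (Finset.mem_filter.1 hx).1
        have hkw : F.card + 1 ≤ w := hmax _ ⟨insert u F, hTs, hclique⟩
        have hterm : ∀ v ∈ F, (csz G s s(u, v) : ℝ) / ((csz G s s(u, v) : ℝ) - 1)
            ≤ ((F.card + 1 : ℕ) : ℝ) / (((F.card + 1 : ℕ) : ℝ) - 1) := by
          intro v hv
          have hvK := (Finset.mem_filter.1 hv).1
          have hadj := (Finset.mem_filter.1 hv).2
          have heE : s(u, v) ∈ G.edgeFinset := by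
            rwa [SimpleGraph.mem_edgeFinset, SimpleGraph.mem_edgeSet]
          have hesS : ∀ x ∈ s(u, v), x ∈ s := by
            intro x hx
            rw [Sym2.mem_iff] at hx
            rcases hx with rfl | rfl
            · exact hu.1
            · exact hKs hvK
          have hle : F.card + 1 ≤ csz G s s(u, v) := by
            refine (csz_isGreatest G heE hesS).2 ⟨insert u F, hTs, hclique, ?_⟩
            intro x hx
            rw [Sym2.mem_iff] at hx
            rcases hx with rfl | rfl
            · exact Finset.mem_insert_self _ _
            · exact Finset.mem_insert_of_mem hv
          exact ratio_antitone (by omega) hle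
        have hc1 : (1 : ℝ) ≤ (F.card : ℝ) := by exact_mod_cast hpos
        calc ∑ v ∈ F, (csz G s s(u, v) : ℝ) / ((csz G s s(u, v) : ℝ) - 1)
            ≤ F.card • (((F.card + 1 : ℕ) : ℝ) / (((F.card + 1 : ℕ) : ℝ) - 1)) :=
              Finset.sum_le_card_nsmul _ _ _ hterm
          _ = (F.card : ℝ) * (((F.card + 1 : ℕ) : ℝ) / (((F.card + 1 : ℕ) : ℝ) - 1)) :=
              nsmul_eq_mul _ _
          _ = (F.card : ℝ) + 1 := by
              push_cast
              field_simp
              rw [add_sub_cancel_right, div_self (by linarith)]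
          _ ≤ (w : ℝ) := by exact_mod_cast hkw
      calc ∑ e ∈ A2, (csz G s e : ℝ) / ((csz G s e : ℝ) - 1)
          ≤ ∑ u ∈ s \ K, ∑ v ∈ K.filter (G.Adj u),
            (csz G s s(u, v) : ℝ) / ((csz G s s(u, v) : ℝ) - 1) := by
            rw [← h3]; exact h1.trans h2
        _ ≤ ∑ _u ∈ s \ K, (w : ℝ) := Finset.sum_le_sum h4
        _ = ((s \ K).card : ℝ) * (w : ℝ) := by rw [Finset.sum_const, nsmul_eq_mul]
    -- assemble
    have hcast : ((s \ K).card : ℝ) = (s.card : ℝ) - (w : ℝ) := by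
      rw [hs'card, Nat.cast_sub hwcard]
    rw [hcast] at hb3 hb2
    have hkey : ((s.card : ℝ) - (w : ℝ)) ^ 2 / 2 + (w : ℝ) ^ 2 / 2
        + ((s.card : ℝ) - (w : ℝ)) * (w : ℝ) = (s.card : ℝ) ^ 2 / 2 := by ring
    linarith
end CS

/-- **Localized Turán theorem.** For any simple graph `G` on `n` vertices, where `c e` is the
largest `r` such that edge `e` lies in a copy of `K_r`, we have
`∑_{e ∈ E(G)} c(e)/(c(e)-1) ≤ n²/2`. -/
theorem localized_turan {V : Type*} [Fintype V] [DecidableEq V]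
    (G : SimpleGraph V) [DecidableRel G.Adj]
    (c : Sym2 V → ℕ)
    (hc : ∀ e ∈ G.edgeFinset,
      IsGreatest {r : ℕ | ∃ t : Finset V, G.IsNClique r t ∧ ∀ v ∈ e, v ∈ t} (c e)) :
    ∑ e ∈ G.edgeFinset, (c e : ℝ) / ((c e : ℝ) - 1) ≤ (Fintype.card V : ℝ) ^ 2 / 2 := by
  have h1 : G.edgeFinset.filter (fun e => ∀ v ∈ e, v ∈ (univ : Finset V)) = G.edgeFinset :=
    Finset.filter_true_of_mem fun e _ v _ => Finset.mem_univ v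
  have hkey := key G (Fintype.card V) univ (by simp)
  rw [h1, Finset.card_univ] at hkey
  refine le_trans (le_of_eq (Finset.sum_congr rfl fun e he => ?_)) hkey
  have hset : eSet G univ e = {r : ℕ | ∃ t : Finset V, G.IsNClique r t ∧ ∀ v ∈ e, v ∈ t} := by
    ext r
    constructor
    · rintro ⟨t, -, ht⟩; exact ⟨t, ht⟩
    · rintro ⟨t, ht⟩; exact ⟨t, Finset.subset_univ t, ht⟩
  have hce : c e = csz G univ e :=
    (hc e he).unique (hset ▸ csz_isGreatest G he fun v _ => Finset.mem_univ v)
  rw [hce]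
end

section
/- Let 𝒜 be a family of subsets of {1,…,n}. For each A ∈ 𝒜, let c(A) denote the largest integer k such that A belongs to a chain A₁ ⊊ A₂ ⊊ … ⊊ A_k of k sets all lying in 𝒜. Then the sum over all A ∈ 𝒜 of 1/(C(n, |A|) · c(A)) is at most 1. -/
open Finset
variable {n : ℕ}

def pref (σ : Equiv.Perm (Fin n)) (A : Finset (Fin n)) : Prop :=
  ∀ x, σ x ∈ A ↔ (x : ℕ) < A.card

instance {σ : Equiv.Perm (Fin n)} {A : Finset (Fin n)} : Decidable (pref σ A) := by
  unfold pref; infer_instance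

def Sp (σ : Equiv.Perm (Fin n)) (i : ℕ) : Finset (Fin n) :=
  Finset.univ.filter (fun a => ((σ.symm a : Fin n) : ℕ) < i)

private lemma card_filter_lt (i : ℕ) (h : i ≤ n) :
    (Finset.univ.filter (fun x : Fin n => (x : ℕ) < i)).card = i := by
  apply Finset.card_eq_of_bijective (fun j hj => ⟨j, lt_of_lt_of_le hj h⟩)
  · intro a ha
    simp only [mem_filter, mem_univ, true_and] at ha
    exact ⟨a, ha, Fin.ext rfl⟩
  · intro j hj; simp [hj]
  · intro j k hj hk hjk; simpa using congrArg Fin.val hjk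

private lemma card_Sp (σ : Equiv.Perm (Fin n)) (i : ℕ) (h : i ≤ n) :
    (Sp σ i).card = i := by
  have : (Sp σ i).card = (Finset.univ.filter (fun x : Fin n => (x : ℕ) < i)).card := by
    apply Finset.card_bij (fun a _ => σ.symm a)
    · intro a ha; simp only [Sp, mem_filter, mem_univ, true_and] at ha ⊢; exact ha
    · intro a _ b _ hab; exact σ.symm.injective hab
    · intro b hb
      simp only [Sp, mem_filter, mem_univ, true_and] at hb ⊢
      exact ⟨σ b, by simpa using hb, by simp⟩
  rw [this, card_filter_lt i h]

private lemma Sp_ssubset (σ : Equiv.Perm (Fin n)) {i j : ℕ} (hij : i < j) (hj : j ≤ n) :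
    Sp σ i ⊂ Sp σ j := by
  refine Finset.ssubset_iff_subset_ne.mpr ⟨?_, ?_⟩
  · intro a ha
    simp only [Sp, mem_filter, mem_univ, true_and] at ha ⊢
    omega
  · intro hEq
    have h1 := card_Sp σ i (le_of_lt (lt_of_lt_of_le hij hj))
    have h2 := card_Sp σ j hj
    rw [hEq, h2] at h1
    omega

private lemma pref_eq_Sp {σ : Equiv.Perm (Fin n)} {A : Finset (Fin n)}
    (h : pref σ A) : A = Sp σ A.card := by
  ext a
  simp only [Sp, mem_filter, mem_univ, true_and]
  have := h (σ.symm a)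
  simpa using this

private lemma count_pref (A : Finset (Fin n)) :
    (Finset.univ.filter (fun σ : Equiv.Perm (Fin n) => pref σ A)).card
      = A.card.factorial * (n - A.card).factorial := by
  classical
  set k := A.card with hkdef
  have hk : k ≤ n := by simpa using A.card_le_univ
  let p : Fin n → Prop := fun x => (x : ℕ) < k
  have hcard1 : Fintype.card {x : Fin n // p x} = k := by
    rw [Fintype.card_subtype]; exact card_filter_lt k hk
  have hcard2 : Fintype.card {a : Fin n // a ∈ A} = k := by
    simp [Fintype.card_coe, hkdef]
  have hcard3 : Fintype.card {x : Fin n // ¬ p x} = n - k := by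
    rw [Fintype.card_subtype_compl, hcard1, Fintype.card_fin]
  have hcard4 : Fintype.card {a : Fin n // a ∉ A} = n - k := by
    rw [Fintype.card_subtype_compl, hcard2, Fintype.card_fin]
  have happly : ∀ (e : {x : Fin n // p x} ≃ {a : Fin n // a ∈ A})
      (f : {x : Fin n // ¬ p x} ≃ {a : Fin n // a ∉ A}) (x : Fin n),
      Equiv.subtypeCongr e f x = if h : p x then (e ⟨x, h⟩ : Fin n) else (f ⟨x, h⟩ : Fin n) := by
    intro e f x
    by_cases h : p x
    · simp [Equiv.subtypeCongr, Equiv.sumCompl_symm_apply_of_pos h, h]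
    · simp [Equiv.subtypeCongr, Equiv.sumCompl_symm_apply_of_neg h, h]
  let E : {σ : Equiv.Perm (Fin n) // pref σ A} ≃
      (({x : Fin n // p x} ≃ {a : Fin n // a ∈ A}) ×
       ({x : Fin n // ¬ p x} ≃ {a : Fin n // a ∉ A})) :=
  { toFun := fun σ =>
      (σ.1.subtypeEquiv (fun x => (σ.2 x).symm),
       σ.1.subtypeEquiv (fun x => not_congr (σ.2 x).symm)),
    invFun := fun ef =>
      ⟨Equiv.subtypeCongr ef.1 ef.2, by
        intro x
        rw [happly]
        by_cases hx : p x
        · simp only [hx, dif_pos]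
          exact ⟨fun _ => hx, fun _ => (ef.1 ⟨x, hx⟩).2⟩
        · simp only [hx, dif_neg, not_false_iff]
          exact ⟨fun h => absurd h (ef.2 ⟨x, hx⟩).2, fun h => absurd h hx⟩⟩,
    left_inv := by
      intro σ
      apply Subtype.ext
      apply Equiv.ext
      intro x
      rw [happly]
      by_cases hx : p x <;> simp [hx],
    right_inv := by
      intro ef
      apply Prod.ext
      · apply Equiv.ext; rintro ⟨x, hx⟩
        apply Subtype.ext
        simp only [Equiv.subtypeEquiv_apply]
        rw [happly]
        simp [hx]
      · apply Equiv.ext; rintro ⟨x, hx⟩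
        apply Subtype.ext
        simp only [Equiv.subtypeEquiv_apply]
        rw [happly]
        simp [hx] }
  rw [← Fintype.card_subtype, Fintype.card_congr E, Fintype.card_prod,
      Fintype.card_equiv (Fintype.equivOfCardEq (hcard1.trans hcard2.symm)),
      Fintype.card_equiv (Fintype.equivOfCardEq (hcard3.trans hcard4.symm)),
      hcard1, hcard3]


private lemma chain_card_le (𝒜 : Finset (Finset (Fin n))) (c : Finset (Fin n) → ℕ)
    (hc : ∀ A ∈ 𝒜, ∀ k : ℕ, (∃ f : Fin k → Finset (Fin n),
        StrictMono f ∧ (∀ i, f i ∈ 𝒜) ∧ ∃ i, f i = A) → k ≤ c A)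
    (σ : Equiv.Perm (Fin n)) {A : Finset (Fin n)}
    (hA : A ∈ 𝒜.filter (fun B => pref σ B)) :
    (𝒜.filter (fun B => pref σ B)).card ≤ c A := by
  classical
  set T := 𝒜.filter (fun B => pref σ B) with hT
  have hTA : ∀ B ∈ T, B = Sp σ B.card := fun B hB => pref_eq_Sp (mem_filter.mp hB).2
  have hT𝒜 : ∀ B ∈ T, B ∈ 𝒜 := fun B hB => (mem_filter.mp hB).1
  set K := T.image Finset.card with hKdef
  have hK : K.card = T.card := by
    apply Finset.card_image_of_injOn
    intro B hB C hC h
    rw [hTA B hB, hTA C hC, h]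
  have hKn : ∀ m ∈ K, m ≤ n ∧ Sp σ m ∈ 𝒜 := by
    intro m hm
    obtain ⟨B, hB, rfl⟩ := Finset.mem_image.mp hm
    refine ⟨by simpa using B.card_le_univ, ?_⟩
    rw [← hTA B hB]; exact hT𝒜 B hB
  let e := K.orderIsoOfFin hK
  refine hc A (hT𝒜 A hA) T.card ⟨fun i => Sp σ (e i : ℕ), ?_, ?_, ?_⟩
  · intro i j hij
    have h1 : (e i : ℕ) < (e j : ℕ) := by
      exact_mod_cast e.strictMono hij
    exact Sp_ssubset σ h1 (hKn _ (e j).2).1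
  · intro i
    exact (hKn _ (e i).2).2
  · have hcardK : A.card ∈ K := Finset.mem_image_of_mem Finset.card hA
    obtain ⟨i, hi⟩ := e.surjective ⟨A.card, hcardK⟩
    refine ⟨i, ?_⟩
    show Sp σ (e i : ℕ) = A
    have hval : ((e i : {x // x ∈ K}) : ℕ) = A.card := by rw [hi]
    rw [hval]
    exact (hTA A hA).symm

private lemma sum_inv_le_one (T : Finset (Finset (Fin n))) (c : Finset (Fin n) → ℕ)
    (h : ∀ A ∈ T, T.card ≤ c A) : ∑ A ∈ T, (1 : ℝ) / (c A) ≤ 1 := by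
  rcases T.eq_empty_or_nonempty with rfl | hne
  · simp
  · have ht : 0 < T.card := Finset.card_pos.mpr hne
    calc ∑ A ∈ T, (1 : ℝ) / (c A) ≤ ∑ _A ∈ T, (1 : ℝ) / (T.card : ℝ) := by
          refine Finset.sum_le_sum fun A hA => ?_
          apply one_div_le_one_div_of_le
          · exact_mod_cast ht
          · exact_mod_cast h A hA
      _ = 1 := by
          rw [Finset.sum_const, nsmul_eq_mul]
          field_simp

/-- **Localized LYM inequality.** For any family `𝒜` of subsets of `[n]`, where `c A` is the
largest `k` such that `A` lies in a chain of `k` sets from `𝒜`, we have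
`∑_{A ∈ 𝒜} 1/(C(n,|A|)·c(A)) ≤ 1`. -/
theorem localized_LYM {n : ℕ} (𝒜 : Finset (Finset (Fin n)))
    (c : Finset (Fin n) → ℕ)
    (hc : ∀ A ∈ 𝒜, IsGreatest {k : ℕ | ∃ f : Fin k → Finset (Fin n),
        StrictMono f ∧ (∀ i, f i ∈ 𝒜) ∧ ∃ i, f i = A} (c A)) :
    ∑ A ∈ 𝒜, (1 : ℝ) / ((n.choose A.card : ℝ) * (c A : ℝ)) ≤ 1 := by
  classical
  have hcub : ∀ A ∈ 𝒜, ∀ k : ℕ, (∃ f : Fin k → Finset (Fin n),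
      StrictMono f ∧ (∀ i, f i ∈ 𝒜) ∧ ∃ i, f i = A) → k ≤ c A :=
    fun A hA k hk => (hc A hA).2 hk
  have hc1 : ∀ A ∈ 𝒜, 1 ≤ c A := by
    intro A hA
    refine hcub A hA 1 ⟨fun _ => A, ?_, fun _ => hA, ⟨0, rfl⟩⟩
    intro i j hij
    exact absurd hij (by omega)
  have hfacpos : (0 : ℝ) < (n.factorial : ℝ) := by exact_mod_cast n.factorial_pos
  have key : ∀ A ∈ 𝒜, (1 : ℝ) / ((n.choose A.card : ℝ) * (c A : ℝ))
      = ((Finset.univ.filter (fun σ : Equiv.Perm (Fin n) => pref σ A)).card : ℝ)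
        * ((1 : ℝ) / ((n.factorial : ℝ) * (c A : ℝ))) := by
    intro A hA
    have hk : A.card ≤ n := by simpa using A.card_le_univ
    have hnat : n.choose A.card * (A.card.factorial * (n - A.card).factorial) = n.factorial := by
      rw [← Nat.choose_mul_factorial_mul_factorial hk]; ring
    have hcApos : (0 : ℝ) < (c A : ℝ) := by exact_mod_cast hc1 A hA
    have hchoosepos : (0 : ℝ) < (n.choose A.card : ℝ) := by
      exact_mod_cast Nat.choose_pos hk
    rw [count_pref A, eq_comm, mul_one_div, div_eq_div_iff (by positivity) (by positivity)]
    push_cast [← hnat]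
    ring
  calc ∑ A ∈ 𝒜, (1 : ℝ) / ((n.choose A.card : ℝ) * (c A : ℝ))
      = ∑ A ∈ 𝒜, ∑ σ : Equiv.Perm (Fin n),
          (if pref σ A then (1 : ℝ) / ((n.factorial : ℝ) * (c A : ℝ)) else 0) := by
        refine Finset.sum_congr rfl fun A hA => ?_
        rw [key A hA, ← Finset.sum_filter, Finset.sum_const, nsmul_eq_mul]
    _ = ∑ σ : Equiv.Perm (Fin n), ∑ A ∈ 𝒜,
          (if pref σ A then (1 : ℝ) / ((n.factorial : ℝ) * (c A : ℝ)) else 0) :=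
        Finset.sum_comm
    _ ≤ ∑ _σ : Equiv.Perm (Fin n), (1 : ℝ) / (n.factorial : ℝ) := by
        refine Finset.sum_le_sum fun σ _ => ?_
        rw [← Finset.sum_filter]
        have : ∑ A ∈ 𝒜.filter (fun B => pref σ B),
            (1 : ℝ) / ((n.factorial : ℝ) * (c A : ℝ))
            = (1 / (n.factorial : ℝ)) * ∑ A ∈ 𝒜.filter (fun B => pref σ B),
              (1 : ℝ) / (c A : ℝ) := by
          rw [Finset.mul_sum]
          refine Finset.sum_congr rfl fun A _ => ?_
          rw [div_mul_div_comm, one_mul]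
        rw [this]
        have hsum := sum_inv_le_one (𝒜.filter (fun B => pref σ B)) c
          (fun A hA => chain_card_le 𝒜 c hcub σ hA)
        calc (1 / (n.factorial : ℝ)) * ∑ A ∈ 𝒜.filter (fun B => pref σ B),
              (1 : ℝ) / (c A : ℝ) ≤ (1 / (n.factorial : ℝ)) * 1 := by
              apply mul_le_mul_of_nonneg_left hsum (by positivity)
          _ = 1 / (n.factorial : ℝ) := mul_one _
    _ = 1 := by
        rw [Finset.sum_const, nsmul_eq_mul, Finset.card_univ]
        rw [Fintype.card_perm, Fintype.card_fin]
        field_simp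
end

section
/- Let 𝒜 be a family of subsets of {1,…,n} and for A ∈ 𝒜 let c(A) be the largest k such that A lies in a chain of k sets from 𝒜. Then the sum over all A ∈ 𝒜 of 1/(C(n, |A|) · c(A)) equals 1 if and only if 𝒜 is a union of complete levels, i.e., there is a set S of sizes such that 𝒜 consists exactly of all subsets of [n] whose cardinality lies in S. -/
open Finset

variable {n : ℕ}

lemma card_filter_val_lt {k : ℕ} (hk : k ≤ n) :
    #(Finset.univ.filter fun i : Fin n => (i : ℕ) < k) = k := by
  have : #(Finset.univ.filter fun i : Fin n => (i : ℕ) < k) = #(Finset.range k) := by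
    apply Finset.card_bij (fun (a : Fin n) _ => (a : ℕ))
    · intro a ha; simp at ha ⊢; exact ha
    · intro a ha b hb h; exact Fin.val_injective h
    · intro b hb
      simp at hb
      exact ⟨⟨b, lt_of_lt_of_le hb hk⟩, by simp [hb], rfl⟩
  simpa using this

def Iseg (σ : Equiv.Perm (Fin n)) (k : ℕ) : Finset (Fin n) :=
  Finset.univ.filter fun x => (σ.symm x : ℕ) < k

lemma mem_Iseg {σ : Equiv.Perm (Fin n)} {k : ℕ} {x : Fin n} :
    x ∈ Iseg σ k ↔ (σ.symm x : ℕ) < k := by simp [Iseg]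

lemma Iseg_eq_map (σ : Equiv.Perm (Fin n)) (k : ℕ) :
    Iseg σ k = (Finset.univ.filter fun i : Fin n => (i : ℕ) < k).map σ.toEmbedding := by
  ext x
  simp [Iseg, Equiv.toEmbedding]

lemma card_Iseg (σ : Equiv.Perm (Fin n)) {k : ℕ} (hk : k ≤ n) : (Iseg σ k).card = k := by
  rw [Iseg_eq_map, Finset.card_map, card_filter_val_lt hk]

lemma Iseg_mono {σ : Equiv.Perm (Fin n)} {k l : ℕ} (h : k ≤ l) : Iseg σ k ⊆ Iseg σ l := by
  intro x hx; rw [mem_Iseg] at *; omega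

lemma Iseg_ssubset {σ : Equiv.Perm (Fin n)} {k l : ℕ} (h : k < l) (hl : l ≤ n) :
    Iseg σ k ⊂ Iseg σ l := by
  refine Finset.ssubset_iff_subset_ne.2 ⟨Iseg_mono h.le, ?_⟩
  intro he
  have h1 := card_Iseg σ (le_trans h.le hl)
  have h2 := card_Iseg σ hl
  rw [he, h2] at h1
  omega

noncomputable def permOfList (L : List (Fin n)) (nd : L.Nodup) (hm : ∀ x, x ∈ L)
    (hl : L.length = n) : Equiv.Perm (Fin n) :=
  (finCongr hl.symm).trans (nd.getEquivOfForallMemList L hm)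

lemma Iseg_permOfList (L : List (Fin n)) (nd : L.Nodup) (hm : ∀ x, x ∈ L)
    (hl : L.length = n) (j : ℕ) :
    Iseg (permOfList L nd hm hl) j = (L.take j).toFinset := by
  ext x
  rw [mem_Iseg]
  have hsymm : ((permOfList L nd hm hl).symm x : ℕ) = L.idxOf x := by
    simp [permOfList, List.Nodup.getEquivOfForallMemList]
  rw [hsymm]
  simp only [List.mem_toFinset]
  constructor
  · intro h
    have hidx : L.idxOf x < L.length := List.idxOf_lt_length_iff.2 (hm x)
    have hlt : L.idxOf x < (L.take j).length := by simp [hidx, h]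
    have : (L.take j)[L.idxOf x] = x := by
      rw [List.getElem_take]; exact List.getElem_idxOf hidx
    exact this ▸ List.getElem_mem hlt
  · intro h
    obtain ⟨i, hi, hx⟩ := List.mem_iff_getElem.1 h
    have hi' : i < L.length := lt_of_lt_of_le hi (by simp)
    have hLi : L[i] = x := by
      rw [← hx, List.getElem_take]
    have : L.idxOf x = i := by
      rw [← hLi]; exact nd.idxOf_getElem i hi'
    rw [this]
    simp at hi; omega

lemma exists_perm_Iseg3 {D A E : Finset (Fin n)} (hDA : D ⊆ A) (hAE : A ⊆ E) :
    ∃ σ : Equiv.Perm (Fin n), Iseg σ D.card = D ∧ Iseg σ A.card = A ∧ Iseg σ E.card = E := by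
  classical
  set r : Fin n → Fin n → Prop := (· ≤ ·) with hr
  let L : List (Fin n) := D.sort (· ≤ ·) ++ ((A \ D).sort (· ≤ ·) ++
      ((E \ A).sort (· ≤ ·) ++ ((Finset.univ \ E).sort (· ≤ ·))))
  have htf : L.toFinset = Finset.univ := by
    simp only [L, List.toFinset_append, Finset.sort_toFinset]
    ext x
    simp only [Finset.mem_union, Finset.mem_sdiff, Finset.mem_univ, iff_true]
    by_cases h1 : x ∈ D
    · tauto
    · by_cases h2 : x ∈ A
      · tauto
      · by_cases h3 : x ∈ E <;> tauto
  have hlen : L.length = n := by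
    have h1 : (A \ D).card = A.card - D.card := Finset.card_sdiff_of_subset hDA
    have h2 : (E \ A).card = E.card - A.card := Finset.card_sdiff_of_subset hAE
    have h3 : (Finset.univ \ E).card = n - E.card := by
      rw [Finset.card_sdiff_of_subset (Finset.subset_univ E)]; simp
    have hcDA := Finset.card_le_card hDA
    have hcAE := Finset.card_le_card hAE
    have hcE : E.card ≤ n := by simpa using Finset.card_le_card (Finset.subset_univ E)
    simp only [L, List.length_append, Finset.length_sort, h1, h2, h3]
    omega
  have nd : L.Nodup := by
    have : L.toFinset.card = L.length := by rw [htf, hlen]; simp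
    exact (Multiset.toFinset_card_eq_card_iff_nodup (m := (L : Multiset (Fin n)))).mp this
  have hm : ∀ x, x ∈ L := by intro x; rw [← List.mem_toFinset, htf]; simp
  refine ⟨permOfList L nd hm hlen, ?_, ?_, ?_⟩
  · rw [Iseg_permOfList]
    have hD : (D.sort (· ≤ ·)).length = D.card := Finset.length_sort _
    have : L.take D.card = D.sort (· ≤ ·) := by
      rw [← hD]; exact List.take_left
    rw [this, Finset.sort_toFinset]
  · rw [Iseg_permOfList]
    have hre : L = (D.sort (· ≤ ·) ++ (A \ D).sort (· ≤ ·)) ++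
        ((E \ A).sort (· ≤ ·) ++ ((Finset.univ \ E).sort (· ≤ ·))) := by
      simp [L, List.append_assoc]
    have hlen2 : (D.sort (· ≤ ·) ++ (A \ D).sort (· ≤ ·)).length = A.card := by
      simp [Finset.length_sort, Finset.card_sdiff_of_subset hDA,
        Nat.add_sub_cancel' (Finset.card_le_card hDA)]
    have : L.take A.card = D.sort (· ≤ ·) ++ (A \ D).sort (· ≤ ·) := by
      rw [hre, ← hlen2, List.take_left]
    rw [this]
    simp only [List.toFinset_append, Finset.sort_toFinset]
    exact Finset.union_sdiff_of_subset hDA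
  · rw [Iseg_permOfList]
    have hre : L = ((D.sort (· ≤ ·) ++ (A \ D).sort (· ≤ ·)) ++ (E \ A).sort (· ≤ ·)) ++
        ((Finset.univ \ E).sort (· ≤ ·)) := by
      simp [L, List.append_assoc]
    have hlen2 : ((D.sort (· ≤ ·) ++ (A \ D).sort (· ≤ ·)) ++ (E \ A).sort (· ≤ ·)).length
        = E.card := by
      have := Finset.card_le_card hDA
      have := Finset.card_le_card hAE
      simp [Finset.length_sort, Finset.card_sdiff_of_subset hDA, Finset.card_sdiff_of_subset hAE]
      omega
    have : L.take E.card = (D.sort (· ≤ ·) ++ (A \ D).sort (· ≤ ·)) ++ (E \ A).sort (· ≤ ·) := by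
      rw [hre, ← hlen2, List.take_left]
    rw [this]
    simp only [List.toFinset_append, Finset.sort_toFinset]
    rw [Finset.union_sdiff_of_subset hDA, Finset.union_sdiff_of_subset hAE]

noncomputable def Nperm (k : ℕ) (A : Finset (Fin n)) : ℕ :=
  (Finset.univ.filter fun σ : Equiv.Perm (Fin n) => Iseg σ k = A).card

lemma Nperm_const {k : ℕ} {A B : Finset (Fin n)} (hA : A.card = k) (hB : B.card = k)
    (hk : k ≤ n) : Nperm k A = Nperm k B := by
  obtain ⟨σA, -, hA2, -⟩ := exists_perm_Iseg3 (le_refl A) (le_refl A)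
  obtain ⟨σB, -, hB2, -⟩ := exists_perm_Iseg3 (le_refl B) (le_refl B)
  rw [hA] at hA2; rw [hB] at hB2
  set τ : Equiv.Perm (Fin n) := σA.symm.trans σB with hτ
  have key : ∀ σ : Equiv.Perm (Fin n), Iseg σ k = A → Iseg (σ.trans τ) k = B := by
    intro σ hσ
    ext x
    rw [mem_Iseg]
    have : ((σ.trans τ).symm x : ℕ) = (σ.symm (τ.symm x) : ℕ) := rfl
    rw [this]
    have h1 : ((σ.symm (τ.symm x)) : ℕ) < k ↔ τ.symm x ∈ A := by rw [← hσ, mem_Iseg]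
    rw [h1, ← hA2, mem_Iseg]
    have : (σA.symm (τ.symm x) : ℕ) = (σB.symm x : ℕ) := by simp [hτ]
    rw [this, ← mem_Iseg, hB2]
  have key2 : ∀ σ : Equiv.Perm (Fin n), Iseg σ k = B → Iseg (σ.trans τ.symm) k = A := by
    intro σ hσ
    ext x
    rw [mem_Iseg]
    have : ((σ.trans τ.symm).symm x : ℕ) = (σ.symm (τ x) : ℕ) := rfl
    rw [this]
    have h1 : ((σ.symm (τ x)) : ℕ) < k ↔ τ x ∈ B := by rw [← hσ, mem_Iseg]
    rw [h1, ← hB2, mem_Iseg]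
    have : (σB.symm (τ x) : ℕ) = (σA.symm x : ℕ) := by simp [hτ]
    rw [this, ← mem_Iseg, hA2]
  refine Finset.card_bij' (fun σ _ => σ.trans τ) (fun σ _ => σ.trans τ.symm) ?_ ?_ ?_ ?_
  · intro σ hσ
    simp only [Finset.mem_filter, Finset.mem_univ, true_and] at hσ ⊢
    exact key σ hσ
  · intro σ hσ
    simp only [Finset.mem_filter, Finset.mem_univ, true_and] at hσ ⊢
    exact key2 σ hσ
  · intro σ _; ext x; simp
  · intro σ _; ext x; simp

lemma Nperm_mul_choose {k : ℕ} (hk : k ≤ n) {A : Finset (Fin n)} (hA : A.card = k) :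
    Nperm k A * n.choose k = n.factorial := by
  classical
  have hpart : (Finset.univ : Finset (Equiv.Perm (Fin n))).card =
      ∑ B ∈ Finset.powersetCard k (Finset.univ : Finset (Fin n)),
        (Finset.univ.filter fun σ : Equiv.Perm (Fin n) => Iseg σ k = B).card := by
    apply Finset.card_eq_sum_card_fiberwise
    intro σ _
    rw [Finset.mem_coe, Finset.mem_powersetCard]
    exact ⟨Finset.subset_univ _, card_Iseg σ hk⟩
  have hconst : ∀ B ∈ Finset.powersetCard k (Finset.univ : Finset (Fin n)),
      (Finset.univ.filter fun σ : Equiv.Perm (Fin n) => Iseg σ k = B).card = Nperm k A := by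
    intro B hB
    rw [Finset.mem_powersetCard] at hB
    exact (Nperm_const hB.2 hA hk : Nperm k B = Nperm k A)
  rw [Finset.sum_congr rfl hconst, Finset.sum_const, smul_eq_mul] at hpart
  have hcard : (Finset.powersetCard k (Finset.univ : Finset (Fin n))).card = n.choose k := by
    rw [Finset.card_powersetCard, Finset.card_univ, Fintype.card_fin]
  have hperm : (Finset.univ : Finset (Equiv.Perm (Fin n))).card = n.factorial := by
    rw [Finset.card_univ, Fintype.card_perm, Fintype.card_fin]
  rw [hcard, hperm] at hpart
  rw [mul_comm]; exact hpart.symm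

def Tset (𝒜 : Finset (Finset (Fin n))) (σ : Equiv.Perm (Fin n)) : Finset ℕ :=
  (Finset.range (n+1)).filter fun k => Iseg σ k ∈ 𝒜

lemma mem_Tset {𝒜 : Finset (Finset (Fin n))} {σ : Equiv.Perm (Fin n)} {k : ℕ} :
    k ∈ Tset 𝒜 σ ↔ k ≤ n ∧ Iseg σ k ∈ 𝒜 := by
  simp [Tset, Nat.lt_succ_iff]

section Family

variable {𝒜 : Finset (Finset (Fin n))} {c : Finset (Fin n) → ℕ}

lemma card_Tset_le_c
    (hc : ∀ A ∈ 𝒜, IsGreatest {k : ℕ | ∃ f : Fin k → Finset (Fin n),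
        StrictMono f ∧ (∀ i, f i ∈ 𝒜) ∧ ∃ i, f i = A} (c A))
    (σ : Equiv.Perm (Fin n)) {k : ℕ} (hk : k ∈ Tset 𝒜 σ) :
    (Tset 𝒜 σ).card ≤ c (Iseg σ k) := by
  have hk' := mem_Tset.1 hk
  set T := Tset 𝒜 σ with hT
  have e := T.orderIsoOfFin (rfl : T.card = T.card)
  refine (hc _ hk'.2).2 ⟨fun i => Iseg σ (e i), ?_, ?_, ?_⟩
  · intro i j hij
    have h1 : ((e i : ℕ)) < (e j : ℕ) := by exact_mod_cast e.strictMono hij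
    have h2 : ((e j : ℕ)) ≤ n := (mem_Tset.1 (e j).2).1
    exact Iseg_ssubset h1 h2
  · intro i
    exact (mem_Tset.1 (e i).2).2
  · refine ⟨e.symm ⟨k, hk⟩, ?_⟩
    have h3 : e (e.symm ⟨k, hk⟩) = ⟨k, hk⟩ := e.apply_symm_apply _
    show Iseg σ ((e (e.symm ⟨k, hk⟩) : ℕ)) = Iseg σ k
    rw [h3]

lemma chainSum_le_one
    (hc : ∀ A ∈ 𝒜, IsGreatest {k : ℕ | ∃ f : Fin k → Finset (Fin n),
        StrictMono f ∧ (∀ i, f i ∈ 𝒜) ∧ ∃ i, f i = A} (c A))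
    (σ : Equiv.Perm (Fin n)) :
    ∑ k ∈ Tset 𝒜 σ, 1 / (c (Iseg σ k) : ℝ) ≤ 1 := by
  rcases (Tset 𝒜 σ).eq_empty_or_nonempty with h | h
  · simp [h]
  · have hTpos : 0 < (Tset 𝒜 σ).card := Finset.card_pos.2 h
    have hle : ∀ k ∈ Tset 𝒜 σ, 1 / (c (Iseg σ k) : ℝ) ≤ 1 / ((Tset 𝒜 σ).card : ℝ) := by
      intro k hk
      apply one_div_le_one_div_of_le
      · exact_mod_cast hTpos
      · exact_mod_cast card_Tset_le_c hc σ hk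
    calc ∑ k ∈ Tset 𝒜 σ, 1 / (c (Iseg σ k) : ℝ)
        ≤ ∑ _k ∈ Tset 𝒜 σ, 1 / ((Tset 𝒜 σ).card : ℝ) := Finset.sum_le_sum hle
      _ = 1 := by
          rw [Finset.sum_const, nsmul_eq_mul]
          field_simp

lemma chainSum_eq_one
    (hc : ∀ A ∈ 𝒜, IsGreatest {k : ℕ | ∃ f : Fin k → Finset (Fin n),
        StrictMono f ∧ (∀ i, f i ∈ 𝒜) ∧ ∃ i, f i = A} (c A))
    (σ : Equiv.Perm (Fin n))
    (h : ∑ k ∈ Tset 𝒜 σ, 1 / (c (Iseg σ k) : ℝ) = 1) :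
    (Tset 𝒜 σ).Nonempty ∧ ∀ k ∈ Tset 𝒜 σ, c (Iseg σ k) = (Tset 𝒜 σ).card := by
  have hne : (Tset 𝒜 σ).Nonempty := by
    rcases (Tset 𝒜 σ).eq_empty_or_nonempty with he | he
    · rw [he] at h; simp at h
    · exact he
  refine ⟨hne, ?_⟩
  have hTpos : 0 < (Tset 𝒜 σ).card := Finset.card_pos.2 hne
  have hle : ∀ k ∈ Tset 𝒜 σ, 1 / (c (Iseg σ k) : ℝ) ≤ 1 / ((Tset 𝒜 σ).card : ℝ) := by
    intro k hk
    apply one_div_le_one_div_of_le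
    · exact_mod_cast hTpos
    · exact_mod_cast card_Tset_le_c hc σ hk
  have hconst : ∑ _k ∈ Tset 𝒜 σ, 1 / ((Tset 𝒜 σ).card : ℝ) = 1 := by
    rw [Finset.sum_const, nsmul_eq_mul]; field_simp
  have := (Finset.sum_eq_sum_iff_of_le hle).1 (h.trans hconst.symm)
  intro k hk
  have h1 := this k hk
  have hcpos : 0 < c (Iseg σ k) := lt_of_lt_of_le hTpos (card_Tset_le_c hc σ hk)
  have : ((Tset 𝒜 σ).card : ℝ) = (c (Iseg σ k) : ℝ) := by
    rw [div_eq_div_iff (by positivity) (by positivity)] at h1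
    linarith
  exact_mod_cast this.symm

end Family

section Total

variable {𝒜 : Finset (Finset (Fin n))} {c : Finset (Fin n) → ℕ}

lemma total_identity :
    ∑ σ : Equiv.Perm (Fin n), ∑ k ∈ Tset 𝒜 σ, 1 / (c (Iseg σ k) : ℝ) =
      (n.factorial : ℝ) * ∑ A ∈ 𝒜, 1 / ((n.choose A.card : ℝ) * (c A : ℝ)) := by
  classical
  set F : Finset (Fin n) → ℝ := fun A => if A ∈ 𝒜 then 1 / (c A : ℝ) else 0 with hF
  have step1 : ∀ σ : Equiv.Perm (Fin n),
      ∑ k ∈ Tset 𝒜 σ, 1 / (c (Iseg σ k) : ℝ) = ∑ k ∈ Finset.range (n+1), F (Iseg σ k) := by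
    intro σ
    rw [Tset, Finset.sum_filter]
  rw [Finset.sum_congr rfl fun σ _ => step1 σ, Finset.sum_comm]
  have step3 : ∀ k ∈ Finset.range (n+1),
      ∑ σ : Equiv.Perm (Fin n), F (Iseg σ k) =
        ∑ B ∈ Finset.powersetCard k (Finset.univ : Finset (Fin n)), (Nperm k B : ℝ) * F B := by
    intro k hk
    rw [Finset.mem_range, Nat.lt_succ_iff] at hk
    have := Finset.sum_fiberwise_of_maps_to (g := fun σ : Equiv.Perm (Fin n) => Iseg σ k)
      (fun σ (_ : σ ∈ Finset.univ) =>
        (Finset.mem_powersetCard).2 ⟨Finset.subset_univ _, card_Iseg σ hk⟩)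
      (fun σ => (F ∘ fun σ : Equiv.Perm (Fin n) => Iseg σ k) σ)
    simp only [Function.comp] at this
    rw [← this]
    apply Finset.sum_congr rfl
    intro B _
    have h2 : ∀ σ ∈ Finset.univ.filter fun σ : Equiv.Perm (Fin n) => Iseg σ k = B,
        F (Iseg σ k) = F B := by
      intro σ hσ
      simp only [Finset.mem_filter] at hσ
      rw [hσ.2]
    rw [Finset.sum_congr rfl h2, Finset.sum_const, nsmul_eq_mul, Nperm]
  rw [Finset.sum_congr rfl step3]
  have step4 : ∀ k ∈ Finset.range (n+1),
      ∑ B ∈ Finset.powersetCard k (Finset.univ : Finset (Fin n)), (Nperm k B : ℝ) * F B =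
        ∑ B ∈ 𝒜.filter (fun B => B.card = k), (Nperm k B : ℝ) * (1 / (c B : ℝ)) := by
    intro k hk
    rw [Finset.mem_range, Nat.lt_succ_iff] at hk
    have heq : 𝒜.filter (fun B => B.card = k) =
        (Finset.powersetCard k (Finset.univ : Finset (Fin n))).filter (· ∈ 𝒜) := by
      ext B
      simp [Finset.mem_powersetCard, Finset.subset_univ, and_comm]
    rw [heq, Finset.sum_filter]
    apply Finset.sum_congr rfl
    intro B _
    by_cases hB : B ∈ 𝒜 <;> simp [hF, hB]
  rw [Finset.sum_congr rfl step4]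
  have step5 : ∑ k ∈ Finset.range (n+1),
      ∑ B ∈ 𝒜.filter (fun B => B.card = k), (Nperm k B : ℝ) * (1 / (c B : ℝ)) =
      ∑ A ∈ 𝒜, (Nperm A.card A : ℝ) * (1 / (c A : ℝ)) := by
    have hmaps : ∀ A ∈ 𝒜, A.card ∈ Finset.range (n+1) := by
      intro A _
      rw [Finset.mem_range, Nat.lt_succ_iff]
      simpa using Finset.card_le_card (Finset.subset_univ A)
    have := Finset.sum_fiberwise_of_maps_to (g := fun A : Finset (Fin n) => A.card)
      hmaps (fun A => (Nperm A.card A : ℝ) * (1 / (c A : ℝ)))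
    rw [← this]
    apply Finset.sum_congr rfl
    intro k _
    apply Finset.sum_congr rfl
    intro B hB
    simp only [Finset.mem_filter] at hB
    rw [hB.2]
  rw [step5, Finset.mul_sum]
  apply Finset.sum_congr rfl
  intro A hA
  have hcard : A.card ≤ n := by simpa using Finset.card_le_card (Finset.subset_univ A)
  have hN := Nperm_mul_choose hcard (rfl : A.card = A.card)
  have hchoose : (0 : ℝ) < (n.choose A.card : ℝ) := by
    exact_mod_cast Nat.choose_pos hcard
  have hNr : (Nperm A.card A : ℝ) = (n.factorial : ℝ) / (n.choose A.card : ℝ) := by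
    have : (Nperm A.card A : ℝ) * (n.choose A.card : ℝ) = (n.factorial : ℝ) := by
      exact_mod_cast hN
    field_simp [ne_of_gt hchoose] at this ⊢
    linarith
  rw [hNr]
  rcases Nat.eq_zero_or_pos (c A) with hc0 | hc0
  · rw [hc0]; simp
  · have : (0:ℝ) < (c A : ℝ) := by exact_mod_cast hc0
    field_simp

end Total

section Swap

variable {𝒜 : Finset (Finset (Fin n))} {c : Finset (Fin n) → ℕ}

lemma swap_mem
    (hall : ∀ σ : Equiv.Perm (Fin n), (Tset 𝒜 σ).Nonempty ∧
        ∀ k ∈ Tset 𝒜 σ, c (Iseg σ k) = (Tset 𝒜 σ).card)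
    {A : Finset (Fin n)} (hA : A ∈ 𝒜) {a b : Fin n} (ha : a ∈ A) (hb : b ∉ A) :
    insert b (A.erase a) ∈ 𝒜 := by
  classical
  by_contra hB
  set k := A.card with hk
  have hk1 : 1 ≤ k := Finset.card_pos.2 ⟨a, ha⟩
  have hkn : k < n := by
    have hss : A ⊂ Finset.univ := Finset.ssubset_univ_iff.2 (fun h => hb (h ▸ Finset.mem_univ b))
    have := Finset.card_lt_card hss
    simpa using this
  set D := A.erase a with hDdef
  set E := insert b A with hEdef
  have hDcard : D.card = k - 1 := Finset.card_erase_of_mem ha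
  have hEcard : E.card = k + 1 := Finset.card_insert_of_notMem hb
  obtain ⟨σ, hD, hA2, hE⟩ := exists_perm_Iseg3 (Finset.erase_subset a A) (Finset.subset_insert b A)
  rw [hDcard] at hD
  rw [hEcard] at hE
  have hA2 : Iseg σ k = A := hA2
  set p : Fin n := ⟨k-1, by omega⟩ with hp
  set q : Fin n := ⟨k, by omega⟩ with hq
  have hpv : (p : ℕ) = k - 1 := rfl
  have hqv : (q : ℕ) = k := rfl
  have hab : a ≠ b := fun e => hb (e ▸ ha)
  have hσp : σ p = a := by
    have h1 : σ p ∈ Iseg σ k := mem_Iseg.2 (by simp [hpv]; omega)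
    have h2 : σ p ∉ Iseg σ (k-1) := by rw [mem_Iseg]; simp [hpv]
    rw [hA2] at h1; rw [hD] at h2
    by_contra hne
    exact h2 (Finset.mem_erase.2 ⟨hne, h1⟩)
  have hσq : σ q = b := by
    have h1 : σ q ∈ Iseg σ (k+1) := mem_Iseg.2 (by simp [hqv])
    have h2 : σ q ∉ Iseg σ k := by rw [mem_Iseg]; simp [hqv]
    rw [hE] at h1; rw [hA2] at h2
    rcases Finset.mem_insert.1 h1 with h | h
    · exact h
    · exact absurd h h2
  set σ' : Equiv.Perm (Fin n) := (Equiv.swap p q).trans σ with hσ'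
  have hsymm : ∀ x, σ'.symm x = Equiv.swap p q (σ.symm x) := by
    intro x
    simp [hσ', Equiv.symm_trans_apply]
  have claim1 : ∀ j, j ≠ k → Iseg σ' j = Iseg σ j := by
    intro j hj
    ext x
    rw [mem_Iseg, mem_Iseg, hsymm]
    rcases eq_or_ne (σ.symm x) p with h | h
    · rw [h, Equiv.swap_apply_left, hqv]
      rw [hpv]
      omega
    · rcases eq_or_ne (σ.symm x) q with h2 | h2
      · rw [h2, Equiv.swap_apply_right, hpv, hqv]
        omega
      · rw [Equiv.swap_apply_of_ne_of_ne h h2]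
  have claim2 : Iseg σ' k = insert b D := by
    ext x
    rw [mem_Iseg, hsymm]
    rcases eq_or_ne (σ.symm x) p with h | h
    · have hx : x = a := by
        rw [← hσp, ← h]; simp
      rw [h, Equiv.swap_apply_left, hqv]
      apply iff_of_false (by omega)
      rw [hx]
      simp [hDdef, hab]
    · rcases eq_or_ne (σ.symm x) q with h2 | h2
      · have hx : x = b := by
          rw [← hσq, ← h2]; simp
        rw [h2, Equiv.swap_apply_right, hpv]
        apply iff_of_true (by omega)
        rw [hx]
        exact Finset.mem_insert_self _ _
      · rw [Equiv.swap_apply_of_ne_of_ne h h2]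
        have hxa : x ≠ a := by
          intro e; apply h; rw [← hσp] at e; rw [e]; simp
        have hxb : x ≠ b := by
          intro e; apply h2; rw [← hσq] at e; rw [e]; simp
        have hlhs : ((σ.symm x : ℕ) < k) ↔ x ∈ A := by rw [← hA2, mem_Iseg]
        rw [hlhs]
        simp [hDdef, hxa, hxb, Finset.mem_insert, Finset.mem_erase]
  have hTset : Tset 𝒜 σ' = (Tset 𝒜 σ).erase k := by
    ext j
    rw [Finset.mem_erase, mem_Tset, mem_Tset]
    rcases eq_or_ne j k with rfl | hj
    · rw [claim2]
      simp [hB]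
    · rw [claim1 j hj]
      tauto
  obtain ⟨j, hj⟩ := (hall σ').1
  have hjk := Finset.mem_erase.1 (hTset ▸ hj)
  have hkT : k ∈ Tset 𝒜 σ := mem_Tset.2 ⟨hkn.le, hA2 ▸ hA⟩
  have e1 : c (Iseg σ' j) = (Tset 𝒜 σ').card := (hall σ').2 j hj
  have e2 : c (Iseg σ j) = (Tset 𝒜 σ).card := (hall σ).2 j hjk.2
  rw [claim1 j hjk.1] at e1
  rw [hTset, Finset.card_erase_of_mem hkT] at e1
  have hpos : 0 < (Tset 𝒜 σ).card := Finset.card_pos.2 ⟨k, hkT⟩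
  omega

end Swap

section Close

variable {𝒜 : Finset (Finset (Fin n))} {c : Finset (Fin n) → ℕ}

lemma level_closed
    (hall : ∀ σ : Equiv.Perm (Fin n), (Tset 𝒜 σ).Nonempty ∧
        ∀ k ∈ Tset 𝒜 σ, c (Iseg σ k) = (Tset 𝒜 σ).card) :
    ∀ m : ℕ, ∀ A B : Finset (Fin n), A ∈ 𝒜 → B.card = A.card → (B \ A).card = m → B ∈ 𝒜 := by
  intro m
  induction m using Nat.strong_induction_on with
  | _ m ih =>
    intro A B hA hcard hm
    rcases Nat.eq_zero_or_pos m with rfl | hm0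
    · have h0 : B \ A = ∅ := Finset.card_eq_zero.1 hm
      have hBA : B ⊆ A := by rwa [Finset.sdiff_eq_empty_iff_subset] at h0
      have : B = A := Finset.eq_of_subset_of_card_le hBA (le_of_eq hcard.symm)
      rwa [this]
    · obtain ⟨b, hbmem⟩ := Finset.card_pos.1 (hm ▸ hm0)
      have hbB : b ∈ B := (Finset.mem_sdiff.1 hbmem).1
      have hbA : b ∉ A := (Finset.mem_sdiff.1 hbmem).2
      have hABne : (A \ B).Nonempty := by
        rw [← Finset.card_pos]
        by_contra hcon
        push_neg at hcon
        have : A \ B = ∅ := Finset.card_eq_zero.1 (Nat.le_zero.1 hcon)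
        have hAB : A ⊆ B := by rwa [Finset.sdiff_eq_empty_iff_subset] at this
        have : A = B := Finset.eq_of_subset_of_card_le hAB (le_of_eq hcard)
        rw [this] at hbA
        exact hbA hbB
      obtain ⟨a, hamem⟩ := hABne
      have haA : a ∈ A := (Finset.mem_sdiff.1 hamem).1
      have haB : a ∉ B := (Finset.mem_sdiff.1 hamem).2
      set A' := insert b (A.erase a) with hA'def
      have hA' : A' ∈ 𝒜 := swap_mem hall hA haA hbA
      have hab : b ≠ a := fun e => hbA (e ▸ haA)
      have hcard' : A'.card = A.card := by
        rw [hA'def, Finset.card_insert_of_notMem (by simp [hbA]),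
          Finset.card_erase_of_mem haA]
        have : 1 ≤ A.card := Finset.card_pos.2 ⟨a, haA⟩
        omega
      have hsd : B \ A' = (B \ A).erase b := by
        ext x
        simp only [Finset.mem_sdiff, Finset.mem_erase, hA'def, Finset.mem_insert,
          Finset.mem_erase, not_or, not_and]
        constructor
        · rintro ⟨hxB, hxb, hx2⟩
          refine ⟨hxb, hxB, ?_⟩
          intro hxA
          have hxa : x ≠ a := fun e => haB (e ▸ hxB)
          exact (hx2 hxa) hxA
        · rintro ⟨hxb, hxB, hxA⟩
          exact ⟨hxB, hxb, fun _ => fun h => hxA h⟩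
      have hnew : (B \ A').card = m - 1 := by
        rw [hsd, Finset.card_erase_of_mem hbmem, hm]
      exact ih (m-1) (by omega) A' B hA' (hcard.trans hcard'.symm) hnew

end Close

/-- **Equality case of the localized LYM inequality.** For a nonempty family `𝒜`, the sum equals
`1` iff `𝒜` is a union of complete levels of the Boolean lattice. -/
theorem localized_LYM_equality {n : ℕ} (𝒜 : Finset (Finset (Fin n))) (h𝒜 : 𝒜.Nonempty)
    (c : Finset (Fin n) → ℕ)
    (hc : ∀ A ∈ 𝒜, IsGreatest {k : ℕ | ∃ f : Fin k → Finset (Fin n),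
        StrictMono f ∧ (∀ i, f i ∈ 𝒜) ∧ ∃ i, f i = A} (c A)) :
    (∑ A ∈ 𝒜, (1 : ℝ) / ((n.choose A.card : ℝ) * (c A : ℝ)) = 1) ↔
      ∃ S : Set ℕ, ∀ A : Finset (Fin n), A ∈ 𝒜 ↔ A.card ∈ S := by
  classical
  constructor
  · -- forward
    intro hsum
    have htot := total_identity (𝒜 := 𝒜) (c := c)
    rw [hsum, mul_one] at htot
    have hconst : ∑ _σ : Equiv.Perm (Fin n), (1 : ℝ) = (n.factorial : ℝ) := by
      rw [Finset.sum_const, nsmul_eq_mul, mul_one, Finset.card_univ, Fintype.card_perm,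
        Fintype.card_fin]
    have hle : ∀ σ ∈ (Finset.univ : Finset (Equiv.Perm (Fin n))),
        ∑ k ∈ Tset 𝒜 σ, 1 / (c (Iseg σ k) : ℝ) ≤ 1 := fun σ _ => chainSum_le_one hc σ
    have hone : ∀ σ ∈ (Finset.univ : Finset (Equiv.Perm (Fin n))),
        ∑ k ∈ Tset 𝒜 σ, 1 / (c (Iseg σ k) : ℝ) = 1 :=
      (Finset.sum_eq_sum_iff_of_le hle).1 (by rw [htot, hconst])
    have hall : ∀ σ : Equiv.Perm (Fin n), (Tset 𝒜 σ).Nonempty ∧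
        ∀ k ∈ Tset 𝒜 σ, c (Iseg σ k) = (Tset 𝒜 σ).card :=
      fun σ => chainSum_eq_one hc σ (hone σ (Finset.mem_univ σ))
    refine ⟨{m | ∃ A ∈ 𝒜, A.card = m}, fun B => ⟨fun hB => ⟨B, hB, rfl⟩, ?_⟩⟩
    rintro ⟨A, hA, hAB⟩
    exact level_closed hall (B \ A).card A B hA hAB.symm rfl
  · -- reverse
    rintro ⟨S, hS⟩
    set s := 𝒜.image Finset.card with hsdef
    have hsne : s.Nonempty := h𝒜.image _
    have hspos : 0 < s.card := Finset.card_pos.2 hsne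
    have hsle : ∀ m ∈ s, m ≤ n := by
      intro m hm
      obtain ⟨C, _, rfl⟩ := Finset.mem_image.1 hm
      simpa using Finset.card_le_card (Finset.subset_univ C)
    have hmemS : ∀ m ∈ s, m ∈ S := by
      intro m hm
      obtain ⟨C, hC, rfl⟩ := Finset.mem_image.1 hm
      exact (hS C).1 hC
    have hkey : ∀ A ∈ 𝒜, c A = s.card := by
      intro A hA
      obtain ⟨f, hmono, hmem, hex⟩ := (hc A hA).1
      have hup : c A ≤ s.card := by
        have hsm : StrictMono fun i : Fin (c A) => (f i).card :=
          fun i j h => Finset.card_lt_card (hmono h)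
        have := Finset.card_le_card_of_injOn (s := (Finset.univ : Finset (Fin (c A))))
          (t := s) (fun i : Fin (c A) => (f i).card)
          (fun i _ => Finset.mem_image.2 ⟨f i, hmem i, rfl⟩)
          (fun i _ j _ h => hsm.injective h)
        simpa using this
      have hlow : s.card ≤ c A := by
        obtain ⟨σ, -, hA2, -⟩ := exists_perm_Iseg3 (le_refl A) (le_refl A)
        have e := s.orderIsoOfFin (rfl : s.card = s.card)
        refine (hc A hA).2 ⟨fun i => Iseg σ (e i), ?_, ?_, ?_⟩
        · intro i j hij
          have h1 : ((e i : ℕ)) < (e j : ℕ) := by exact_mod_cast e.strictMono hij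
          exact Iseg_ssubset h1 (hsle _ (e j).2)
        · intro i
          rw [hS]
          have : (Iseg σ (e i)).card = (e i : ℕ) := card_Iseg σ (hsle _ (e i).2)
          rw [this]
          exact hmemS _ (e i).2
        · have hAs : A.card ∈ s := Finset.mem_image.2 ⟨A, hA, rfl⟩
          refine ⟨e.symm ⟨A.card, hAs⟩, ?_⟩
          have h3 : e (e.symm ⟨A.card, hAs⟩) = ⟨A.card, hAs⟩ := e.apply_symm_apply _
          show Iseg σ ((e (e.symm ⟨A.card, hAs⟩) : ℕ)) = A
          rw [h3]
          exact hA2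
      omega
    have hfiber : ∀ m ∈ s, 𝒜.filter (fun A => A.card = m) =
        Finset.powersetCard m (Finset.univ : Finset (Fin n)) := by
      intro m hm
      ext A
      simp only [Finset.mem_filter, Finset.mem_powersetCard, Finset.subset_univ, true_and]
      constructor
      · rintro ⟨-, h⟩; exact h
      · intro h
        refine ⟨(hS A).2 ?_, h⟩
        rw [h]
        exact hmemS m hm
    have hmaps : ∀ A ∈ 𝒜, A.card ∈ s := fun A hA => Finset.mem_image.2 ⟨A, hA, rfl⟩
    have hgrp := Finset.sum_fiberwise_of_maps_to (g := fun A : Finset (Fin n) => A.card)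
      hmaps (fun A => (1 : ℝ) / ((n.choose A.card : ℝ) * (c A : ℝ)))
    rw [← hgrp]
    have hinner : ∀ m ∈ s,
        ∑ A ∈ 𝒜.filter (fun A => A.card = m),
          (1 : ℝ) / ((n.choose A.card : ℝ) * (c A : ℝ)) = 1 / (s.card : ℝ) := by
      intro m hm
      have hrw : ∀ A ∈ 𝒜.filter (fun A => A.card = m),
          (1 : ℝ) / ((n.choose A.card : ℝ) * (c A : ℝ)) =
            1 / ((n.choose m : ℝ) * (s.card : ℝ)) := by
        intro A hA
        rw [Finset.mem_filter] at hA
        rw [hA.2, hkey A hA.1]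
      rw [Finset.sum_congr rfl hrw, Finset.sum_const]
      have hcardf : (𝒜.filter (fun A => A.card = m)).card = n.choose m := by
        rw [hfiber m hm, Finset.card_powersetCard, Finset.card_univ, Fintype.card_fin]
      rw [hcardf, nsmul_eq_mul]
      have h1 : (0:ℝ) < (n.choose m : ℝ) := by exact_mod_cast Nat.choose_pos (hsle m hm)
      field_simp
    rw [Finset.sum_congr rfl hinner, Finset.sum_const, nsmul_eq_mul]
    field_simp
end

section
/- Let r and n be positive integers and let 𝒜 be a family of r-element subsets of {1,…,n}. Define a rational-valued function m on 𝒜 by: m(A) = n/r if A is contained in a matching of ⌊n/r⌋ pairwise disjoint sets from 𝒜, and otherwise m(A) is the size of the largest matching in 𝒜 containing A (which is then less than ⌊n/r⌋). Then the sum over all A ∈ 𝒜 of 1/m(A) is at most C(n-1, r-1). -/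
namespace LEKR

def NDisj (n r a b : ℕ) : Prop :=
  (r ≤ a - b ∧ a - b ≤ n - r) ∨ (r ≤ b - a ∧ b - a ≤ n - r)

lemma mod_shift_ndisj {n r a D u v : ℕ} (hn : 0 < n) (hr : 1 ≤ r)
    (hu : u = a % n) (hv : v = (a + D) % n) (hD1 : r ≤ D) (hD2 : D ≤ n - r) :
    u ≠ v ∧ NDisj n r u v := by
  have h1 : u + n * (a / n) = a := by rw [hu]; exact Nat.mod_add_div a n
  have h2 : v + n * ((a + D) / n) = a + D := by rw [hv]; exact Nat.mod_add_div _ n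
  have hul : u < n := by rw [hu]; exact Nat.mod_lt _ hn
  have hvl : v < n := by rw [hv]; exact Nat.mod_lt _ hn
  have hk1 : a / n ≤ (a + D) / n := Nat.div_le_div_right (by omega)
  have hk2 : (a + D) / n ≤ a / n + 1 := by
    have : (a + D) / n ≤ (a + n) / n := Nat.div_le_div_right (by omega)
    rwa [Nat.add_div_right _ hn] at this
  have hcase : (a + D) / n = a / n ∨ (a + D) / n = a / n + 1 := by omega
  rcases hcase with hc | hc
  · rw [hc] at h2
    exact ⟨by omega, Or.inr (by omega)⟩
  · rw [hc] at h2
    have : v + n = u + D := by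
      have : v + (n * (a / n) + n) = a + D := by rw [← h2]; ring_nf
      omega
    exact ⟨by omega, Or.inl (by omega)⟩

/-- The abstract per-cycle lemma. -/
theorem cycle_lemma : ∀ n r : ℕ, 1 ≤ r → r ≤ n → ∀ S : Finset ℕ, (∀ p ∈ S, p < n) →
    ∀ w : ℕ → ℚ,
    (∀ p ∈ S, ∀ M : Finset ℕ, M ⊆ S → p ∈ M → (M : Set ℕ).Pairwise (NDisj n r) →
      w p ≤ 1 / M.card) →
    (∀ p ∈ S, (∃ M : Finset ℕ, M ⊆ S ∧ p ∈ M ∧ (M : Set ℕ).Pairwise (NDisj n r) ∧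
      M.card = n / r) → w p ≤ (r : ℚ) / n) →
    ∑ p ∈ S, w p ≤ (r : ℚ) := by
  intro n
  induction n using Nat.strong_induction_on with
  | _ n IH =>
  intro r hr hrn S hS w H1 H2
  have hn : 0 < n := lt_of_lt_of_le hr hrn
  have hw1 : ∀ p ∈ S, w p ≤ 1 := by
    intro p hp
    have h := H1 p hp {p} (by simpa using hp) (by simp)
      (by simp [Set.Pairwise])
    simpa using h
  by_cases hcard : S.card ≤ r
  · -- trivial case
    calc ∑ p ∈ S, w p ≤ ∑ _p ∈ S, (1 : ℚ) := Finset.sum_le_sum hw1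
      _ = S.card := by simp
      _ ≤ (r : ℚ) := by exact_mod_cast hcard
  by_cases hdvd : r ∣ n
  · -- residue classes mod r
    obtain ⟨mq, hmq⟩ := hdvd
    have maps : ∀ p ∈ S, p % r ∈ Finset.range r := fun p _ => by
      simp [Nat.mod_lt _ (by omega : 0 < r)]
    rw [← Finset.sum_fiberwise_of_maps_to maps w]
    have hbound : ∀ i ∈ Finset.range r,
        ∑ p ∈ S.filter (fun p => p % r = i), w p ≤ 1 := by
      intro i _
      set C := S.filter (fun p => p % r = i) with hC
      rcases Finset.eq_empty_or_nonempty C with he | hne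
      · simp [he]
      have hCS : C ⊆ S := Finset.filter_subset _ _
      have hpair : (C : Set ℕ).Pairwise (NDisj n r) := by
        intro a ha b hb hab
        simp only [hC, Finset.coe_filter, Set.mem_setOf_eq, Finset.mem_filter] at ha hb
        have ha' := hS a ha.1
        have hb' := hS b hb.1
        -- a ≡ b mod r
        have h1 := Nat.mod_add_div a r
        have h2 := Nat.mod_add_div b r
        rcases lt_or_gt_of_ne hab with h | h
        · right
          have hd : b - a = r * (b / r - a / r) := by
            rw [Nat.mul_sub]; omega
          have hpos : 0 < b / r - a / r := by
            rcases Nat.eq_zero_or_pos (b / r - a / r) with h0 | h0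
            · rw [h0, Nat.mul_zero] at hd; omega
            · exact h0
          have hlt : b / r - a / r < mq := by
            by_contra hge
            push_neg at hge
            have : n ≤ r * (b / r - a / r) := by
              rw [hmq]; exact Nat.mul_le_mul_left r hge
            omega
          have hle : r * (b / r - a / r) ≤ r * (mq - 1) := Nat.mul_le_mul_left r (by omega)
          have hmq1 : r * (mq - 1) = r * mq - r := by rw [Nat.mul_sub, Nat.mul_one]
          constructor
          · rw [hd]; calc r = r * 1 := (Nat.mul_one r).symm
              _ ≤ r * (b / r - a / r) := Nat.mul_le_mul_left r hpos
          · omega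
        · left
          have hd : a - b = r * (a / r - b / r) := by
            rw [Nat.mul_sub]; omega
          have hpos : 0 < a / r - b / r := by
            rcases Nat.eq_zero_or_pos (a / r - b / r) with h0 | h0
            · rw [h0, Nat.mul_zero] at hd; omega
            · exact h0
          have hlt : a / r - b / r < mq := by
            by_contra hge
            push_neg at hge
            have : n ≤ r * (a / r - b / r) := by
              rw [hmq]; exact Nat.mul_le_mul_left r hge
            omega
          have hle : r * (a / r - b / r) ≤ r * (mq - 1) := Nat.mul_le_mul_left r (by omega)
          have hmq1 : r * (mq - 1) = r * mq - r := by rw [Nat.mul_sub, Nat.mul_one]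
          constructor
          · rw [hd]; calc r = r * 1 := (Nat.mul_one r).symm
              _ ≤ r * (a / r - b / r) := Nat.mul_le_mul_left r hpos
          · omega
      have hub : ∀ p ∈ C, w p ≤ 1 / C.card := fun p hp =>
        H1 p (hCS hp) C hCS hp hpair
      have hCc : (0:ℚ) < C.card := by
        have := Finset.card_pos.mpr hne; exact_mod_cast this
      calc ∑ p ∈ C, w p ≤ ∑ _p ∈ C, (1 / C.card : ℚ) := Finset.sum_le_sum hub
        _ = C.card * (1 / C.card) := by rw [Finset.sum_const, nsmul_eq_mul]
        _ = 1 := by field_simp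
    calc ∑ i ∈ Finset.range r, ∑ p ∈ S.filter (fun p => p % r = i), w p
        ≤ ∑ _i ∈ Finset.range r, (1:ℚ) := Finset.sum_le_sum hbound
      _ = r := by simp
  -- now r ∤ n, S.card > r, so n > r
  have hnr : r < n := by
    rcases lt_or_eq_of_le hrn with h | h
    · exact h
    · exact absurd (h ▸ dvd_refl r) hdvd
  have hSsub : S ⊆ Finset.range n := fun p hp => Finset.mem_range.mpr (hS p hp)
  by_cases hfull : S.card = n
  · -- S is all of range n
    have hSeq : S = Finset.range n := by
      apply Finset.eq_of_subset_of_card_le hSsub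
      rw [hfull, Finset.card_range]
    set q := n / r with hq
    have hq1 : 1 ≤ q := Nat.one_le_div_iff (by omega) |>.mpr hrn
    have hqr : q * r ≤ n := Nat.div_mul_le_self n r
    have key : ∀ p ∈ S, w p ≤ (r : ℚ) / n := by
      intro p hp
      have hpn : p < n := hS p hp
      apply H2 p hp
      refine ⟨(Finset.range q).image (fun i => (p + i * r) % n), ?_, ?_, ?_, ?_⟩
      · intro y hy
        simp only [Finset.mem_image, Finset.mem_range] at hy
        obtain ⟨i, _, rfl⟩ := hy
        rw [hSeq]
        exact Finset.mem_range.mpr (Nat.mod_lt _ (by omega))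
      · simp only [Finset.mem_image, Finset.mem_range]
        exact ⟨0, by omega, by simp [Nat.mod_eq_of_lt hpn]⟩
      · intro u hu v hv huv
        simp only [Finset.coe_image, Finset.coe_range, Set.mem_image,
          Set.mem_Iio] at hu hv
        obtain ⟨i, hi, rfl⟩ := hu
        obtain ⟨j, hj, rfl⟩ := hv
        have hij : i ≠ j := fun h => huv (by rw [h])
        have key2 : ∀ i j : ℕ, i < j → j < q →
            (p + i * r) % n ≠ (p + j * r) % n ∧
            NDisj n r ((p + i * r) % n) ((p + j * r) % n) := by
          intro i j hij hj
          have hsplit : p + j * r = (p + i * r) + (j - i) * r := by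
            have : j * r = i * r + (j - i) * r := by
              rw [← Nat.add_mul]; congr 1; omega
            omega
          have hD1 : r ≤ (j - i) * r := by
            calc r = 1 * r := (Nat.one_mul r).symm
              _ ≤ (j - i) * r := Nat.mul_le_mul_right r (by omega)
          have hD2 : (j - i) * r ≤ n - r := by
            have h1 : (j - i) * r ≤ (q - 1) * r := Nat.mul_le_mul_right r (by omega)
            have h2 : (q - 1) * r = q * r - r := by rw [Nat.sub_mul, Nat.one_mul]
            omega
          exact mod_shift_ndisj (by omega) hr rfl (by rw [hsplit]) hD1 hD2
        rcases lt_or_gt_of_ne hij with h | h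
        · exact (key2 i j h hj).2
        · rcases (key2 j i h hi).2 with hc | hc
          · exact Or.inr hc
          · exact Or.inl hc
      · rw [Finset.card_image_of_injOn, Finset.card_range]
        intro i hi j hj hij
        simp only [Finset.coe_range, Set.mem_Iio] at hi hj
        by_contra hne
        have key2 : ∀ i j : ℕ, i < j → j < q →
            (p + i * r) % n ≠ (p + j * r) % n := by
          intro i j hlt hjq
          have hsplit : p + j * r = (p + i * r) + (j - i) * r := by
            have : j * r = i * r + (j - i) * r := by
              rw [← Nat.add_mul]; congr 1; omega
            omega
          have hD1 : r ≤ (j - i) * r := by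
            calc r = 1 * r := (Nat.one_mul r).symm
              _ ≤ (j - i) * r := Nat.mul_le_mul_right r (by omega)
          have hD2 : (j - i) * r ≤ n - r := by
            have h1 : (j - i) * r ≤ (q - 1) * r := Nat.mul_le_mul_right r (by omega)
            have h2 : (q - 1) * r = q * r - r := by rw [Nat.sub_mul, Nat.one_mul]
            omega
          exact (mod_shift_ndisj (by omega) hr rfl (by rw [hsplit]) hD1 hD2).1
        rcases lt_or_gt_of_ne hne with h | h
        · exact key2 i j h hj hij
        · exact key2 j i h hi hij.symm
    calc ∑ p ∈ S, w p ≤ ∑ _p ∈ S, ((r:ℚ)/n) := Finset.sum_le_sum key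
      _ = S.card * ((r:ℚ)/n) := by rw [Finset.sum_const]; simp [mul_comm]
      _ = (r:ℚ) := by rw [hfull]; field_simp
  · -- delete an unused position x
    have hcl : S.card < n := by
      have h := Finset.card_le_card hSsub
      rw [Finset.card_range] at h
      omega
    have hex : ∃ x, x < n ∧ x ∉ S := by
      by_contra hno
      push_neg at hno
      have : Finset.range n ⊆ S := fun y hy => hno y (Finset.mem_range.mp hy)
      have := Finset.card_le_card this
      rw [Finset.card_range] at this
      omega
    obtain ⟨x, hxn, hxS⟩ := hex
    set ψ : ℕ → ℕ := fun y => if y < x then y else y - 1 with hψ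
    set φ : ℕ → ℕ := fun y => if y < x then y else y + 1 with hφ
    have hφψ : ∀ p ∈ S, φ (ψ p) = p := by
      intro p hp
      have : p ≠ x := fun h => hxS (h ▸ hp)
      simp only [hψ, hφ]
      split_ifs <;> omega
    have hψinj : ∀ a ∈ S, ∀ b ∈ S, ψ a = ψ b → a = b := by
      intro a ha b hb hab
      have ha' : a ≠ x := fun h => hxS (h ▸ ha)
      have hb' : b ≠ x := fun h => hxS (h ▸ hb)
      simp only [hψ] at hab
      split_ifs at hab <;> omega
    set S' := S.image ψ with hS'
    have hS'lt : ∀ p' ∈ S', p' < n - 1 := by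
      intro p' hp'
      obtain ⟨p, hp, rfl⟩ := Finset.mem_image.mp hp'
      have hpn := hS p hp
      have hpx : p ≠ x := fun h => hxS (h ▸ hp)
      simp only [hψ]
      split_ifs <;> omega
    have hmemS : ∀ p' ∈ S', φ p' ∈ S ∧ ψ (φ p') = p' := by
      intro p' hp'
      obtain ⟨p, hp, rfl⟩ := Finset.mem_image.mp hp'
      rw [hφψ p hp]
      exact ⟨hp, rfl⟩
    have hsum : ∑ p' ∈ S', w (φ p') = ∑ p ∈ S, w p := by
      rw [hS', Finset.sum_image hψinj]
      exact Finset.sum_congr rfl (fun p hp => by rw [hφψ p hp])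
    have hnd : ∀ a b, a < n → b < n → a ≠ x → b ≠ x →
        NDisj (n-1) r (ψ a) (ψ b) → NDisj n r a b := by
      intro a b han hbn hax hbx h
      simp only [hψ] at h
      unfold NDisj at h ⊢
      split_ifs at h <;> omega
    -- lift matchings
    have hlift : ∀ M' : Finset ℕ, M' ⊆ S' → (M' : Set ℕ).Pairwise (NDisj (n-1) r) →
        ∃ M : Finset ℕ, M ⊆ S ∧ (M : Set ℕ).Pairwise (NDisj n r) ∧ M.card = M'.card ∧
          ∀ p' ∈ M', φ p' ∈ M := by
      intro M' hM'S hM'p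
      refine ⟨M'.image φ, ?_, ?_, ?_, ?_⟩
      · intro y hy
        obtain ⟨p', hp', rfl⟩ := Finset.mem_image.mp hy
        exact (hmemS p' (hM'S hp')).1
      · intro u hu v hv huv
        simp only [Finset.coe_image, Set.mem_image, Finset.mem_coe] at hu hv
        obtain ⟨a', ha', rfl⟩ := hu
        obtain ⟨b', hb', rfl⟩ := hv
        have hane : a' ≠ b' := fun h => huv (by rw [h])
        have ha := hmemS a' (hM'S ha')
        have hb := hmemS b' (hM'S hb')
        apply hnd (φ a') (φ b') (hS _ ha.1) (hS _ hb.1)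
          (fun h => hxS (h ▸ ha.1)) (fun h => hxS (h ▸ hb.1))
        rw [ha.2, hb.2]
        exact hM'p ha' hb' hane
      · apply Finset.card_image_of_injOn
        intro a' ha' b' hb' hab
        have ha := hmemS a' (hM'S ha')
        have hb := hmemS b' (hM'S hb')
        rw [← ha.2, ← hb.2, hab]
      · intro p' hp'
        exact Finset.mem_image_of_mem φ hp'
    have hndiv : n / r = (n - 1) / r := by
      have h1 : n - 1 + 1 = n := by omega
      have := Nat.succ_div (a := n-1) (b := r)
      rw [h1] at this
      rw [this, if_neg hdvd]
      omega
    have IHres := IH (n-1) (by omega) r hr (by omega) S' hS'lt (fun p' => w (φ p'))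
      (by
        intro p' hp' M' hM'S hp'M' hM'p
        obtain ⟨M, hMS, hMp, hMcard, hmem⟩ := hlift M' hM'S hM'p
        have hφp : φ p' ∈ S := (hmemS p' hp').1
        have := H1 (φ p') hφp M hMS (hmem p' hp'M') hMp
        rwa [hMcard] at this)
      (by
        intro p' hp' ⟨M', hM'S, hp'M', hM'p, hM'card⟩
        obtain ⟨M, hMS, hMp, hMcard, hmem⟩ := hlift M' hM'S hM'p
        have hφp : φ p' ∈ S := (hmemS p' hp').1
        have h := H2 (φ p') hφp ⟨M, hMS, hmem p' hp'M', hMp, by rw [hMcard, hM'card, ← hndiv]⟩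
        calc w (φ p') ≤ (r:ℚ)/n := h
          _ ≤ (r:ℚ)/((n:ℚ)-1) := by
            have h2n : (2:ℚ) ≤ (n:ℚ) := by exact_mod_cast (by omega : 2 ≤ n)
            apply div_le_div_of_nonneg_left (by positivity) (by linarith) (by linarith)
          _ = (r:ℚ)/((n-1:ℕ):ℚ) := by
            congr 1
            push_cast [Nat.cast_sub (by omega : 1 ≤ n)]
            ring)
    rw [← hsum]
    exact IHres



/-- The arc of length `r` starting at position `p` on the circle `Fin n`. -/
def interval (n r : ℕ) (hn : 0 < n) (p : ℕ) : Finset (Fin n) :=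
  (Finset.range r).image (fun i => (⟨(p + i) % n, Nat.mod_lt _ hn⟩ : Fin n))

lemma add_mod_inj {n p i j : ℕ} (hn : 0 < n) (hi : i < n) (hj : j < n)
    (h : (p + i) % n = (p + j) % n) : i = j := by
  have h1 := Nat.mod_add_div (p + i) n
  have h2 := Nat.mod_add_div (p + j) n
  rw [h] at h1
  have d1 : (p + i) / n ≤ (p + j) / n + 1 := by
    have h3 : (p + i) / n ≤ (p + j + n) / n := Nat.div_le_div_right (by omega)
    rwa [Nat.add_div_right _ hn] at h3
  have d2 : (p + j) / n ≤ (p + i) / n + 1 := by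
    have h3 : (p + j) / n ≤ (p + i + n) / n := Nat.div_le_div_right (by omega)
    rwa [Nat.add_div_right _ hn] at h3
  have hc : (p + i) / n = (p + j) / n ∨ (p + i) / n = (p + j) / n + 1 ∨
      (p + j) / n = (p + i) / n + 1 := by omega
  rcases hc with hc | hc | hc
  · rw [hc] at h1; omega
  · rw [hc, Nat.mul_add, Nat.mul_one] at h1; omega
  · rw [hc, Nat.mul_add, Nat.mul_one] at h2; omega

lemma interval_card {n r : ℕ} (hn : 0 < n) (hrn : r ≤ n) (p : ℕ) :
    (interval n r hn p).card = r := by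
  rw [interval, Finset.card_image_of_injOn, Finset.card_range]
  intro i hi j hj hij
  simp only [Finset.coe_range, Set.mem_Iio] at hi hj
  have : (p + i) % n = (p + j) % n := by
    have := congrArg Fin.val hij
    simpa using this
  exact add_mod_inj hn (by omega) (by omega) this

lemma interval_disjoint {n r a b : ℕ} (hn : 0 < n) (hr : 1 ≤ r) (hrn : r ≤ n)
    (ha : a < n) (hb : b < n) (h : NDisj n r a b) :
    Disjoint (interval n r hn a) (interval n r hn b) := by
  rw [Finset.disjoint_left]
  intro x hxa hxb
  simp only [interval, Finset.mem_image, Finset.mem_range] at hxa hxb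
  obtain ⟨i, hi, hie⟩ := hxa
  obtain ⟨j, hj, hje⟩ := hxb
  have hmod : (a + i) % n = (b + j) % n := by
    have := congrArg Fin.val (hie.trans hje.symm)
    simpa using this
  have h1 := Nat.mod_add_div (a + i) n
  have h2 := Nat.mod_add_div (b + j) n
  rw [hmod] at h1
  have hk1 : (a + i) / n ≤ 1 := by
    have : (a + i) / n < 2 := Nat.div_lt_of_lt_mul (by omega)
    omega
  have hk2 : (b + j) / n ≤ 1 := by
    have : (b + j) / n < 2 := Nat.div_lt_of_lt_mul (by omega)
    omega
  have hc1 : (a + i) / n = 0 ∨ (a + i) / n = 1 := Nat.le_one_iff_eq_zero_or_eq_one.mp hk1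
  have hc2 : (b + j) / n = 0 ∨ (b + j) / n = 1 := Nat.le_one_iff_eq_zero_or_eq_one.mp hk2
  rcases h with ⟨hA, hB⟩ | ⟨hA, hB⟩ <;>
    (rcases hc1 with hc1 | hc1 <;> rcases hc2 with hc2 | hc2 <;>
      rw [hc1] at h1 <;> rw [hc2] at h2 <;>
      simp only [Nat.mul_zero, Nat.mul_one] at h1 h2 <;> omega)

/-- There is a permutation carrying any finset to any other of the same size. -/
lemma exists_perm_image {α : Type*} [Fintype α] [DecidableEq α] {A B : Finset α}
    (h : A.card = B.card) : ∃ τ : Equiv.Perm α, A.image τ = B := by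
  have hc : Fintype.card {x // x ∈ A} = Fintype.card {x // x ∈ B} := by
    simpa using h
  have hc' : Fintype.card {x // ¬ x ∈ A} = Fintype.card {x // ¬ x ∈ B} := by
    rw [Fintype.card_subtype_compl, Fintype.card_subtype_compl, hc]
  refine ⟨Equiv.subtypeCongr (Fintype.equivOfCardEq hc) (Fintype.equivOfCardEq hc'), ?_⟩
  have hsub : A.image (Equiv.subtypeCongr (Fintype.equivOfCardEq hc)
      (Fintype.equivOfCardEq hc')) ⊆ B := by
    intro y hy
    obtain ⟨x, hx, rfl⟩ := Finset.mem_image.mp hy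
    have : (Equiv.subtypeCongr (Fintype.equivOfCardEq hc) (Fintype.equivOfCardEq hc')) x
        = ((Fintype.equivOfCardEq hc) ⟨x, hx⟩ : {x // x ∈ B}) := by
      simp [Equiv.subtypeCongr, Equiv.sumCompl_symm_apply_of_pos hx]
    rw [this]
    exact ((Fintype.equivOfCardEq hc) ⟨x, hx⟩).2
  apply Finset.eq_of_subset_of_card_le hsub
  rw [Finset.card_image_of_injective _ (Equiv.injective _), h]

/-- Number of permutations mapping a fixed arc onto a fixed `r`-set. -/
lemma fiber_count {n r : ℕ} (hn : 0 < n) (hr : 1 ≤ r) (hrn : r ≤ n) (p : ℕ)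
    (A : Finset (Fin n)) (hA : A.card = r) :
    (Finset.univ.filter
        (fun σ : Equiv.Perm (Fin n) => (interval n r hn p).image σ = A)).card
      * n.choose r = n.factorial := by
  classical
  set I := interval n r hn p with hI
  have hIcard : I.card = r := interval_card hn hrn p
  -- uniformity of fibers
  have uniform : ∀ B : Finset (Fin n), B.card = r →
      (Finset.univ.filter (fun σ : Equiv.Perm (Fin n) => I.image σ = B)).card =
      (Finset.univ.filter (fun σ : Equiv.Perm (Fin n) => I.image σ = A)).card := by
    intro B hB
    obtain ⟨τ, hτ⟩ := exists_perm_image (hB.trans hA.symm)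
    refine Finset.card_bij' (fun σ _ => σ.trans τ) (fun σ' _ => σ'.trans τ.symm) ?_ ?_ ?_ ?_
    · intro σ hσ
      simp only [Finset.mem_filter, Finset.mem_univ, true_and] at hσ ⊢
      rw [Equiv.coe_trans, ← Finset.image_image, hσ, hτ]
    · intro σ' hσ'
      simp only [Finset.mem_filter, Finset.mem_univ, true_and] at hσ' ⊢
      rw [Equiv.coe_trans, ← Finset.image_image, hσ']
      rw [← hτ, Finset.image_image]
      simp
    · intro σ _
      ext x; simp
    · intro σ _
      ext x; simp
  -- partition of all permutations by the image of I
  have partition : ∑ B ∈ Finset.powersetCard r (Finset.univ : Finset (Fin n)),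
      (Finset.univ.filter (fun σ : Equiv.Perm (Fin n) => I.image σ = B)).card
      = n.factorial := by
    rw [← Finset.card_eq_sum_card_fiberwise (f := fun σ : Equiv.Perm (Fin n) => I.image σ)
      (by
        intro σ _
        simp only [Finset.mem_coe]
        rw [Finset.mem_powersetCard_univ, Finset.card_image_of_injective _ (Equiv.injective σ),
          hIcard])]
    rw [Finset.card_univ, Fintype.card_perm, Fintype.card_fin]
  have hconst : ∑ B ∈ Finset.powersetCard r (Finset.univ : Finset (Fin n)),
      (Finset.univ.filter (fun σ : Equiv.Perm (Fin n) => I.image σ = B)).card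
      = n.choose r *
        (Finset.univ.filter (fun σ : Equiv.Perm (Fin n) => I.image σ = A)).card := by
    rw [Finset.sum_congr rfl (fun B hB => uniform B (Finset.mem_powersetCard_univ.mp hB)),
      Finset.sum_const, Finset.card_powersetCard, Finset.card_univ, Fintype.card_fin,
      smul_eq_mul]
  rw [Nat.mul_comm] at hconst
  omega


def arcP (n r : ℕ) (hn : 0 < n) (σ : Equiv.Perm (Fin n)) (p : ℕ) : Finset (Fin n) :=
  (interval n r hn p).image σ

lemma arcP_card {n r : ℕ} (hn : 0 < n) (hrn : r ≤ n) (σ : Equiv.Perm (Fin n)) (p : ℕ) :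
    (arcP n r hn σ p).card = r := by
  rw [arcP, Finset.card_image_of_injective _ (Equiv.injective σ), interval_card hn hrn]

lemma fiber_count' {n r : ℕ} (hn : 0 < n) (hr : 1 ≤ r) (hrn : r ≤ n) (p : ℕ)
    (A : Finset (Fin n)) (hA : A.card = r) :
    (Finset.univ.filter
        (fun σ : Equiv.Perm (Fin n) => arcP n r hn σ p = A)).card
      * n.choose r = n.factorial :=
  fiber_count hn hr hrn p A hA

end LEKR

/-- **Localized Erdős–Ko–Rado / matching theorem.** Let `𝒜` be a family of `r`-element subsets
of `[n]`. For `A ∈ 𝒜` let `m A = n/r` (as a rational) if `A` lies in a matching of `⌊n/r⌋` sets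
from `𝒜`, and otherwise let `m A` be the size of the largest matching in `𝒜` containing `A`.
Then `∑_{A ∈ 𝒜} 1/m(A) ≤ C(n-1, r-1)`. -/
theorem localized_EKR {n r : ℕ} (hr : 1 ≤ r) (hrn : r ≤ n)
    (𝒜 : Finset (Finset (Fin n))) (h𝒜 : ∀ A ∈ 𝒜, A.card = r)
    (m : Finset (Fin n) → ℚ)
    (hm1 : ∀ A ∈ 𝒜,
      (∃ M : Finset (Finset (Fin n)), M ⊆ 𝒜 ∧
          (M : Set (Finset (Fin n))).Pairwise (fun A B => Disjoint A B) ∧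
          A ∈ M ∧ M.card = n / r) →
      m A = (n : ℚ) / (r : ℚ))
    (hm2 : ∀ A ∈ 𝒜,
      (¬ ∃ M : Finset (Finset (Fin n)), M ⊆ 𝒜 ∧
          (M : Set (Finset (Fin n))).Pairwise (fun A B => Disjoint A B) ∧
          A ∈ M ∧ M.card = n / r) →
      ∃ k : ℕ, m A = (k : ℚ) ∧
        IsGreatest {j : ℕ | ∃ M : Finset (Finset (Fin n)), M ⊆ 𝒜 ∧
          (M : Set (Finset (Fin n))).Pairwise (fun A B => Disjoint A B) ∧
          A ∈ M ∧ M.card = j} k) :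
    ∑ A ∈ 𝒜, 1 / m A ≤ ((n - 1).choose (r - 1) : ℚ) := by
  classical
  have hn : 0 < n := lt_of_lt_of_le hr hrn
  -- Per-cycle bound via the cycle lemma
  have per : ∀ σ : Equiv.Perm (Fin n),
      ∑ p ∈ Finset.range n,
        (if LEKR.arcP n r hn σ p ∈ 𝒜 then 1 / m (LEKR.arcP n r hn σ p) else 0) ≤ (r : ℚ) := by
    intro σ
    rw [← Finset.sum_filter]
    set S := (Finset.range n).filter (fun p => LEKR.arcP n r hn σ p ∈ 𝒜) with hSdef
    have hSmem : ∀ p ∈ S, p < n ∧ LEKR.arcP n r hn σ p ∈ 𝒜 := by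
      intro p hp
      rw [hSdef, Finset.mem_filter, Finset.mem_range] at hp
      exact hp
    have hlift : ∀ M : Finset ℕ, M ⊆ S → (M : Set ℕ).Pairwise (LEKR.NDisj n r) →
        ∀ p ∈ M, ∃ 𝒩 : Finset (Finset (Fin n)), 𝒩 ⊆ 𝒜 ∧
          (𝒩 : Set (Finset (Fin n))).Pairwise (fun A B => Disjoint A B) ∧
          LEKR.arcP n r hn σ p ∈ 𝒩 ∧ 𝒩.card = M.card ∧ M.card * r ≤ n := by
      intro M hMS hpair p hpM
      have hdisj : ∀ a ∈ M, ∀ b ∈ M, a ≠ b →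
          Disjoint (LEKR.arcP n r hn σ a) (LEKR.arcP n r hn σ b) := by
        intro a ha b hb hab
        have h := hpair (Finset.mem_coe.mpr ha) (Finset.mem_coe.mpr hb) hab
        exact (Finset.disjoint_image (Equiv.injective σ)).mpr
          (LEKR.interval_disjoint hn hr hrn (hSmem a (hMS ha)).1 (hSmem b (hMS hb)).1 h)
      have hinj : Set.InjOn (LEKR.arcP n r hn σ) M := by
        intro a ha b hb hab
        by_contra hne
        have hd := hdisj a (Finset.mem_coe.mp ha) b (Finset.mem_coe.mp hb) hne
        rw [hab] at hd
        have hemp : LEKR.arcP n r hn σ b = ∅ := by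
          simpa using disjoint_self.mp hd
        have hcb := LEKR.arcP_card hn hrn σ b
        rw [hemp] at hcb
        simp only [Finset.card_empty] at hcb
        omega
      refine ⟨M.image (LEKR.arcP n r hn σ), ?_, ?_, ?_, ?_, ?_⟩
      · intro X hX
        obtain ⟨a, ha, rfl⟩ := Finset.mem_image.mp hX
        exact (hSmem a (hMS ha)).2
      · intro X hX Y hY hXY
        simp only [Finset.coe_image, Set.mem_image, Finset.mem_coe] at hX hY
        obtain ⟨a, ha, rfl⟩ := hX
        obtain ⟨b, hb, rfl⟩ := hY
        exact hdisj a ha b hb (fun h => hXY (by rw [h]))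
      · exact Finset.mem_image_of_mem _ hpM
      · exact Finset.card_image_of_injOn hinj
      · have hpd : ∀ X ∈ M.image (LEKR.arcP n r hn σ), ∀ Y ∈ M.image (LEKR.arcP n r hn σ),
            X ≠ Y → Disjoint (id X) (id Y) := by
          intro X hX Y hY hXY
          obtain ⟨a, ha, rfl⟩ := Finset.mem_image.mp hX
          obtain ⟨b, hb, rfl⟩ := Finset.mem_image.mp hY
          exact hdisj a ha b hb (fun h => hXY (by rw [h]))
        have hbu := Finset.card_biUnion hpd
        have hsum : ∑ X ∈ M.image (LEKR.arcP n r hn σ), (id X).card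
            = (M.image (LEKR.arcP n r hn σ)).card * r := by
          rw [Finset.sum_congr rfl (fun X hX => ?_), Finset.sum_const, smul_eq_mul]
          obtain ⟨a, _, rfl⟩ := Finset.mem_image.mp hX
          exact LEKR.arcP_card hn hrn σ a
        have hle : ((M.image (LEKR.arcP n r hn σ)).biUnion id).card ≤ n := by
          have h := Finset.card_le_univ ((M.image (LEKR.arcP n r hn σ)).biUnion id)
          rwa [Fintype.card_fin] at h
        rw [hbu, hsum, Finset.card_image_of_injOn hinj] at hle
        exact hle
    apply LEKR.cycle_lemma n r hr hrn S (fun p hp => (hSmem p hp).1)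
      (fun p => 1 / m (LEKR.arcP n r hn σ p))
    · -- H1
      intro p hp M hMS hpM hpair
      obtain ⟨𝒩, h𝒩𝒜, h𝒩p, hA𝒩, h𝒩card, hMr⟩ := hlift M hMS hpair p hpM
      have hA𝒜 : LEKR.arcP n r hn σ p ∈ 𝒜 := (hSmem p hp).2
      have hM1 : 0 < M.card := Finset.card_pos.mpr ⟨p, hpM⟩
      by_cases hg : ∃ Mg : Finset (Finset (Fin n)), Mg ⊆ 𝒜 ∧
          (Mg : Set (Finset (Fin n))).Pairwise (fun A B => Disjoint A B) ∧
          LEKR.arcP n r hn σ p ∈ Mg ∧ Mg.card = n / r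
      · rw [hm1 _ hA𝒜 hg, one_div_div]
        rw [div_le_div_iff₀ (by exact_mod_cast hn) (by exact_mod_cast hM1)]
        rw [one_mul, mul_comm]
        exact_mod_cast hMr
      · obtain ⟨k, hmk, hkg⟩ := hm2 _ hA𝒜 hg
        have hkM : M.card ≤ k := hkg.2 ⟨𝒩, h𝒩𝒜, h𝒩p, hA𝒩, h𝒩card⟩
        rw [hmk]
        apply one_div_le_one_div_of_le (by exact_mod_cast hM1)
        exact_mod_cast hkM
    · -- H2
      rintro p hp ⟨M, hMS, hpM, hpair, hMq⟩
      obtain ⟨𝒩, h𝒩𝒜, h𝒩p, hA𝒩, h𝒩card, _⟩ := hlift M hMS hpair p hpM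
      have hA𝒜 : LEKR.arcP n r hn σ p ∈ 𝒜 := (hSmem p hp).2
      rw [hm1 _ hA𝒜 ⟨𝒩, h𝒩𝒜, h𝒩p, hA𝒩, by rw [h𝒩card, hMq]⟩, one_div_div]
  -- total over all permutations
  have total : ∑ σ : Equiv.Perm (Fin n), ∑ p ∈ Finset.range n,
      (if LEKR.arcP n r hn σ p ∈ 𝒜 then 1 / m (LEKR.arcP n r hn σ p) else 0)
      ≤ (n.factorial : ℚ) * r := by
    calc ∑ σ : Equiv.Perm (Fin n), ∑ p ∈ Finset.range n,
        (if LEKR.arcP n r hn σ p ∈ 𝒜 then 1 / m (LEKR.arcP n r hn σ p) else 0)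
        ≤ ∑ _σ : Equiv.Perm (Fin n), (r : ℚ) := Finset.sum_le_sum (fun σ _ => per σ)
      _ = (n.factorial : ℚ) * r := by
          rw [Finset.sum_const, Finset.card_univ, Fintype.card_perm, Fintype.card_fin,
            nsmul_eq_mul]
  -- rewrite the double sum as a sum over 𝒜
  have swap : ∑ σ : Equiv.Perm (Fin n), ∑ p ∈ Finset.range n,
      (if LEKR.arcP n r hn σ p ∈ 𝒜 then 1 / m (LEKR.arcP n r hn σ p) else 0)
      = ∑ A ∈ 𝒜, (1 / m A) *
        ((∑ p ∈ Finset.range n,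
          (Finset.univ.filter (fun σ : Equiv.Perm (Fin n) =>
            LEKR.arcP n r hn σ p = A)).card : ℕ) : ℚ) := by
    calc ∑ σ : Equiv.Perm (Fin n), ∑ p ∈ Finset.range n,
        (if LEKR.arcP n r hn σ p ∈ 𝒜 then 1 / m (LEKR.arcP n r hn σ p) else 0)
        = ∑ σ : Equiv.Perm (Fin n), ∑ p ∈ Finset.range n, ∑ A ∈ 𝒜,
          (if LEKR.arcP n r hn σ p = A then 1 / m A else 0) := by
          refine Finset.sum_congr rfl (fun σ _ => Finset.sum_congr rfl (fun p _ => ?_))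
          rw [Finset.sum_ite_eq 𝒜 (LEKR.arcP n r hn σ p) (fun A => 1 / m A)]
      _ = ∑ σ : Equiv.Perm (Fin n), ∑ A ∈ 𝒜, ∑ p ∈ Finset.range n,
          (if LEKR.arcP n r hn σ p = A then 1 / m A else 0) :=
          Finset.sum_congr rfl (fun σ _ => Finset.sum_comm)
      _ = ∑ A ∈ 𝒜, ∑ σ : Equiv.Perm (Fin n), ∑ p ∈ Finset.range n,
          (if LEKR.arcP n r hn σ p = A then 1 / m A else 0) := Finset.sum_comm
      _ = ∑ A ∈ 𝒜, (1 / m A) *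
          ((∑ p ∈ Finset.range n,
            (Finset.univ.filter (fun σ : Equiv.Perm (Fin n) =>
              LEKR.arcP n r hn σ p = A)).card : ℕ) : ℚ) := by
          refine Finset.sum_congr rfl (fun A _ => ?_)
          push_cast
          rw [Finset.mul_sum, Finset.sum_comm]
          refine Finset.sum_congr rfl (fun p _ => ?_)
          rw [← Finset.sum_boole, Finset.mul_sum]
          refine Finset.sum_congr rfl (fun τ _ => ?_)
          by_cases h : LEKR.arcP n r hn τ p = A <;> simp [h]
  -- counting identity
  have hNA : ∀ A ∈ 𝒜, (∑ p ∈ Finset.range n,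
      (Finset.univ.filter (fun σ : Equiv.Perm (Fin n) =>
        LEKR.arcP n r hn σ p = A)).card) * n.choose r = n * n.factorial := by
    intro A hA
    rw [Finset.sum_mul,
      Finset.sum_congr rfl (fun p _ => LEKR.fiber_count' hn hr hrn p A (h𝒜 A hA)),
      Finset.sum_const, Finset.card_range, smul_eq_mul]
  have hC0 : (0:ℚ) < (n.choose r : ℚ) := by exact_mod_cast Nat.choose_pos hrn
  have hNAq : ∀ A ∈ 𝒜, ((∑ p ∈ Finset.range n,
      (Finset.univ.filter (fun σ : Equiv.Perm (Fin n) =>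
        LEKR.arcP n r hn σ p = A)).card : ℕ) : ℚ)
      = ((n : ℚ) * (n.factorial : ℚ)) / (n.choose r : ℚ) := by
    intro A hA
    rw [eq_div_iff (ne_of_gt hC0)]
    exact_mod_cast hNA A hA
  rw [swap] at total
  have total2 : (∑ A ∈ 𝒜, 1 / m A) * (((n : ℚ) * (n.factorial : ℚ)) / (n.choose r : ℚ))
      ≤ (n.factorial : ℚ) * r := by
    rw [Finset.sum_mul]
    calc ∑ A ∈ 𝒜, (1 / m A) * (((n : ℚ) * (n.factorial : ℚ)) / (n.choose r : ℚ))
        = ∑ A ∈ 𝒜, (1 / m A) *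
          ((∑ p ∈ Finset.range n,
            (Finset.univ.filter (fun σ : Equiv.Perm (Fin n) =>
              LEKR.arcP n r hn σ p = A)).card : ℕ) : ℚ) :=
          Finset.sum_congr rfl (fun A hA => by rw [hNAq A hA])
      _ ≤ (n.factorial : ℚ) * r := total
  have hfac0 : (0:ℚ) < (n.factorial : ℚ) := by exact_mod_cast Nat.factorial_pos n
  have hn0 : (0:ℚ) < (n:ℚ) := by exact_mod_cast hn
  have hpos : (0:ℚ) < ((n : ℚ) * (n.factorial : ℚ)) / (n.choose r : ℚ) :=
    div_pos (mul_pos hn0 hfac0) hC0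
  have final1 : ∑ A ∈ 𝒜, 1 / m A
      ≤ ((n.factorial : ℚ) * r) / (((n : ℚ) * (n.factorial : ℚ)) / (n.choose r : ℚ)) :=
    (le_div_iff₀ hpos).mpr total2
  have hNat : n * ((n-1).choose (r-1)) = n.choose r * r := by
    have h := Nat.add_one_mul_choose_eq (n-1) (r-1)
    rw [(by omega : n - 1 + 1 = n), (by omega : r - 1 + 1 = r)] at h
    exact h
  have hNatq : (n : ℚ) * (((n-1).choose (r-1) : ℕ) : ℚ) = (n.choose r : ℚ) * r := by
    exact_mod_cast hNat
  have heq : ((n.factorial : ℚ) * r) / (((n : ℚ) * (n.factorial : ℚ)) / (n.choose r : ℚ))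
      = (((n-1).choose (r-1) : ℕ) : ℚ) := by
    field_simp
    linear_combination (-1 : ℚ) * hNatq
  rw [heq] at final1
  exact final1
end

section
/- Let r < n/2 and let 𝒜 be a family of r-element subsets of {1,…,n}. Let 𝒮 be the subfamily of sets A ∈ 𝒜 such that A intersects every member of 𝒜, and let 𝒯 = 𝒜 \ 𝒮. Then |𝒮| + (r/n)·|𝒯| ≤ C(n-1, r-1). -/
open Finset

section BorgEKR

variable {n r : ℕ}

/-- The arc of indices `{j, j+1, ..., j+r-1}` in `ZMod n`. -/
def arcIdx (r : ℕ) {n : ℕ} (j : ZMod n) : Finset (ZMod n) :=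
  (Finset.range r).image (fun i : ℕ => j + (i : ZMod n))

lemma mem_arcIdx [NeZero n] (hrn : r < n) (j x : ZMod n) :
    x ∈ arcIdx r j ↔ (x - j).val < r := by
  constructor
  · rintro hx
    simp only [arcIdx, mem_image, mem_range] at hx
    obtain ⟨i, hi, rfl⟩ := hx
    rw [add_sub_cancel_left, ZMod.val_cast_of_lt (lt_trans hi hrn)]
    exact hi
  · intro h
    simp only [arcIdx, mem_image, mem_range]
    exact ⟨(x - j).val, h, by rw [ZMod.natCast_zmod_val, add_sub_cancel]⟩

lemma arcIdx_card [NeZero n] (hrn : r < n) (j : ZMod n) : (arcIdx r j).card = r := by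
  rw [arcIdx, card_image_of_injOn, card_range]
  intro a ha b hb hab
  simp only [coe_range, Set.mem_Iio] at ha hb
  have := add_left_cancel hab
  have ha' := ZMod.val_cast_of_lt (n := n) (lt_trans ha hrn)
  have hb' := ZMod.val_cast_of_lt (n := n) (lt_trans hb hrn)
  rw [← ha', ← hb', this]

lemma arcIdx_inter [NeZero n] (hrn : r < n) (j j' : ZMod n) :
    (arcIdx r j ∩ arcIdx r j').Nonempty ↔ (j - j').val < r ∨ (j' - j).val < r := by
  constructor
  · rintro ⟨y, hy⟩
    rw [mem_inter, mem_arcIdx hrn, mem_arcIdx hrn] at hy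
    obtain ⟨h1, h2⟩ := hy
    rcases le_total ((y - j').val) ((y - j).val) with h | h
    · right
      have : y - j' = ((y - j').val : ZMod n) := (ZMod.natCast_zmod_val _).symm
      have hj : j' - j = (((y - j).val - (y - j').val : ℕ) : ZMod n) := by
        push_cast [Nat.cast_sub h]
        rw [ZMod.natCast_zmod_val, ZMod.natCast_zmod_val]
        ring
      rw [hj, ZMod.val_cast_of_lt (by omega)]
      omega
    · left
      have hj : j - j' = (((y - j').val - (y - j).val : ℕ) : ZMod n) := by
        push_cast [Nat.cast_sub h]
        rw [ZMod.natCast_zmod_val, ZMod.natCast_zmod_val]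
        ring
      rw [hj, ZMod.val_cast_of_lt (by omega)]
      omega
  · intro h
    rcases h with h | h
    · exact ⟨j, by rw [mem_inter, mem_arcIdx hrn, mem_arcIdx hrn, sub_self, ZMod.val_zero]; omega⟩
    · exact ⟨j', by rw [mem_inter, mem_arcIdx hrn, mem_arcIdx hrn, sub_self, ZMod.val_zero]; omega⟩

lemma val_sub_lt_aux [NeZero n] (hrn : 2 * r < n) {x b b' : ZMod n}
    (hb : r ≤ (x - b).val) (hb' : r ≤ (x - b').val) (h : (b - b').val < r) :
    (x - b).val ≤ (x - b').val ∧ (x - b').val < (x - b).val + r := by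
  have hbn : (x - b).val < n := ZMod.val_lt _
  have hb'n : (x - b').val < n := ZMod.val_lt _
  rcases le_or_gt ((x - b).val) ((x - b').val) with hle | hlt
  · have hbb' : b - b' = (((x - b').val - (x - b).val : ℕ) : ZMod n) := by
      push_cast [Nat.cast_sub hle]
      rw [ZMod.natCast_zmod_val, ZMod.natCast_zmod_val]
      ring
    rw [hbb', ZMod.val_cast_of_lt (by omega)] at h
    omega
  · exfalso
    have hbb' : b - b' = ((n - ((x - b).val - (x - b').val) : ℕ) : ZMod n) := by
      push_cast [Nat.cast_sub (by omega : (x - b).val - (x - b').val ≤ n),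
        Nat.cast_sub (le_of_lt hlt)]
      rw [ZMod.natCast_zmod_val, ZMod.natCast_zmod_val, ZMod.natCast_self]
      ring
    rw [hbb', ZMod.val_cast_of_lt (by omega)] at h
    omega

lemma perpoint [NeZero n] (hr : 0 < r) (hrn : 2 * r < n) (S T : Finset (ZMod n))
    (hd : Disjoint S T)
    (hST : ∀ b ∈ S, ∀ j ∈ S ∪ T, (arcIdx r b ∩ arcIdx r j).Nonempty)
    (x : ZMod n) :
    S.card + (T.filter (fun j => x ∈ arcIdx r j)).card ≤ r := by
  have hrn' : r < n := by omega
  set thr : Finset (ZMod n) := (Finset.range r).image (fun i : ℕ => x - (i : ZMod n)) with hthr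
  have mem_thr : ∀ j, j ∈ thr ↔ (x - j).val < r := by
    intro j
    constructor
    · rintro hj
      simp only [hthr, mem_image, mem_range] at hj
      obtain ⟨i, hi, rfl⟩ := hj
      rw [sub_sub_cancel, ZMod.val_cast_of_lt (lt_trans hi hrn')]
      exact hi
    · intro h
      simp only [hthr, mem_image, mem_range]
      exact ⟨(x - j).val, h, by rw [ZMod.natCast_zmod_val, sub_sub_cancel]⟩
  have thr_card : thr.card = r := by
    rw [hthr, card_image_of_injOn, card_range]
    intro a ha b hb hab
    simp only [coe_range, Set.mem_Iio] at ha hb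
    have h2 : ((a : ZMod n)) = (b : ZMod n) := sub_right_injective hab
    have ha' := ZMod.val_cast_of_lt (n := n) (lt_trans ha hrn')
    have hb' := ZMod.val_cast_of_lt (n := n) (lt_trans hb hrn')
    rw [← ha', ← hb', h2]
  set U : Finset (ZMod n) := (S ∪ T).filter (fun j => (x - j).val < r) with hU
  have hUthr : U ⊆ thr := by
    intro j hj
    rw [mem_thr]
    exact (mem_filter.1 hj).2
  set K : Finset (ZMod n) := S.filter (fun b => ¬ (x - b).val < r) with hK
  have hKS : K ⊆ S := filter_subset _ _
  have hsplit : S.card = (S.filter (fun b => (x - b).val < r)).card + K.card := by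
    rw [hK]
    exact (card_filter_add_card_filter_not (fun b => (x - b).val < r)).symm
  have hTfilter : T.filter (fun j => x ∈ arcIdx r j) = T.filter (fun j => (x - j).val < r) := by
    apply filter_congr
    intro j _
    simp [mem_arcIdx hrn']
  have hUcard : U.card = (S.filter (fun b => (x - b).val < r)).card
      + (T.filter (fun j => (x - j).val < r)).card := by
    rw [hU, filter_union]
    exact card_union_of_disjoint (disjoint_filter_filter hd)
  have hthrU : (thr \ U).card + U.card = r := by
    rw [card_sdiff_add_card_eq_card hUthr, thr_card]
  suffices hKcard : K.card ≤ (thr \ U).card by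
    rw [hsplit, hTfilter]
    omega
  rcases K.eq_empty_or_nonempty with hKe | hKne
  · simp [hKe]
  obtain ⟨b0, hb0K, hb0M⟩ := Finset.exists_mem_eq_sup K hKne (fun b => (x - b).val)
  set M : ℕ := K.sup (fun b => (x - b).val) with hM
  have hdr : ∀ b ∈ K, r ≤ (x - b).val := by
    intro b hb
    have := (mem_filter.1 hb).2
    omega
  have hdn : ∀ b ∈ K, (x - b).val < n := fun b _ => ZMod.val_lt _
  have hdM : ∀ b ∈ K, (x - b).val ≤ M := fun b hb => Finset.le_sup (f := fun b => (x - b).val) hb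
  have span : ∀ b ∈ K, ∀ b' ∈ K, (x - b').val < (x - b).val + r := by
    intro b hb b' hb'
    have hne := hST b (hKS hb) b' (mem_union_left _ (hKS hb'))
    rw [arcIdx_inter hrn'] at hne
    rcases hne with h | h
    · exact (val_sub_lt_aux hrn (hdr b hb) (hdr b' hb') h).2
    · have := (val_sub_lt_aux hrn (hdr b' hb') (hdr b hb) h).1
      omega
  set m : ℕ := max r (M + 1 - r) with hm
  have ham : ∀ b ∈ K, m ≤ (x - b).val := by
    intro b hb
    have h1 := hdr b hb
    have h2 := span b hb b0 hb0K
    rw [← hb0M] at h2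
    exact max_le h1 (by omega)
  have hmr : r ≤ m := le_max_left _ _
  have hmnr : m ≤ n - r := by
    have h := hdn b0 hb0K
    rw [← hb0M] at h
    exact max_le (by omega) (by omega)
  have hmn : m < n := by omega
  set φ : ZMod n → ZMod n := fun b => x - (((x - b).val - m : ℕ) : ZMod n) with hφ
  have key : ∀ b ∈ K, (x - φ b).val = (x - b).val - m ∧ (φ b - b).val = m
      ∧ (b - φ b).val = n - m := by
    intro b hb
    have ha : (x - b).val - m < r := by
      have := hdM b hb
      have := ham b hb
      omega
    have hφb : φ b = x - (((x - b).val - m : ℕ) : ZMod n) := rfl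
    have h1 : (((x - b).val - m : ℕ) : ZMod n) = (((x - b).val : ℕ) : ZMod n) - (m : ZMod n) := by
      push_cast [Nat.cast_sub (ham b hb)]
      ring
    have h2 : (((x - b).val : ℕ) : ZMod n) = x - b := ZMod.natCast_zmod_val _
    refine ⟨?_, ?_, ?_⟩
    · rw [hφb, sub_sub_cancel, ZMod.val_cast_of_lt (by omega)]
    · have h4 : φ b - b = ((m : ℕ) : ZMod n) := by
        rw [hφb, h1, h2]
        ring
      rw [h4, ZMod.val_cast_of_lt hmn]
    · have h3 : ((n - m : ℕ) : ZMod n) = - (m : ZMod n) := by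
        push_cast [Nat.cast_sub (le_of_lt hmn)]
        simp
      have h4 : b - φ b = ((n - m : ℕ) : ZMod n) := by
        rw [hφb, h1, h2, h3]
        ring
      rw [h4, ZMod.val_cast_of_lt (by omega)]
  apply Finset.card_le_card_of_injOn φ
  · intro b hb
    obtain ⟨k1, k2, k3⟩ := key b hb
    rw [Finset.mem_coe, mem_sdiff]
    constructor
    · rw [mem_thr, k1]
      have := hdM b hb
      have := ham b hb
      omega
    · intro hUmem
      have hmem : φ b ∈ S ∪ T := (mem_filter.1 hUmem).1
      have hne := hST b (hKS hb) (φ b) hmem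
      rw [arcIdx_inter hrn'] at hne
      rcases hne with h | h
      · rw [k3] at h; omega
      · rw [k2] at h; omega
  · intro b hb b' hb' heq
    obtain ⟨k1, _, _⟩ := key b hb
    obtain ⟨k1', _, _⟩ := key b' hb'
    have hdd : (x - b).val = (x - b').val := by
      have hh : (x - φ b).val = (x - φ b').val := by rw [heq]
      rw [k1, k1'] at hh
      have := ham b hb
      have := ham b' hb'
      omega
    have hb1 : b = x - (((x - b).val : ℕ) : ZMod n) := by
      rw [ZMod.natCast_zmod_val, sub_sub_cancel]
    have hb2 : b' = x - (((x - b').val : ℕ) : ZMod n) := by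
      rw [ZMod.natCast_zmod_val, sub_sub_cancel]
    rw [hb1, hb2, hdd]

/-- There is a permutation carrying any finset onto any equicardinal finset. -/
lemma exists_perm_image {α : Type*} [Fintype α] [DecidableEq α] {s t : Finset α}
    (h : s.card = t.card) : ∃ σ : Equiv.Perm α, s.image σ = t := by
  classical
  let e : {x // x ∈ s} ≃ {x // x ∈ t} := Finset.equivOfCardEq h
  refine ⟨e.extendSubtype, ?_⟩
  apply Finset.eq_of_subset_of_card_le
  · intro a ha
    obtain ⟨b, hb, rfl⟩ := Finset.mem_image.1 ha
    exact e.extendSubtype_mem b hb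
  · rw [Finset.card_image_of_injective _ e.extendSubtype.injective, h]

/-- The image family map. -/
noncomputable def Farc (r : ℕ) {n : ℕ} (g : ZMod n ≃ Fin n) (σ : Equiv.Perm (Fin n))
    (j : ZMod n) : Finset (Fin n) :=
  (arcIdx r j).image (fun z => σ (g z))

lemma Farc_card [NeZero n] (hrn : r < n) (g : ZMod n ≃ Fin n) (σ : Equiv.Perm (Fin n))
    (j : ZMod n) : (Farc r g σ j).card = r := by
  have hinj : Function.Injective (fun z : ZMod n => σ (g z)) :=
    fun a b h => g.injective (σ.injective h)
  rw [Farc, Finset.card_image_of_injective _ hinj, arcIdx_card hrn]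

lemma Farc_eq_image [NeZero n] (g : ZMod n ≃ Fin n) (σ : Equiv.Perm (Fin n)) (j : ZMod n) :
    Farc r g σ j = ((arcIdx r j).image g).image σ := by
  rw [Farc, Finset.image_image]
  rfl

lemma image_mul_perm {α : Type*} [DecidableEq α] (π τ : Equiv.Perm α) (s : Finset α) :
    s.image ⇑(π * τ) = (s.image ⇑τ).image ⇑π := by
  rw [Finset.image_image]
  rfl

lemma image_inv_of_image {α : Type*} [DecidableEq α] (π : Equiv.Perm α) {s t : Finset α}
    (h : s.image ⇑π = t) : t.image ⇑π⁻¹ = s := by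
  rw [← h, Finset.image_image]
  simp only [Equiv.Perm.inv_def, Equiv.symm_comp_self, Finset.image_id]

/-- Fiber count: the number of permutations σ with `Farc r g σ j = A` times `C(n,r)` is `n!`. -/
lemma fiber_count [NeZero n] (hrn : r < n) (g : ZMod n ≃ Fin n) (j : ZMod n)
    (A : Finset (Fin n)) (hA : A.card = r) :
    (univ.filter fun σ : Equiv.Perm (Fin n) => Farc r g σ j = A).card * n.choose r
      = n.factorial := by
  classical
  set B : Finset (Fin n) := (arcIdx r j).image g with hB
  have hBcard : B.card = r := by
    rw [hB, Finset.card_image_of_injective _ g.injective, arcIdx_card hrn]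
  have hfib : ∀ A' : Finset (Fin n), A'.card = r →
      (univ.filter fun σ : Equiv.Perm (Fin n) => Farc r g σ j = A').card
        = (univ.filter fun σ : Equiv.Perm (Fin n) => Farc r g σ j = A).card := by
    intro A' hA'
    obtain ⟨πA, hπA⟩ := exists_perm_image (hBcard.trans hA.symm)
    obtain ⟨πA', hπA'⟩ := exists_perm_image (hBcard.trans hA'.symm)
    apply Finset.card_nbij' (fun σ => πA * πA'⁻¹ * σ) (fun σ => πA' * πA⁻¹ * σ)
    · intro σ hσ
      rw [Finset.mem_coe, Finset.mem_filter] at hσ ⊢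
      refine ⟨Finset.mem_univ _, ?_⟩
      rw [Farc_eq_image, ← hB] at hσ ⊢
      obtain ⟨-, hσ⟩ := hσ
      beta_reduce
      rw [mul_assoc, image_mul_perm, image_mul_perm, hσ, image_inv_of_image πA' hπA', hπA]
    · intro σ hσ
      rw [Finset.mem_coe, Finset.mem_filter] at hσ ⊢
      refine ⟨Finset.mem_univ _, ?_⟩
      rw [Farc_eq_image, ← hB] at hσ ⊢
      obtain ⟨-, hσ⟩ := hσ
      beta_reduce
      rw [mul_assoc, image_mul_perm, image_mul_perm, hσ, image_inv_of_image πA hπA, hπA']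
    · intro σ _
      group
    · intro σ _
      group
  have hpart : (univ : Finset (Equiv.Perm (Fin n))).card
      = ∑ A' ∈ Finset.powersetCard r (univ : Finset (Fin n)),
          (univ.filter fun σ : Equiv.Perm (Fin n) => Farc r g σ j = A').card := by
    apply Finset.card_eq_sum_card_fiberwise
    intro σ _
    rw [Finset.mem_coe, Finset.mem_powersetCard_univ]
    exact Farc_card hrn g σ j
  have hconst : ∀ A' ∈ Finset.powersetCard r (univ : Finset (Fin n)),
      (univ.filter fun σ : Equiv.Perm (Fin n) => Farc r g σ j = A').card
        = (univ.filter fun σ : Equiv.Perm (Fin n) => Farc r g σ j = A).card :=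
    fun A' hA' => hfib A' (Finset.mem_powersetCard_univ.1 hA')
  rw [Finset.sum_congr rfl hconst, Finset.sum_const, Finset.card_powersetCard, smul_eq_mul] at hpart
  simp only [Finset.card_univ, Fintype.card_perm, Fintype.card_fin] at hpart
  rw [mul_comm, ← hpart]

lemma Farc_def {n r : ℕ} (g : ZMod n ≃ Fin n) (σ : Equiv.Perm (Fin n)) (j : ZMod n) :
    Farc r g σ j = (arcIdx r j).image (fun z => σ (g z)) := rfl

lemma per_sigma [NeZero n] (hr : 0 < r) (hrn : 2 * r < n) (g : ZMod n ≃ Fin n)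
    (𝒜 : Finset (Finset (Fin n))) (σ : Equiv.Perm (Fin n)) :
    n * (univ.filter fun j : ZMod n =>
          Farc r g σ j ∈ 𝒜.filter fun A => ∀ B ∈ 𝒜, (A ∩ B).Nonempty).card
      + r * (univ.filter fun j : ZMod n =>
          Farc r g σ j ∈ 𝒜 \ 𝒜.filter fun A => ∀ B ∈ 𝒜, (A ∩ B).Nonempty).card ≤ n * r := by
  classical
  have hrn' : r < n := by omega
  set 𝒮 : Finset (Finset (Fin n)) := 𝒜.filter fun A => ∀ B ∈ 𝒜, (A ∩ B).Nonempty with h𝒮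
  set Sσ : Finset (ZMod n) := univ.filter fun j => Farc r g σ j ∈ 𝒮 with hSσ
  set Tσ : Finset (ZMod n) := univ.filter fun j => Farc r g σ j ∈ 𝒜 \ 𝒮 with hTσ
  have hdis : Disjoint Sσ Tσ := by
    rw [Finset.disjoint_left]
    intro j hj hj'
    have h1 := (mem_filter.1 hj).2
    have h2 := (Finset.mem_sdiff.1 (mem_filter.1 hj').2).2
    exact h2 h1
  have hST : ∀ b ∈ Sσ, ∀ j ∈ Sσ ∪ Tσ, (arcIdx r b ∩ arcIdx r j).Nonempty := by
    intro b hb j hj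
    have hFb := (mem_filter.1 hb).2
    rw [h𝒮, mem_filter] at hFb
    have hFj : Farc r g σ j ∈ 𝒜 := by
      rcases Finset.mem_union.1 hj with h | h
      · have := (mem_filter.1 h).2
        rw [h𝒮, mem_filter] at this
        exact this.1
      · exact (Finset.mem_sdiff.1 (mem_filter.1 h).2).1
    have hne := hFb.2 _ hFj
    obtain ⟨y, hy⟩ := hne
    rw [Finset.mem_inter, Farc_def, Farc_def] at hy
    obtain ⟨u, hu, huy⟩ := Finset.mem_image.1 hy.1
    obtain ⟨v, hv, hvy⟩ := Finset.mem_image.1 hy.2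
    have huv : u = v := g.injective (σ.injective (huy.trans hvy.symm))
    exact ⟨u, Finset.mem_inter.2 ⟨hu, huv ▸ hv⟩⟩
  have hsum := Finset.sum_le_sum (s := (univ : Finset (ZMod n)))
    (fun x _ => perpoint hr hrn Sσ Tσ hdis hST x)
  rw [Finset.sum_add_distrib, Finset.sum_const, Finset.sum_const, Finset.card_univ,
    ZMod.card, smul_eq_mul, smul_eq_mul] at hsum
  have hT : ∑ x : ZMod n, (Tσ.filter fun j => x ∈ arcIdx r j).card = r * Tσ.card := by
    have h1 : ∀ x : ZMod n, (Tσ.filter fun j => x ∈ arcIdx r j).card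
        = ∑ j ∈ Tσ, if x ∈ arcIdx r j then 1 else 0 := fun x => Finset.card_filter _ _
    rw [Finset.sum_congr rfl (fun x _ => h1 x), Finset.sum_comm]
    have h2 : ∀ j ∈ Tσ, ∑ x : ZMod n, (if x ∈ arcIdx r j then 1 else 0) = r := by
      intro j _
      rw [← Finset.card_filter]
      rw [Finset.filter_univ_mem]
      exact arcIdx_card hrn' j
    rw [Finset.sum_congr rfl h2, Finset.sum_const, smul_eq_mul, mul_comm]
  rw [hT] at hsum
  exact hsum

lemma count_global [NeZero n] (hrn' : r < n) (g : ZMod n ≃ Fin n)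
    (𝒢 : Finset (Finset (Fin n))) (h𝒢 : ∀ A ∈ 𝒢, A.card = r) :
    (∑ σ : Equiv.Perm (Fin n), (univ.filter fun j : ZMod n => Farc r g σ j ∈ 𝒢).card)
        * n.choose r = n * (𝒢.card * n.factorial) := by
  classical
  have h1 : ∀ σ : Equiv.Perm (Fin n), (univ.filter fun j : ZMod n => Farc r g σ j ∈ 𝒢).card
      = ∑ j : ZMod n, if Farc r g σ j ∈ 𝒢 then 1 else 0 := fun σ => Finset.card_filter _ _
  rw [Finset.sum_congr rfl (fun σ _ => h1 σ), Finset.sum_comm]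
  have h2 : ∀ j : ZMod n, ∑ σ : Equiv.Perm (Fin n), (if Farc r g σ j ∈ 𝒢 then 1 else 0)
      = ∑ A ∈ 𝒢, (univ.filter fun σ : Equiv.Perm (Fin n) => Farc r g σ j = A).card := by
    intro j
    rw [← Finset.card_filter]
    apply Finset.card_eq_sum_card_fiberwise (f := fun σ => Farc r g σ j)
      (fun σ hσ => (mem_filter.1 hσ).2) |>.trans
    apply Finset.sum_congr rfl
    intro A hA
    congr 1
    rw [Finset.filter_filter]
    apply Finset.filter_congr
    intro σ _
    constructor
    · exact fun h => h.2
    · exact fun h => ⟨by show Farc r g σ j ∈ 𝒢; rw [h]; exact hA, h⟩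
  rw [Finset.sum_congr rfl (fun j _ => h2 j), Finset.sum_mul]
  have h3 : ∀ j : ZMod n,
      (∑ A ∈ 𝒢, (univ.filter fun σ : Equiv.Perm (Fin n) => Farc r g σ j = A).card)
        * n.choose r = 𝒢.card * n.factorial := by
    intro j
    rw [Finset.sum_mul]
    rw [Finset.sum_congr rfl (fun A hA => fiber_count hrn' g j A (h𝒢 A hA)),
      Finset.sum_const, smul_eq_mul]
  rw [Finset.sum_congr rfl (fun j _ => h3 j), Finset.sum_const, Finset.card_univ,
    ZMod.card, smul_eq_mul]

end BorgEKR

/-- **Borg's generalization of the Erdős–Ko–Rado theorem.** Let `r < n/2` and let `𝒜` be a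
family of `r`-element subsets of `[n]`. If `𝒮` is the subfamily of sets intersecting every
member of `𝒜` and `𝒯 = 𝒜 \ 𝒮`, then `|𝒮| + (r/n)·|𝒯| ≤ C(n-1, r-1)`. -/
theorem borg_EKR {n r : ℕ} (hr : 0 < r) (hrn : 2 * r < n)
    (𝒜 : Finset (Finset (Fin n))) (h𝒜 : ∀ A ∈ 𝒜, A.card = r) :
    ((𝒜.filter fun A => ∀ B ∈ 𝒜, (A ∩ B).Nonempty).card : ℝ) +
      (r : ℝ) / (n : ℝ) *
        ((𝒜 \ 𝒜.filter fun A => ∀ B ∈ 𝒜, (A ∩ B).Nonempty).card : ℝ) ≤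
      ((n - 1).choose (r - 1) : ℝ) := by
  classical
  haveI : NeZero n := ⟨by omega⟩
  have hrn' : r < n := by omega
  set g : ZMod n ≃ Fin n := Fintype.equivOfCardEq (by rw [ZMod.card, Fintype.card_fin]) with hg
  set 𝒮 : Finset (Finset (Fin n)) := 𝒜.filter fun A => ∀ B ∈ 𝒜, (A ∩ B).Nonempty with h𝒮
  set 𝒯 : Finset (Finset (Fin n)) := 𝒜 \ 𝒮 with h𝒯
  -- main natural-number inequality
  have hnat : n * 𝒮.card + r * 𝒯.card ≤ n * ((n - 1).choose (r - 1)) := by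
    have hsum := Finset.sum_le_sum (s := (univ : Finset (Equiv.Perm (Fin n))))
      (fun σ _ => per_sigma hr hrn g 𝒜 σ)
    rw [Finset.sum_add_distrib, ← Finset.mul_sum, ← Finset.mul_sum, Finset.sum_const,
      Finset.card_univ, Fintype.card_perm, Fintype.card_fin, smul_eq_mul] at hsum
    -- multiply by choose
    have hmul := Nat.mul_le_mul_right (n.choose r) hsum
    have hS : ∀ A ∈ 𝒮, A.card = r := fun A hA => h𝒜 A (Finset.mem_of_mem_filter _ hA)
    have hT : ∀ A ∈ 𝒯, A.card = r := fun A hA => h𝒜 A (Finset.mem_sdiff.1 hA).1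
    have hSc := count_global hrn' g 𝒮 hS
    have hTc := count_global hrn' g 𝒯 hT
    rw [add_mul, mul_assoc, mul_assoc, hSc, hTc] at hmul
    -- hmul : n * (n * (𝒮.card * n!)) + r * (n * (𝒯.card * n!)) ≤ n! * (n * r) * choose
    have hchoose : r * n.choose r = n * ((n - 1).choose (r - 1)) := by
      have h1 := Nat.add_one_mul_choose_eq (n - 1) (r - 1)
      have e1 : (n - 1) + 1 = n := by omega
      have e2 : (r - 1) + 1 = r := by omega
      rw [e1, e2] at h1
      rw [mul_comm]
      exact h1.symm
    have key : (n * n.factorial) * (n * 𝒮.card + r * 𝒯.card)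
        ≤ (n * n.factorial) * (n * ((n - 1).choose (r - 1))) := by
      calc (n * n.factorial) * (n * 𝒮.card + r * 𝒯.card)
          = n * (n * (𝒮.card * n.factorial)) + r * (n * (𝒯.card * n.factorial)) := by ring
        _ ≤ n.factorial * (n * r) * n.choose r := hmul
        _ = (n * n.factorial) * (r * n.choose r) := by ring
        _ = (n * n.factorial) * (n * ((n - 1).choose (r - 1))) := by rw [hchoose]
    have hpos : 0 < n * n.factorial := Nat.mul_pos (by omega) n.factorial_pos
    exact Nat.le_of_mul_le_mul_left key hpos
  -- pass to the reals
  have hcast : (n : ℝ) * 𝒮.card + r * 𝒯.card ≤ n * ((n - 1).choose (r - 1)) := by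
    exact_mod_cast hnat
  have hnpos : (0 : ℝ) < n := by
    have : 0 < n := by omega
    exact_mod_cast this
  rw [div_mul_eq_mul_div, add_div' _ _ _ (ne_of_gt hnpos), div_le_iff₀ hnpos]
  nlinarith [hcast]
end

section
/- Let r and n be positive integers, let 𝒜 be a family of r-element subsets of {1,…,n}, and define m(A) as in the localized Erdős–Ko–Rado theorem: m(A) = n/r if A lies in a matching of ⌊n/r⌋ sets from 𝒜, and otherwise m(A) is the size of the largest matching in 𝒜 containing A. Let σ be a cyclic ordering of {1,…,n} and let 𝒜^σ be the collection of sets in 𝒜 whose elements are consecutive in σ (intervals in σ). Then the sum over all A ∈ 𝒜^σ of 1/m(A) is at most r. -/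
open Finset

namespace CycLemma

/-- Two length-`r` arcs starting at positions `a b < n` on a cycle of length `n`
are disjoint. -/
def sep (n r a b : ℕ) : Prop := r + min a b ≤ max a b ∧ max a b + r ≤ n + min a b

lemma sep_comm {n r a b : ℕ} (h : sep n r a b) : sep n r b a := by
  unfold sep at *; omega

open Classical in
/-- Size of a largest matching (set of pairwise disjoint arcs) through `x`. -/
noncomputable def tnum (n r : ℕ) (V : Finset ℕ) (x : ℕ) : ℕ :=
  Nat.findGreatest (fun k => ∃ K : Finset ℕ, K ⊆ V ∧ x ∈ K ∧
    (K : Set ℕ).Pairwise (sep n r) ∧ K.card = k) n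

lemma le_tnum {n r : ℕ} {V K : Finset ℕ} {x : ℕ} (hV : ∀ a ∈ V, a < n)
    (hKV : K ⊆ V) (hx : x ∈ K) (hp : (K : Set ℕ).Pairwise (sep n r)) :
    K.card ≤ tnum n r V x := by
  classical
  have hVn : V ⊆ range n := fun a ha => mem_range.2 (hV a ha)
  have hcard : K.card ≤ n := by
    calc K.card ≤ (range n).card := card_le_card (hKV.trans hVn)
    _ = n := card_range n
  exact Nat.le_findGreatest hcard ⟨K, hKV, hx, hp, rfl⟩

lemma tnum_spec {n r : ℕ} {V : Finset ℕ} {x : ℕ} (hV : ∀ a ∈ V, a < n)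
    (hx : x ∈ V) (hn : 1 ≤ n) :
    ∃ K : Finset ℕ, K ⊆ V ∧ x ∈ K ∧ (K : Set ℕ).Pairwise (sep n r) ∧
      K.card = tnum n r V x := by
  classical
  have hP1 : (fun k => ∃ K : Finset ℕ, K ⊆ V ∧ x ∈ K ∧
      (K : Set ℕ).Pairwise (sep n r) ∧ K.card = k) 1 := by
    refine ⟨{x}, by simpa using hx, mem_singleton_self x, by simp [Set.Pairwise], by simp⟩
  exact Nat.findGreatest_spec (P := fun k => ∃ K : Finset ℕ, K ⊆ V ∧ x ∈ K ∧
      (K : Set ℕ).Pairwise (sep n r) ∧ K.card = k) hn hP1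

lemma tnum_pos {n r : ℕ} {V : Finset ℕ} {x : ℕ} (hV : ∀ a ∈ V, a < n)
    (hx : x ∈ V) : 1 ≤ tnum n r V x := by
  have : ({x} : Finset ℕ).card ≤ tnum n r V x := by
    refine le_tnum hV ?_ (mem_singleton_self x) ?_
    · simpa using hx
    · simp [Set.Pairwise]
  simpa using this



lemma strictMono_gap {p : ℕ} {f : Fin p → ℕ} (hf : StrictMono f) :
    ∀ (d : ℕ) (a b : Fin p), (b : ℕ) = a + d → f a + d ≤ f b := by
  intro d
  induction d with
  | zero =>
    intro a b h
    have hab : a = b := Fin.ext (by omega)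
    subst hab; omega
  | succ d ih =>
    intro a b h
    have hb' : (a : ℕ) + d < p := by omega
    have h1 := ih a ⟨a + d, hb'⟩ rfl
    have h2 : f ⟨a + d, hb'⟩ < f b := hf (by rw [Fin.lt_def]; simp; omega)
    omega

lemma chain_zero {n r τ : ℕ} {V : Finset ℕ} (hr : 1 ≤ r) (hτ1 : 1 ≤ τ)
    (hV : ∀ a ∈ V, a < n) (h0 : 0 ∈ V) (hτ : τ * r ≤ V.card) :
    ∃ K : Finset ℕ, K ⊆ V ∧ 0 ∈ K ∧ (K : Set ℕ).Pairwise (sep n r) ∧ K.card = τ := by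
  classical
  have hp0 : 0 < V.card := card_pos.2 ⟨0, h0⟩
  set p := V.card with hp
  set e := V.orderIsoOfFin (rfl : V.card = p) with he
  set f : Fin p → ℕ := fun j => (e j : ℕ) with hf
  have hfmono : StrictMono f := fun a b hab => by
    have := e.strictMono hab
    exact_mod_cast this
  have hfV : ∀ j, f j ∈ V := fun j => (e j).2
  have hidx : ∀ k, k < τ → k * r < p := by
    intro k hk
    have h1 : (k + 1) * r ≤ τ * r := Nat.mul_le_mul_right r (by omega)
    rw [Nat.succ_mul] at h1
    omega
  -- f at index 0 equals 0
  have hf0 : f ⟨0, hp0⟩ = 0 := by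
    obtain ⟨⟨y, hy⟩, hy2⟩ := e.surjective ⟨0, h0⟩
    have h1 : f ⟨0, hp0⟩ ≤ f ⟨y, hy⟩ := hfmono.monotone (by simp)
    have h2 : f ⟨y, hy⟩ = 0 := by simp [hf, hy2]
    omega
  have hlow : ∀ j : Fin p, (j : ℕ) ≤ f j := by
    intro j
    have := strictMono_gap hfmono (j : ℕ) ⟨0, hp0⟩ j (by simp)
    omega
  have hupp : ∀ j : Fin p, f j + (p - 1 - (j:ℕ)) ≤ n - 1 := by
    intro j
    have hlast : (p - 1 : ℕ) < p := by omega
    have h1 := strictMono_gap hfmono (p - 1 - (j:ℕ)) j ⟨p - 1, hlast⟩ (by simp; omega)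
    have h2 : f ⟨p - 1, hlast⟩ < n := hV _ (hfV _)
    have h3 : 1 ≤ n := by omega
    omega
  -- the chain
  set g : ∀ k ∈ range τ, ℕ := fun k hk => f ⟨k * r, hidx k (mem_range.1 hk)⟩ with hg
  have key : ∀ k (hk : k ∈ range τ), k * r ≤ g k hk ∧ g k hk + (p - 1 - k * r) ≤ n - 1 := by
    intro k hk
    exact ⟨by simpa using hlow ⟨k * r, hidx k (mem_range.1 hk)⟩,
           by simpa using hupp ⟨k * r, hidx k (mem_range.1 hk)⟩⟩
  have sepkl : ∀ k l (hk : k ∈ range τ) (hl : l ∈ range τ), k < l →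
      sep n r (g k hk) (g l hl) := by
    intro k l hk hl hkl
    have hkτ := mem_range.1 hk
    have hlτ := mem_range.1 hl
    have hkey1 := key k hk
    have hkey2 := key l hl
    have hmul : k * r + (l - k) * r = l * r := by
      have h3 : k + (l - k) = l := by omega
      calc k * r + (l-k) * r = (k + (l-k)) * r := (Nat.add_mul _ _ _).symm
      _ = l * r := by rw [h3]
    have hgap : g k hk + (l - k) * r ≤ g l hl := by
      have h2 := strictMono_gap hfmono ((l - k) * r)
        ⟨k * r, hidx k (mem_range.1 hk)⟩ ⟨l * r, hidx l (mem_range.1 hl)⟩ (by simp; omega)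
      exact h2
    have hlr : 1 * r ≤ (l - k) * r := Nat.mul_le_mul_right r (by omega)
    have hcard : l * r + r ≤ p := by
      have h1 : (l + 1) * r ≤ τ * r := Nat.mul_le_mul_right r (by omega)
      rw [Nat.succ_mul] at h1
      omega
    have hlt : g k hk + r ≤ g l hl := by omega
    constructor
    · omega
    · have h1 : max (g k hk) (g l hl) = g l hl := by omega
      have h2 : min (g k hk) (g l hl) = g k hk := by omega
      rw [h1, h2]
      have e1 : k * r ≤ g k hk := hkey1.1
      have e2 : g l hl + (p - 1 - l * r) ≤ n - 1 := hkey2.2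
      have e3 : 1 ≤ n := by
        have := hV 0 h0; omega
      omega
  refine ⟨(range τ).attach.image (fun k => g k.1 k.2), ?_, ?_, ?_, ?_⟩
  · intro a ha
    obtain ⟨k, _, rfl⟩ := mem_image.1 ha
    exact hfV _
  · refine mem_image.2 ⟨⟨0, mem_range.2 (by omega)⟩, mem_attach _ _, ?_⟩
    simpa [hg] using hf0
  · intro a ha b hb hab
    simp only [coe_image, Set.mem_image, mem_coe] at ha hb
    obtain ⟨⟨k, hk⟩, _, rfl⟩ := ha
    obtain ⟨⟨l, hl⟩, _, rfl⟩ := hb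
    show sep n r (g k hk) (g l hl)
    have hab' : g k hk ≠ g l hl := hab
    rcases Nat.lt_trichotomy k l with h | h | h
    · exact sepkl k l hk hl h
    · subst h; exact absurd rfl hab'
    · have hs := sepkl l k hl hk h
      unfold sep at *; omega
  · rw [card_image_of_injOn, card_attach, card_range]
    intro ⟨a, ha⟩ _ ⟨b, hb⟩ _ hab
    have : a * r = b * r := by
      have := hfmono.injective (hab : f _ = f _)
      simpa [Fin.ext_iff] using this
    have : a = b := Nat.eq_of_mul_eq_mul_right (by omega) this
    simpa using this


def rot (n c a : ℕ) : ℕ := if a + c < n then a + c else a + c - n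

lemma rot_lt {n c a : ℕ} (ha : a < n) (hc : c ≤ n) : rot n c a < n := by
  unfold rot; split <;> omega

lemma rot_injOn {n c a b : ℕ} (ha : a < n) (hb : b < n) (hc : c ≤ n)
    (h : rot n c a = rot n c b) : a = b := by
  unfold rot at h; split at h <;> split at h <;> omega

lemma sep_rot {n r c a b : ℕ} (ha : a < n) (hb : b < n) (hc : c ≤ n) (h : sep n r a b) :
    sep n r (rot n c a) (rot n c b) := by
  unfold sep rot at *; split <;> split <;> omega

lemma rot_rot {n c a : ℕ} (ha : a < n) (hc : c ≤ n) :
    rot n (n - c) (rot n c a) = a := by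
  unfold rot; split <;> split <;> omega

/-- The T-lemma: every vertex lies in a matching of size `⌊|V|/r⌋`-ish: whenever
`τ * r ≤ |V|`, `tnum ≥ τ`. -/
lemma tnum_ge {n r τ : ℕ} {V : Finset ℕ} {x : ℕ} (hr : 1 ≤ r)
    (hV : ∀ a ∈ V, a < n) (hx : x ∈ V) (hτ : τ * r ≤ V.card) :
    τ ≤ tnum n r V x := by
  classical
  rcases Nat.eq_zero_or_pos τ with h | hτ1
  · omega
  have hxn := hV x hx
  have hc : n - x ≤ n := by omega
  set V' := V.image (rot n (n - x)) with hV'def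
  have hV' : ∀ a ∈ V', a < n := by
    intro a ha
    obtain ⟨b, hb, rfl⟩ := mem_image.1 ha
    exact rot_lt (hV b hb) hc
  have h0' : (0:ℕ) ∈ V' := by
    refine mem_image.2 ⟨x, hx, ?_⟩
    unfold rot; split <;> omega
  have hcard' : V'.card = V.card := by
    refine card_image_of_injOn ?_
    intro a ha b hb h
    exact rot_injOn (hV a ha) (hV b hb) hc h
  obtain ⟨K', hK'V, h0K, hK'p, hK'c⟩ :=
    chain_zero (n := n) hr hτ1 hV' h0' (by omega)
  have hxn' : x ≤ n := by omega
  have hback : ∀ a, a < n → rot n x (rot n (n - x) a) = a := by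
    intro a ha
    have h1 : n - (n - x) = x := by omega
    have := rot_rot (c := n - x) ha (by omega)
    rwa [h1] at this
  have hKlt : ∀ a ∈ K', a < n := fun a ha => hV' a (hK'V ha)
  refine le_trans (le_of_eq ?_) (le_tnum (K := K'.image (rot n x)) hV ?_ ?_ ?_)
  · rw [card_image_of_injOn, hK'c]
    intro a ha b hb h
    exact rot_injOn (hKlt a ha) (hKlt b hb) hxn' h
  · intro a ha
    obtain ⟨b, hb, rfl⟩ := mem_image.1 ha
    obtain ⟨u, hu, rfl⟩ := mem_image.1 (hK'V hb)
    rw [hback u (hV u hu)]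
    exact hu
  · refine mem_image.2 ⟨0, h0K, ?_⟩
    unfold rot; split <;> omega
  · intro a ha b hb hab
    simp only [coe_image, Set.mem_image, mem_coe] at ha hb
    obtain ⟨u, hu, rfl⟩ := ha
    obtain ⟨v, hv, rfl⟩ := hb
    have huv : u ≠ v := fun h => hab (by rw [h])
    exact sep_rot (hKlt u hu) (hKlt v hv) hxn' (hK'p hu hv huv)

/-- Arithmetic progression `c, c+r, ..., c+τr`. -/
def AP (r τ c : ℕ) : Finset ℕ := (Finset.range (τ + 1)).image (fun k => c + k * r)

lemma AP_mem {r τ c y : ℕ} : y ∈ AP r τ c ↔ ∃ k, k ≤ τ ∧ y = c + k * r := by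
  unfold AP
  simp only [mem_image, mem_range]
  constructor
  · rintro ⟨k, hk, rfl⟩; exact ⟨k, by omega, rfl⟩
  · rintro ⟨k, hk, rfl⟩; exact ⟨k, by omega, rfl⟩

lemma AP_resid {r c c' k k' : ℕ} (hr : 1 ≤ r) (hc : c < r) (hc' : c' < r)
    (h : c + k * r = c' + k' * r) : c = c' := by
  rcases Nat.lt_trichotomy k k' with hkk | hkk | hkk
  · have h1 : k * r + (k' - k) * r = k' * r := by
      have h3 : k + (k' - k) = k' := by omega
      calc k * r + (k'-k) * r = (k + (k'-k)) * r := (Nat.add_mul _ _ _).symm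
      _ = k' * r := by rw [h3]
    have h2 : 1 * r ≤ (k' - k) * r := Nat.mul_le_mul_right r (by omega)
    omega
  · subst hkk; omega
  · have h1 : k' * r + (k - k') * r = k * r := by
      have h3 : k' + (k - k') = k := by omega
      calc k' * r + (k-k') * r = (k' + (k-k')) * r := (Nat.add_mul _ _ _).symm
      _ = k * r := by rw [h3]
    have h2 : 1 * r ≤ (k - k') * r := Nat.mul_le_mul_right r (by omega)
    omega

/-- Key counting lemma: if `|V| = τr + ρ` with `1 ≤ ρ < r` and `(τ+1)r ≤ n`, then at
least `ρ(τ+1)` elements of `V` lie in a matching of size `τ+1`. -/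
lemma c15 {r : ℕ} (hr : 1 ≤ r) :
    ∀ n, ∀ V : Finset ℕ, (∀ a ∈ V, a < n) → ∀ τ ρ : ℕ, V.card = τ * r + ρ →
    1 ≤ ρ → ρ < r → (τ + 1) * r ≤ n →
    ρ * (τ + 1) ≤ (V.filter (fun x => τ + 1 ≤ tnum n r V x)).card := by
  classical
  intro n
  induction n using Nat.strong_induction_on with
  | _ n IH =>
    intro V hV τ ρ hcard hρ1 hρr hn
    have hVn : V ⊆ range n := fun a ha => mem_range.2 (hV a ha)
    rcases eq_or_lt_of_le hn with heq | hlt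
    -- base case : n = (τ+1) * r
    · have claim1 : ∀ c, c < r → AP r τ c ⊆ V → ∀ x ∈ AP r τ c, τ + 1 ≤ tnum n r V x := by
        intro c hc hsub x hx
        refine le_trans (le_of_eq ?_) (le_tnum hV hsub hx ?_)
        · unfold AP
          rw [card_image_of_injOn, card_range]
          intro a ha b hb hab
          simp only [mem_coe, mem_range] at ha hb
          have hab' : c + a * r = c + b * r := hab
          have : a * r = b * r := by omega
          exact Nat.eq_of_mul_eq_mul_right (by omega) this
        · intro a ha b hb hab
          simp only [mem_coe] at ha hb
          obtain ⟨k, hk, rfl⟩ := AP_mem.1 ha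
          obtain ⟨l, hl, rfl⟩ := AP_mem.1 hb
          have hkl : k ≠ l := by rintro rfl; exact hab rfl
          have main : ∀ k l, k ≤ τ → l ≤ τ → k < l → sep n r (c + k * r) (c + l * r) := by
            intro k l hk hl hkl
            have d1 : k * r + r ≤ l * r := by
              have h1 : (k + 1) * r ≤ l * r := Nat.mul_le_mul_right r (by omega)
              rw [Nat.succ_mul] at h1; omega
            have d2 : l * r + r ≤ (τ + 1) * r := by
              have h1 : (l + 1) * r ≤ (τ + 1) * r := Nat.mul_le_mul_right r (by omega)
              rw [Nat.succ_mul] at h1; omega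
            constructor
            · omega
            · have e1 : max (c + k * r) (c + l * r) = c + l * r := by omega
              have e2 : min (c + k * r) (c + l * r) = c + k * r := by omega
              rw [e1, e2]; omega
          rcases Nat.lt_or_ge k l with h | h
          · exact main k l hk hl h
          · have h2 : l < k := by omega
            have := main l k hl hk h2
            unfold sep at *; omega
      set good := (range r).filter (fun c => AP r τ c ⊆ V) with hgood
      have claim2 : ρ ≤ good.card := by
        set bad := (range r).filter (fun c => ¬ AP r τ c ⊆ V) with hbad
        set F : ℕ → ℕ := fun c => if h : ∃ y, y ∈ AP r τ c ∧ y ∉ V then h.choose else 0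
          with hF
        have hFspec : ∀ c ∈ bad, F c ∈ AP r τ c ∧ F c ∉ V := by
          intro c hc
          have hns : ¬ AP r τ c ⊆ V := (mem_filter.1 hc).2
          have hex : ∃ y, y ∈ AP r τ c ∧ y ∉ V := by
            by_contra hcon
            push_neg at hcon
            exact hns (fun y hy => hcon y hy)
          simp only [hF, dif_pos hex]
          exact hex.choose_spec
        have hinj : ∀ c₁ ∈ bad, ∀ c₂ ∈ bad, F c₁ = F c₂ → c₁ = c₂ := by
          intro c₁ h₁ c₂ h₂ he
          obtain ⟨hm₁, _⟩ := hFspec c₁ h₁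
          obtain ⟨hm₂, _⟩ := hFspec c₂ h₂
          obtain ⟨k₁, hk₁, hv₁⟩ := AP_mem.1 hm₁
          obtain ⟨k₂, hk₂, hv₂⟩ := AP_mem.1 hm₂
          have hc₁ : c₁ < r := mem_range.1 (mem_filter.1 h₁).1
          have hc₂ : c₂ < r := mem_range.1 (mem_filter.1 h₂).1
          exact AP_resid (k := k₁) (k' := k₂) hr hc₁ hc₂ (by omega)
        have hmaps : ∀ c ∈ bad, F c ∈ range n \ V := by
          intro c hc
          obtain ⟨hm, hnv⟩ := hFspec c hc
          obtain ⟨k, hk, hv⟩ := AP_mem.1 hm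
          have hc' : c < r := mem_range.1 (mem_filter.1 hc).1
          rw [hv] at hnv ⊢
          refine mem_sdiff.2 ⟨mem_range.2 ?_, hnv⟩
          have : (k + 1) * r ≤ (τ + 1) * r := Nat.mul_le_mul_right r (by omega)
          rw [Nat.succ_mul] at this
          omega
        have hb := card_le_card_of_injOn F hmaps hinj
        have hsd : (range n \ V).card = n - V.card := by
          rw [card_sdiff_of_subset hVn, card_range]
        have hsplit : good.card + bad.card = r := by
          rw [hgood, hbad]
          rw [card_filter_add_card_filter_not, card_range]
        have hsm : (τ + 1) * r = τ * r + r := Nat.succ_mul τ r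
        omega
      have claim4 : good.biUnion (AP r τ) ⊆ V.filter (fun x => τ + 1 ≤ tnum n r V x) := by
        intro x hx
        obtain ⟨c, hc, hxc⟩ := mem_biUnion.1 hx
        have hc1 : c < r := mem_range.1 (mem_filter.1 hc).1
        have hc2 : AP r τ c ⊆ V := (mem_filter.1 hc).2
        exact mem_filter.2 ⟨hc2 hxc, claim1 c hc1 hc2 x hxc⟩
      have claim3 : (good.biUnion (AP r τ)).card = good.card * (τ + 1) := by
        rw [card_biUnion]
        · rw [Finset.sum_congr rfl (fun c _ => ?_), Finset.sum_const, smul_eq_mul]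
          unfold AP
          rw [card_image_of_injOn, card_range]
          intro a ha b hb hab
          simp only [mem_coe, mem_range] at ha hb
          have hab' : c + a * r = c + b * r := hab
          have : a * r = b * r := by omega
          exact Nat.eq_of_mul_eq_mul_right (by omega) this
        · intro c₁ h₁ c₂ h₂ hne
          rw [Function.onFun, disjoint_left]
          intro y hy₁ hy₂
          obtain ⟨k₁, hk₁, rfl⟩ := AP_mem.1 hy₁
          obtain ⟨k₂, hk₂, hv₂⟩ := AP_mem.1 hy₂
          have hc₁ : c₁ < r := mem_range.1 (mem_filter.1 h₁).1
          have hc₂ : c₂ < r := mem_range.1 (mem_filter.1 h₂).1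
          exact hne (AP_resid (k := k₁) (k' := k₂) hr hc₁ hc₂ (by omega))
      calc ρ * (τ + 1) ≤ good.card * (τ + 1) := Nat.mul_le_mul_right _ claim2
      _ = (good.biUnion (AP r τ)).card := claim3.symm
      _ ≤ _ := card_le_card claim4
    -- inductive step : n > (τ+1) * r, delete a hole
    · have hVlt : V.card < n := by
        have : (τ + 1) * r = τ * r + r := by rw [Nat.succ_mul]
        omega
      have hhole : (range n \ V).Nonempty := by
        rw [← card_pos, card_sdiff_of_subset hVn, card_range]
        omega
      obtain ⟨h, hh⟩ := hhole
      have hhn : h < n := mem_range.1 (mem_sdiff.1 hh).1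
      have hhV : h ∉ V := (mem_sdiff.1 hh).2
      set comp : ℕ → ℕ := fun a => if a < h then a else a - 1 with hcomp
      have hinj : ∀ a ∈ V, ∀ b ∈ V, comp a = comp b → a = b := by
        intro a ha b hb hab
        have hane : a ≠ h := fun e => hhV (e ▸ ha)
        have hbne : b ≠ h := fun e => hhV (e ▸ hb)
        simp only [hcomp] at hab
        split_ifs at hab <;> omega
      set V2 := V.image comp with hV2def
      have hV2 : ∀ a ∈ V2, a < n - 1 := by
        intro a ha
        obtain ⟨b, hb, rfl⟩ := mem_image.1 ha
        have := hV b hb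
        have hbne : b ≠ h := fun e => hhV (e ▸ hb)
        simp only [hcomp]
        split <;> omega
      have hV2card : V2.card = V.card := card_image_of_injOn hinj
      have hn1 : (τ + 1) * r ≤ n - 1 := by omega
      have IH2 := IH (n - 1) (by omega) V2 hV2 τ ρ (by omega) hρ1 hρr hn1
      have hlift : ∀ x ∈ V, τ + 1 ≤ tnum (n - 1) r V2 (comp x) →
          τ + 1 ≤ tnum n r V x := by
        intro x hx htx
        have hcx : comp x ∈ V2 := mem_image_of_mem _ hx
        obtain ⟨K', hK'V, hxK', hK'p, hK'c⟩ := tnum_spec (r := r) hV2 hcx (by omega)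
        set K := V.filter (fun a => comp a ∈ K') with hKdef
        have hKV : K ⊆ V := filter_subset _ _
        have hxK : x ∈ K := mem_filter.2 ⟨hx, hxK'⟩
        have himg : K.image comp = K' := by
          apply Subset.antisymm
          · intro y hy
            obtain ⟨a, ha, rfl⟩ := mem_image.1 hy
            exact (mem_filter.1 ha).2
          · intro y hy
            obtain ⟨a, ha, rfl⟩ := mem_image.1 (hK'V hy)
            exact mem_image_of_mem _ (mem_filter.2 ⟨ha, hy⟩)
        have hKcard : K.card = K'.card := by
          rw [← himg]
          exact (card_image_of_injOn (fun a ha b hb => hinj a (hKV ha) b (hKV hb))).symm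
        have hKp : (K : Set ℕ).Pairwise (sep n r) := by
          intro a ha b hb hab
          simp only [mem_coe] at ha hb
          have haV : a ∈ V := hKV ha
          have hbV : b ∈ V := hKV hb
          have hane : a ≠ h := fun e => hhV (e ▸ haV)
          have hbne : b ≠ h := fun e => hhV (e ▸ hbV)
          have hcne : comp a ≠ comp b := fun e => hab (hinj a haV b hbV e)
          have hs := hK'p ((mem_filter.1 ha).2) ((mem_filter.1 hb).2) hcne
          have h1 := hV a haV
          have h2 := hV b hbV
          unfold sep at hs ⊢
          simp only [hcomp] at hs
          split_ifs at hs <;> omega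
        calc τ + 1 ≤ K'.card := hK'c ▸ htx
        _ = K.card := hKcard.symm
        _ ≤ tnum n r V x := le_tnum hV hKV hxK hKp
      have hcount : (V2.filter (fun y => τ + 1 ≤ tnum (n-1) r V2 y)).card ≤
          (V.filter (fun x => τ + 1 ≤ tnum n r V x)).card := by
        have himg2 : V2.filter (fun y => τ + 1 ≤ tnum (n-1) r V2 y) =
            (V.filter (fun x => τ + 1 ≤ tnum (n-1) r V2 (comp x))).image comp := by
          ext y
          constructor
          · intro hy
            obtain ⟨hyV2, hPy⟩ := mem_filter.1 hy
            obtain ⟨a, ha, rfl⟩ := mem_image.1 hyV2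
            exact mem_image_of_mem _ (mem_filter.2 ⟨ha, hPy⟩)
          · intro hy
            obtain ⟨a, ha, rfl⟩ := mem_image.1 hy
            obtain ⟨haV, hPa⟩ := mem_filter.1 ha
            exact mem_filter.2 ⟨mem_image_of_mem _ haV, hPa⟩
        rw [himg2]
        rw [card_image_of_injOn (fun a ha b hb =>
          hinj a (filter_subset _ _ ha) b (filter_subset _ _ hb))]
        apply card_le_card
        intro x hx
        obtain ⟨hxV, hPx⟩ := mem_filter.1 hx
        exact mem_filter.2 ⟨hxV, hlift x hxV hPx⟩
      omega

section Bridge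

variable {n r : ℕ} [NeZero n]

lemma zval_sub (u v : ZMod n) : (u - v).val = (u.val + n - v.val) % n := by
  have hv : v.val < n := v.val_lt
  have hneg : (((n - v.val : ℕ)) : ZMod n) = -v := by
    have h0 : ((v.val + (n - v.val) : ℕ) : ZMod n) = 0 := by
      have : v.val + (n - v.val) = n := by omega
      rw [this, ZMod.natCast_self]
    rw [Nat.cast_add, ZMod.natCast_zmod_val] at h0
    linear_combination h0
  have huv : u - v = (((u.val + (n - v.val) : ℕ)) : ZMod n) := by
    rw [Nat.cast_add, ZMod.natCast_zmod_val, hneg]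
    ring
  rw [huv, ZMod.val_natCast]
  congr 1
  omega

lemma disj_iff_sep {u v : ZMod n} (huv : u ≠ v) :
    (r ≤ (u - v).val ∧ r ≤ (v - u).val) ↔ sep n r u.val v.val := by
  have ha : u.val < n := u.val_lt
  have hb : v.val < n := v.val_lt
  have hab : u.val ≠ v.val := fun h => huv (ZMod.val_injective n h)
  have h1 := zval_sub u v
  have h2 := zval_sub v u
  rcases Nat.lt_or_ge u.val v.val with h | h
  · have e1 : (u.val + n - v.val) % n = u.val + n - v.val := Nat.mod_eq_of_lt (by omega)
    have e2 : (v.val + n - u.val) % n = v.val - u.val := by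
      rw [Nat.mod_eq_sub_mod (by omega)]
      have : v.val + n - u.val - n = v.val - u.val := by omega
      rw [this]
      exact Nat.mod_eq_of_lt (by omega)
    unfold sep
    omega
  · have h' : v.val < u.val := by omega
    have e2 : (v.val + n - u.val) % n = v.val + n - u.val := Nat.mod_eq_of_lt (by omega)
    have e1 : (u.val + n - v.val) % n = u.val - v.val := by
      rw [Nat.mod_eq_sub_mod (by omega)]
      have : u.val + n - v.val - n = u.val - v.val := by omega
      rw [this]
      exact Nat.mod_eq_of_lt (by omega)
    unfold sep
    omega

/-- The index set of the arc starting at `i`. -/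
def ival (r : ℕ) (i : ZMod n) : Finset (ZMod n) :=
  (Finset.univ : Finset (Fin r)).image (fun j : Fin r => i + ((j : ℕ) : ZMod n))

lemma mem_ival (hrn : r ≤ n) {i x : ZMod n} : x ∈ ival r i ↔ (x - i).val < r := by
  unfold ival
  simp only [mem_image, mem_univ, true_and]
  constructor
  · rintro ⟨j, rfl⟩
    have hj : (j : ℕ) < n := lt_of_lt_of_le j.2 hrn
    have : (i + ((j : ℕ) : ZMod n) - i) = ((j : ℕ) : ZMod n) := by ring
    rw [this, ZMod.val_natCast, Nat.mod_eq_of_lt hj]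
    exact j.2
  · intro hx
    refine ⟨⟨(x - i).val, hx⟩, ?_⟩
    simp only
    rw [ZMod.natCast_zmod_val]
    ring

lemma ival_card (hrn : r ≤ n) (i : ZMod n) : (ival r i).card = r := by
  unfold ival
  rw [card_image_of_injOn, card_univ, Fintype.card_fin]
  intro a _ b _ hab
  have hab' : (((a : ℕ)) : ZMod n) = ((b : ℕ) : ZMod n) := by
    have := add_left_cancel hab
    exact this
  have ha : (a : ℕ) < n := lt_of_lt_of_le a.2 hrn
  have hb : (b : ℕ) < n := lt_of_lt_of_le b.2 hrn
  have : ((a : ℕ) : ZMod n).val = ((b : ℕ) : ZMod n).val := by rw [hab']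
  rw [ZMod.val_natCast, ZMod.val_natCast, Nat.mod_eq_of_lt ha, Nat.mod_eq_of_lt hb] at this
  exact Fin.ext this

lemma ival_inj (hr : 1 ≤ r) (hrn : r < n) {i j : ZMod n} (h : ival r i = ival r j) :
    i = j := by
  have hii : i ∈ ival r i := (mem_ival (by omega)).2 (by simp [ZMod.val_zero]; omega)
  have h1 : (i - j).val < r := (mem_ival (by omega)).1 (h ▸ hii)
  by_contra hne
  have hd : 1 ≤ (i - j).val := by
    rcases Nat.eq_zero_or_pos (i - j).val with h0 | h0
    · exfalso
      have : i - j = 0 := by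
        have := ZMod.natCast_zmod_val (i - j)
        rw [h0] at this
        simpa using this.symm
      exact hne (by linear_combination this)
    · exact h0
  -- consider x = i - 1 : it is not in ival r i since (x - i).val = n - 1 ≥ r
  have hx : (i - 1) ∉ ival r i := by
    rw [mem_ival (by omega)]
    have : i - 1 - i = -1 := by ring
    rw [this]
    have hv : (-1 : ZMod n).val = n - 1 := by
      have : (-1 : ZMod n) = ((n - 1 : ℕ) : ZMod n) := by
        have h0 : ((1 + (n - 1) : ℕ) : ZMod n) = 0 := by
          have : (1 + (n - 1) : ℕ) = n := by omega
          rw [this, ZMod.natCast_self]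
        push_cast at h0
        linear_combination -h0
      rw [this, ZMod.val_natCast, Nat.mod_eq_of_lt (by omega)]
    rw [hv]
    omega
  -- but (i - 1 - j).val = (i-j).val - 1 < r, so i - 1 ∈ ival r j = ival r i
  have hx2 : (i - 1) ∈ ival r j := by
    rw [mem_ival (by omega)]
    have e : i - 1 - j = (i - j) - 1 := by ring
    set v := (i - j).val with hvdef
    have e2 : (i - j) = ((v : ℕ) : ZMod n) := (ZMod.natCast_zmod_val _).symm
    have e3 : (i - j) - 1 = ((((v - 1 : ℕ)) : ZMod n)) := by
      have hv1 : (v - 1 : ℕ) + 1 = v := by omega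
      have h4 : (((v - 1 : ℕ) + 1 : ℕ) : ZMod n) = ((v : ℕ) : ZMod n) := by rw [hv1]
      push_cast at h4
      rw [e2]
      linear_combination - h4
    rw [e, e3, ZMod.val_natCast, Nat.mod_eq_of_lt (by omega)]
    omega
  rw [← h] at hx2
  exact hx hx2

lemma ival_disjoint (hrn : r ≤ n) {u v : ZMod n} (h1 : r ≤ (u - v).val)
    (h2 : r ≤ (v - u).val) : Disjoint (ival r u) (ival r v) := by
  rw [Finset.disjoint_left]
  intro x hxu hxv
  have ha : (x - u).val < r := (mem_ival hrn).1 hxu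
  have hb : (x - v).val < r := (mem_ival hrn).1 hxv
  have ea : (((x - u).val : ℕ) : ZMod n) = x - u := ZMod.natCast_zmod_val _
  have eb : (((x - v).val : ℕ) : ZMod n) = x - v := ZMod.natCast_zmod_val _
  rcases le_or_gt (x - u).val (x - v).val with hle | hlt
  · have e1 : u - v = ((((x - v).val - (x - u).val : ℕ)) : ZMod n) := by
      rw [Nat.cast_sub hle, ea, eb]
      ring
    have e2 : (u - v).val = (x - v).val - (x - u).val := by
      rw [e1, ZMod.val_natCast, Nat.mod_eq_of_lt (by have := (x - v).val_lt; omega)]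
    omega
  · have e1 : v - u = ((((x - u).val - (x - v).val : ℕ)) : ZMod n) := by
      rw [Nat.cast_sub (by omega), ea, eb]
      ring
    have e2 : (v - u).val = (x - u).val - (x - v).val := by
      rw [e1, ZMod.val_natCast, Nat.mod_eq_of_lt (by have := (x - u).val_lt; omega)]
    omega

end Bridge


end CycLemma

open CycLemma Finset

/-- **Cyclic permutation lemma for the localized Erdős–Ko–Rado theorem.** Let `𝒜` be a family of
`r`-element subsets of `[n]` and define `m A` as in the localized EKR theorem. For a cyclic
ordering `σ` of `[n]` (a bijection `ZMod n → Fin n`), let `𝒜^σ` be the sets of `𝒜` which are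
intervals in `σ`. Then `∑_{A ∈ 𝒜^σ} 1/m(A) ≤ r`. -/
theorem cyclic_interval_lemma {n r : ℕ} (hr : 1 ≤ r) (hrn : r ≤ n)
    (𝒜 : Finset (Finset (Fin n))) (h𝒜 : ∀ A ∈ 𝒜, A.card = r)
    (m : Finset (Fin n) → ℚ)
    (hm1 : ∀ A ∈ 𝒜,
      (∃ M : Finset (Finset (Fin n)), M ⊆ 𝒜 ∧
          (M : Set (Finset (Fin n))).Pairwise (fun A B => Disjoint A B) ∧
          A ∈ M ∧ M.card = n / r) →
      m A = (n : ℚ) / (r : ℚ))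
    (hm2 : ∀ A ∈ 𝒜,
      (¬ ∃ M : Finset (Finset (Fin n)), M ⊆ 𝒜 ∧
          (M : Set (Finset (Fin n))).Pairwise (fun A B => Disjoint A B) ∧
          A ∈ M ∧ M.card = n / r) →
      ∃ k : ℕ, m A = (k : ℚ) ∧
        IsGreatest {j : ℕ | ∃ M : Finset (Finset (Fin n)), M ⊆ 𝒜 ∧
          (M : Set (Finset (Fin n))).Pairwise (fun A B => Disjoint A B) ∧
          A ∈ M ∧ M.card = j} k)
    (σ : ZMod n → Fin n) (hσ : Function.Bijective σ)
    (𝒜σ : Finset (Finset (Fin n)))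
    (h𝒜σ : ∀ A : Finset (Fin n), A ∈ 𝒜σ ↔ A ∈ 𝒜 ∧
      ∃ i : ZMod n, A = Finset.image (fun j : Fin r => σ (i + ((j : ℕ) : ZMod n))) Finset.univ) :
    ∑ A ∈ 𝒜σ, 1 / m A ≤ (r : ℚ) := by
  classical
  haveI : NeZero n := ⟨by omega⟩
  set q := n / r with hqdef
  have hq1 : 1 ≤ q := (Nat.one_le_div_iff (by omega)).2 hrn
  rcases eq_or_lt_of_le hrn with hreq | hrlt
  · -- case r = n : all interval sets are the full set
    have hsub : 𝒜σ ⊆ {(Finset.univ : Finset (Fin n))} := by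
      intro A hA
      obtain ⟨hA𝒜, _⟩ := (h𝒜σ A).1 hA
      have hAcard := h𝒜 A hA𝒜
      rw [mem_singleton]
      apply Finset.eq_univ_of_card
      rw [hAcard, ← hreq, Fintype.card_fin, hreq]
    rcases Finset.subset_singleton_iff.1 hsub with h0 | h0
    · rw [h0, Finset.sum_empty]
      positivity
    · rw [h0, Finset.sum_singleton]
      have hu𝒜 : (Finset.univ : Finset (Fin n)) ∈ 𝒜 :=
        ((h𝒜σ Finset.univ).1 (h0 ▸ mem_singleton_self _)).1
      have hmug : m Finset.univ = (n : ℚ) / (r : ℚ) := by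
        refine hm1 Finset.univ hu𝒜 ⟨{Finset.univ}, ?_, ?_, mem_singleton_self _, ?_⟩
        · intro A hA; rw [mem_singleton.1 hA]; exact hu𝒜
        · simp [Set.Pairwise]
        · rw [card_singleton, hqdef, ← hreq, Nat.div_self (by omega)]
      rw [hmug, one_div_div, ← hreq]
      have hrQ : (0:ℚ) < r := by exact_mod_cast hr
      rw [div_self (ne_of_gt hrQ)]
      exact_mod_cast hr
  -- main case r < n
  set arc : ZMod n → Finset (Fin n) :=
    fun i => Finset.image (fun j : Fin r => σ (i + ((j : ℕ) : ZMod n))) Finset.univ with harc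
  have harc_ival : ∀ i, arc i = (ival (n := n) r i).image σ := by
    intro i
    rw [harc]
    unfold ival
    rw [Finset.image_image]
    rfl
  set S : Finset (ZMod n) := Finset.univ.filter (fun i => arc i ∈ 𝒜σ) with hS
  have harc𝒜σ : ∀ i ∈ S, arc i ∈ 𝒜σ := fun i hi => (Finset.mem_filter.1 hi).2
  have harc𝒜 : ∀ i ∈ S, arc i ∈ 𝒜 := fun i hi => ((h𝒜σ (arc i)).1 (harc𝒜σ i hi)).1
  have hAσS : 𝒜σ = S.image arc := by
    ext A
    constructor
    · intro hA
      obtain ⟨hA𝒜, i, hAi⟩ := (h𝒜σ A).1 hA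
      have hiS : i ∈ S := by
        rw [hS, mem_filter]
        refine ⟨mem_univ _, ?_⟩
        have he : arc i = A := hAi.symm
        rw [he]
        exact hA
      exact mem_image.2 ⟨i, hiS, hAi.symm⟩
    · intro hA
      obtain ⟨i, hi, rfl⟩ := mem_image.1 hA
      exact harc𝒜σ i hi
  have harcinj : ∀ i ∈ S, ∀ j ∈ S, arc i = arc j → i = j := by
    intro i _ j _ h
    rw [harc_ival, harc_ival] at h
    refine ival_inj hr hrlt (Finset.image_injective hσ.injective ?_)
    · exact h
  rw [hAσS, Finset.sum_image harcinj]
  set V : Finset ℕ := S.image ZMod.val with hV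
  have hVlt : ∀ a ∈ V, a < n := by
    intro a ha
    obtain ⟨i, _, rfl⟩ := mem_image.1 ha
    exact i.val_lt
  have hVcard : V.card = S.card :=
    card_image_of_injOn (fun x _ y _ h => ZMod.val_injective n h)
  have hmemV : ∀ i ∈ S, i.val ∈ V := fun i hi => mem_image_of_mem _ hi
  -- matchings transfer from numeric to the set family
  have matching_of_num : ∀ i ∈ S, ∀ K : Finset ℕ, K ⊆ V → i.val ∈ K →
      (K : Set ℕ).Pairwise (sep n r) →
      ∃ M : Finset (Finset (Fin n)), M ⊆ 𝒜 ∧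
        (M : Set (Finset (Fin n))).Pairwise (fun A B => Disjoint A B) ∧
        arc i ∈ M ∧ M.card = K.card := by
    intro i hiS K hKV hiK hKp
    set L : Finset (ZMod n) := K.image (Nat.cast : ℕ → ZMod n) with hL
    have hcast : ∀ a ∈ K, ((a : ZMod n)).val = a := by
      intro a ha
      rw [ZMod.val_natCast, Nat.mod_eq_of_lt (hVlt a (hKV ha))]
    have hLS : ∀ z ∈ L, z ∈ S := by
      intro z hz
      obtain ⟨a, ha, rfl⟩ := mem_image.1 hz
      obtain ⟨w, hwS, hwv⟩ := mem_image.1 (hKV ha)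
      have : ((a : ℕ) : ZMod n) = w := by rw [← hwv, ZMod.natCast_zmod_val]
      rw [this]
      exact hwS
    have hcastinj : ∀ a ∈ K, ∀ b ∈ K, ((a : ℕ) : ZMod n) = ((b : ℕ) : ZMod n) → a = b := by
      intro a ha b hb h
      have := congrArg ZMod.val h
      rwa [hcast a ha, hcast b hb] at this
    refine ⟨L.image arc, ?_, ?_, ?_, ?_⟩
    · intro A hA
      obtain ⟨z, hz, rfl⟩ := mem_image.1 hA
      exact harc𝒜 z (hLS z hz)
    · intro A hA B hB hAB
      simp only [coe_image, Set.mem_image, mem_coe] at hA hB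
      obtain ⟨z₁, hz₁, rfl⟩ := hA
      obtain ⟨z₂, hz₂, rfl⟩ := hB
      obtain ⟨a₁, ha₁, rfl⟩ := mem_image.1 hz₁
      obtain ⟨a₂, ha₂, rfl⟩ := mem_image.1 hz₂
      have hane : a₁ ≠ a₂ := by
        rintro rfl
        exact hAB rfl
      have hs := hKp ha₁ ha₂ hane
      have hzne : ((a₁ : ℕ) : ZMod n) ≠ ((a₂ : ℕ) : ZMod n) := by
        intro h
        exact hane (hcastinj a₁ ha₁ a₂ ha₂ h)
      have hsep' : r ≤ (((a₁:ℕ):ZMod n) - ((a₂:ℕ):ZMod n)).val ∧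
          r ≤ (((a₂:ℕ):ZMod n) - ((a₁:ℕ):ZMod n)).val := by
        rw [disj_iff_sep hzne, hcast a₁ ha₁, hcast a₂ ha₂]
        exact hs
      rw [harc_ival, harc_ival]
      rw [Finset.disjoint_image hσ.injective]
      exact ival_disjoint (le_of_lt hrlt) hsep'.1 hsep'.2
    · refine mem_image.2 ⟨((i.val : ℕ) : ZMod n), mem_image_of_mem _ hiK, ?_⟩
      rw [ZMod.natCast_zmod_val]
    · have hLcard : L.card = K.card := card_image_of_injOn hcastinj
      have harcL : ∀ z₁ ∈ L, ∀ z₂ ∈ L, arc z₁ = arc z₂ → z₁ = z₂ := fun z₁ h₁ z₂ h₂ h =>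
        harcinj z₁ (hLS z₁ h₁) z₂ (hLS z₂ h₂) h
      rw [card_image_of_injOn (fun z₁ h₁ z₂ h₂ h => harcL z₁ h₁ z₂ h₂ h), hLcard]
  -- Fact A
  have factA : ∀ i ∈ S, ∀ k : ℕ, 1 ≤ k → k ≤ tnum n r V i.val → k ≤ q →
      (k : ℚ) ≤ m (arc i) := by
    intro i hiS k hk1 hkt hkq
    obtain ⟨K0, hK0V, hiK0, hK0p, hK0c⟩ := tnum_spec (r := r) hVlt (hmemV i hiS) (by omega)
    obtain ⟨K1, hK1sub, hK1card⟩ := Finset.exists_subset_card_eq (s := K0.erase i.val) (n := k - 1)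
      (by rw [card_erase_of_mem hiK0]; omega)
    set K := insert i.val K1 with hK
    have hK1i : i.val ∉ K1 := fun h => (Finset.notMem_erase _ _) (hK1sub h)
    have hKcard : K.card = k := by rw [card_insert_of_notMem hK1i, hK1card]; omega
    have hKsub : K ⊆ K0 := by
      intro a ha
      rcases mem_insert.1 ha with rfl | h
      · exact hiK0
      · exact erase_subset _ _ (hK1sub h)
    have hKp : (K : Set ℕ).Pairwise (sep n r) := hK0p.mono (coe_subset.2 hKsub)
    obtain ⟨M, hM𝒜, hMp, hMi, hMc⟩ :=
      matching_of_num i hiS K (hKsub.trans hK0V) (mem_insert_self _ _) hKp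
    by_cases hbig : ∃ M' : Finset (Finset (Fin n)), M' ⊆ 𝒜 ∧
        (M' : Set (Finset (Fin n))).Pairwise (fun A B => Disjoint A B) ∧
        arc i ∈ M' ∧ M'.card = n / r
    · rw [hm1 (arc i) (harc𝒜 i hiS) hbig]
      calc (k : ℚ) ≤ ((n / r : ℕ) : ℚ) := by exact_mod_cast hkq
      _ ≤ (n : ℚ) / (r : ℚ) := Nat.cast_div_le
    · obtain ⟨kk, hmk, hgreat⟩ := hm2 (arc i) (harc𝒜 i hiS) hbig
      rw [hmk]
      have hkk : k ≤ kk := hgreat.2 ⟨M, hM𝒜, hMp, hMi, by rw [hMc, hKcard]⟩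
      exact_mod_cast hkk
  -- Fact B
  have factB : ∀ i ∈ S, q ≤ tnum n r V i.val → m (arc i) = (n : ℚ) / (r : ℚ) := by
    intro i hiS hqt
    obtain ⟨K0, hK0V, hiK0, hK0p, hK0c⟩ := tnum_spec (r := r) hVlt (hmemV i hiS) (by omega)
    obtain ⟨K1, hK1sub, hK1card⟩ := Finset.exists_subset_card_eq (s := K0.erase i.val) (n := q - 1)
      (by rw [card_erase_of_mem hiK0]; omega)
    set K := insert i.val K1 with hK
    have hK1i : i.val ∉ K1 := fun h => (Finset.notMem_erase _ _) (hK1sub h)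
    have hKcard : K.card = q := by rw [card_insert_of_notMem hK1i, hK1card]; omega
    have hKsub : K ⊆ K0 := by
      intro a ha
      rcases mem_insert.1 ha with rfl | h
      · exact hiK0
      · exact erase_subset _ _ (hK1sub h)
    have hKp : (K : Set ℕ).Pairwise (sep n r) := hK0p.mono (coe_subset.2 hKsub)
    obtain ⟨M, hM𝒜, hMp, hMi, hMc⟩ :=
      matching_of_num i hiS K (hKsub.trans hK0V) (mem_insert_self _ _) hKp
    exact hm1 (arc i) (harc𝒜 i hiS) ⟨M, hM𝒜, hMp, hMi, by rw [hMc, hKcard]⟩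
  have hmpos : ∀ i ∈ S, (1:ℚ) ≤ m (arc i) := by
    intro i hi
    have h1 := factA i hi 1 le_rfl (tnum_pos hVlt (hmemV i hi)) hq1
    exact_mod_cast h1
  set p := S.card with hp
  set τ := p / r with hτdef
  set ρ := p % r with hρdef
  have hpn : p ≤ n := by
    calc S.card ≤ (Finset.univ : Finset (ZMod n)).card := card_le_card (subset_univ _)
    _ = n := by rw [card_univ, ZMod.card]
  have hTlem : ∀ i ∈ S, τ ≤ tnum n r V i.val := fun i hi =>
    tnum_ge hr hVlt (hmemV i hi) (by rw [hVcard]; exact Nat.div_mul_le_self p r)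
  rcases Nat.lt_or_ge p (q * r) with hplt | hpge
  · -- uncapped regime
    have hτq : τ + 1 ≤ q := by
      have : p / r < q := (Nat.div_lt_iff_lt_mul (by omega)).2 hplt
      omega
    have hdm : τ * r + ρ = p := by
      rw [hτdef, hρdef, Nat.mul_comm]
      exact Nat.div_add_mod p r
    have hρr : ρ < r := Nat.mod_lt _ (by omega)
    rcases Nat.eq_zero_or_pos τ with hτ0 | hτ1
    · -- τ = 0 : p < r
      have hpr : p < r := by
        have h0 : τ * r = 0 := by rw [hτ0, Nat.zero_mul]
        omega
      have hbound : ∀ i ∈ S, 1 / m (arc i) ≤ (1:ℚ) := by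
        intro i hi
        rw [div_le_one (by linarith [hmpos i hi])]
        linarith [hmpos i hi]
      calc ∑ i ∈ S, 1 / m (arc i) ≤ S.card • (1:ℚ) := sum_le_card_nsmul _ _ _ hbound
      _ = (p : ℚ) := by rw [nsmul_eq_mul, mul_one]
      _ ≤ (r : ℚ) := by exact_mod_cast le_of_lt hpr
    rcases Nat.eq_zero_or_pos ρ with hρ0 | hρ1
    · -- ρ = 0 : all terms ≤ 1/τ and p = τ r
      have hbound : ∀ i ∈ S, 1 / m (arc i) ≤ 1 / (τ : ℚ) := by
        intro i hi
        refine one_div_le_one_div_of_le (by exact_mod_cast hτ1) ?_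
        exact_mod_cast factA i hi τ (by omega) (hTlem i hi) (by omega)
      have hτQ : (0:ℚ) < τ := by exact_mod_cast hτ1
      calc ∑ i ∈ S, 1 / m (arc i) ≤ S.card • (1 / (τ:ℚ)) := sum_le_card_nsmul _ _ _ hbound
      _ = (p : ℚ) / τ := by rw [nsmul_eq_mul, mul_one_div]
      _ = (r : ℚ) := by
        have : (p : ℚ) = (τ : ℚ) * r := by exact_mod_cast hdm.symm.trans (by omega)
        rw [this]
        field_simp
    · -- main regime : use c15
      have hc15 := c15 hr n V hVlt τ ρ (by rw [hVcard]; omega) hρ1 hρr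
        (le_trans (Nat.mul_le_mul_right r hτq) (Nat.div_mul_le_self n r))
      set SU := S.filter (fun i => τ + 1 ≤ tnum n r V i.val) with hSU
      have hUcard : (V.filter (fun x => τ + 1 ≤ tnum n r V x)).card = SU.card := by
        rw [hV, Finset.filter_image]
        exact card_image_of_injOn (fun x _ y _ h => ZMod.val_injective n h)
      have hu1 : ρ * (τ + 1) ≤ SU.card := by omega
      have hcards : SU.card + (S.filter (fun i => ¬ (τ + 1 ≤ tnum n r V i.val))).card = p := by
        rw [hSU]
        exact card_filter_add_card_filter_not _
      set w := (S.filter (fun i => ¬ (τ + 1 ≤ tnum n r V i.val))).card with hw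
      have hb1 : ∑ i ∈ SU, 1 / m (arc i) ≤ SU.card • (1 / ((τ:ℚ) + 1)) := by
        refine sum_le_card_nsmul _ _ _ ?_
        intro i hi
        refine one_div_le_one_div_of_le (by positivity) ?_
        have := factA i (filter_subset _ _ hi) (τ + 1) (by omega)
          ((mem_filter.1 hi).2) hτq
        push_cast at this ⊢
        linarith
      have hb2 : ∑ i ∈ S.filter (fun i => ¬ (τ + 1 ≤ tnum n r V i.val)), 1 / m (arc i) ≤
          w • (1 / (τ:ℚ)) := by
        refine sum_le_card_nsmul _ _ _ ?_
        intro i hi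
        refine one_div_le_one_div_of_le (by exact_mod_cast hτ1) ?_
        exact_mod_cast factA i (filter_subset _ _ hi) τ (by omega)
          (hTlem i (filter_subset _ _ hi)) (by omega)
      have hsplit : ∑ i ∈ S, 1 / m (arc i) =
          (∑ i ∈ SU, 1 / m (arc i)) +
          ∑ i ∈ S.filter (fun i => ¬ (τ + 1 ≤ tnum n r V i.val)), 1 / m (arc i) := by
        rw [hSU]
        exact (Finset.sum_filter_add_sum_filter_not S _ _).symm
      rw [hsplit]
      have hτQ : (0:ℚ) < τ := by exact_mod_cast hτ1
      have hτ1Q : (0:ℚ) < (τ:ℚ) + 1 := by positivity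
      have c1 : (ρ:ℚ) * ((τ:ℚ) + 1) ≤ SU.card := by exact_mod_cast hu1
      have c2 : (SU.card : ℚ) + w = p := by exact_mod_cast hcards
      have c3 : (τ:ℚ) * r + ρ = p := by exact_mod_cast hdm
      have hfinal : SU.card • (1 / ((τ:ℚ) + 1)) + w • (1 / (τ:ℚ)) ≤ (r:ℚ) := by
        rw [nsmul_eq_mul, nsmul_eq_mul, mul_one_div, mul_one_div]
        rw [div_add_div _ _ (ne_of_gt hτ1Q) (ne_of_gt hτQ), div_le_iff₀ (by positivity)]
        nlinarith [c1, c2, c3]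
      exact le_trans (add_le_add hb1 hb2) hfinal
  · -- capped regime : p ≥ q * r, every element lies in a q-matching
    have hτq : q ≤ τ := (Nat.le_div_iff_mul_le (by omega)).2 hpge
    have hall : ∀ i ∈ S, m (arc i) = (n : ℚ) / (r : ℚ) := fun i hi =>
      factB i hi (le_trans hτq (hTlem i hi))
    have hnQ : (0:ℚ) < n := by exact_mod_cast (by omega : 0 < n)
    calc ∑ i ∈ S, 1 / m (arc i) = ∑ _i ∈ S, (r:ℚ)/(n:ℚ) := by
          refine sum_congr rfl (fun i hi => ?_)
          rw [hall i hi, one_div_div]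
    _ = (p : ℚ) * ((r:ℚ)/(n:ℚ)) := by rw [sum_const, nsmul_eq_mul, hp]
    _ ≤ (n : ℚ) * ((r:ℚ)/(n:ℚ)) := by
          apply mul_le_mul_of_nonneg_right
          · exact_mod_cast hpn
          · positivity
    _ = (r : ℚ) := by field_simp
end

section
/- Let G be a perfect graph on n vertices. Let f be a function assigning a positive real number to each pair (H, v) where H is an induced subgraph of G and v is a vertex of H, such that (i) f(H, v) ≤ f(H', v) whenever H' is obtained from H by adding one more vertex of G (with induced edges), and (ii) whenever the vertex set of H is an independent set of G, the sum over v ∈ V(H) of 1/f(H, v) is at most 1. For an induced subgraph H and v ∈ V(H), let c(H, v) be the size of the largest clique of H containing v. Then for every induced subgraph H of G, the sum over v ∈ V(H) of 1/(f(H, v)·c(H, v)) is at most 1. -/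
/-- A simple graph is perfect if for every induced subgraph, the chromatic number equals the
clique number. -/
def SimpleGraph.IsPerfect {V : Type*} (G : SimpleGraph V) : Prop :=
  ∀ S : Set V, (G.induce S).chromaticNumber = ((G.induce S).cliqueNum : ℕ∞)

open Finset

namespace LocalPerfect

variable {V : Type*} [Fintype V] [DecidableEq V]

/-- The blow-up of `G`: copies of a vertex are pairwise adjacent. -/
def Blow (G : SimpleGraph V) : SimpleGraph (V × ℕ) where
  Adj a b := G.Adj a.1 b.1 ∨ (a.1 = b.1 ∧ a.2 ≠ b.2)
  symm := by
    constructor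
    rintro a b (h | ⟨h1, h2⟩)
    · exact Or.inl h.symm
    · exact Or.inr ⟨h1.symm, h2.symm⟩
  loopless := by constructor; rintro a (h | ⟨h1, h2⟩); exacts [G.loopless.irrefl _ h, h2 rfl]

def Stab (G : SimpleGraph V) (I : Finset (V × ℕ)) : Prop :=
  ∀ a ∈ I, ∀ b ∈ I, a ≠ b → ¬ (Blow G).Adj a b

def BClique (G : SimpleGraph V) (K : Finset (V × ℕ)) : Prop :=
  ∀ a ∈ K, ∀ b ∈ K, a ≠ b → (Blow G).Adj a b

lemma lemmaA (G : SimpleGraph V) (hG : SimpleGraph.IsPerfect G) :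
    ∀ N (T : Finset (V × ℕ)), T.card ≤ N → ∀ k : ℕ,
      (∀ K ⊆ T, BClique G K → K.card ≤ k) →
      ∃ n ≤ k, ∃ I : Fin n → Finset (V × ℕ),
        (∀ j, I j ⊆ T ∧ Stab G (I j)) ∧ ∀ x ∈ T, ∃ j, x ∈ I j := by
  classical
  intro N
  induction N with
  | zero =>
    intro T hT k _
    refine ⟨0, Nat.zero_le k, fun _ => ∅, fun j => ⟨empty_subset _, ?_⟩, ?_⟩
    · intro a ha; simp at ha
    · intro x hx
      rw [Nat.le_zero, card_eq_zero] at hT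
      simp [hT] at hx
  | succ N ih =>
    intro T hT k hk
    by_cases hTe : T = ∅
    · refine ⟨0, Nat.zero_le k, fun _ => ∅, fun j => ⟨empty_subset _, ?_⟩, ?_⟩
      · intro a ha; simp at ha
      · intro x hx; simp [hTe] at hx
    by_cases hinj : ∀ a ∈ T, ∀ b ∈ T, a.1 = b.1 → a = b
    · -- at most one copy per vertex: use perfection of G directly
      set S : Finset V := T.image Prod.fst with hS
      have hSc : ∀ x ∈ T, x.1 ∈ (↑S : Set V) := by
        intro x hx; simp only [hS, coe_image, Set.mem_image, mem_coe]
        exact ⟨x, hx, rfl⟩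
      set m := (G.induce (↑S : Set V)).cliqueNum with hm
      have hcol : (G.induce (↑S : Set V)).Colorable m :=
        SimpleGraph.chromaticNumber_le_iff_colorable.mp (le_of_eq (hG ↑S))
      -- m ≤ k
      obtain ⟨s, hs⟩ := (G.induce (↑S : Set V)).exists_isNClique_cliqueNum
      have hmk : m ≤ k := by
        set K0 : Finset (V × ℕ) := T.filter (fun x => x.1 ∈ s.image Subtype.val) with hK0
        have hK0T : K0 ⊆ T := filter_subset _ _
        have hK0c : BClique G K0 := by
          intro x hx y hy hxy
          simp only [hK0, mem_filter, mem_image] at hx hy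
          obtain ⟨hxT, u, hu, hux⟩ := hx
          obtain ⟨hyT, v, hv, hvy⟩ := hy
          have hne : x.1 ≠ y.1 := fun h => hxy (hinj x hxT y hyT h)
          have huv : u ≠ v := by rintro rfl; exact hne (hux ▸ hvy ▸ rfl)
          have := hs.1 hu hv huv
          simp only [SimpleGraph.comap_adj, Function.Embedding.coe_subtype] at this
          exact Or.inl (by rwa [hux, hvy] at this)
        -- card K0 = m
        have himg : K0.image Prod.fst = s.image Subtype.val := by
          apply Finset.Subset.antisymm
          · intro v hv
            obtain ⟨x, hxK, hxv⟩ := mem_image.mp hv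
            have := (mem_filter.mp hxK).2
            rwa [hxv] at this
          · intro v hv
            obtain ⟨u, hu, huv⟩ := mem_image.mp hv
            have hvS : v ∈ S := by
              rw [← huv]
              simpa using u.2
            obtain ⟨x, hxT, hxv⟩ := mem_image.mp hvS
            exact mem_image.mpr ⟨x, mem_filter.mpr ⟨hxT,
              mem_image.mpr ⟨u, hu, huv.trans hxv.symm⟩⟩, hxv⟩
        have hcard : K0.card = m := by
          have h1 : K0.card = (K0.image Prod.fst).card := by
            rw [Finset.card_image_of_injOn]
            intro x hx y hy hxy
            exact hinj x (hK0T hx) y (hK0T hy) hxy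
          rw [h1, himg, Finset.card_image_of_injective _ Subtype.val_injective, hs.2]
        rw [← hcard]; exact hk K0 hK0T hK0c
      -- m ≥ 1 since T nonempty
      obtain ⟨x0, hx0⟩ := Finset.nonempty_iff_ne_empty.mpr hTe
      have hm1 : 1 ≤ m := by
        have : (G.induce (↑S : Set V)).IsClique
            ({(⟨x0.1, hSc x0 hx0⟩ : (↑S : Set V))} : Finset (↑S : Set V)) := by
          simp [SimpleGraph.isClique_iff, Set.pairwise_singleton]
        have := this.card_le_cliqueNum
        simpa using this
      obtain ⟨C⟩ := hcol
      set g : V × ℕ → Fin m := fun x =>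
        (if h : x.1 ∈ (↑S : Set V) then C ⟨x.1, h⟩ else Fin.mk 0 hm1) with hgdef
      refine ⟨m, hmk, fun j => T.filter (fun x => g x = j), fun j => ⟨filter_subset _ _, ?_⟩, ?_⟩
      · intro x hx y hy hxy hadj
        simp only [mem_filter] at hx hy
        have hne : x.1 ≠ y.1 := fun h => hxy (hinj x hx.1 y hy.1 h)
        have hadjG : G.Adj x.1 y.1 := by
          rcases hadj with h | ⟨h, _⟩
          · exact h
          · exact absurd h hne
        have hax := hSc x hx.1
        have hay := hSc y hy.1
        have : (G.induce (↑S : Set V)).Adj ⟨x.1, hax⟩ ⟨y.1, hay⟩ := by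
          simp only [SimpleGraph.comap_adj]; exact hadjG
        have hv := C.valid this
        apply hv
        have hgx := hx.2
        have hgy := hy.2
        simp only [hgdef] at hgx hgy
        simp only [dif_pos hax] at hgx
        simp only [dif_pos hay] at hgy
        rw [hgx, hgy]
      · intro x hx
        exact ⟨g x, mem_filter.mpr ⟨hx, rfl⟩⟩
    · -- two copies of some vertex
      push_neg at hinj
      obtain ⟨a, haT, b, hbT, hab1, hab⟩ := hinj
      set T' := T.erase b with hT'
      have haT' : a ∈ T' := mem_erase.mpr ⟨hab, haT⟩
      have hbT' : b ∉ T' := notMem_erase b T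
      have hT'N : T'.card ≤ N := by
        rw [hT', card_erase_of_mem hbT]
        omega
      have hb2 : a.2 ≠ b.2 := by
        intro h
        exact hab (Prod.ext hab1 h)
      set F := T'.powerset.filter (fun K => BClique G K) with hF
      set w : ℕ := F.sup card with hw
      have hbound' : ∀ K ⊆ T', BClique G K → K.card ≤ w :=
        fun K hK hKc => le_sup (mem_filter.mpr ⟨mem_powerset.mpr hK, hKc⟩)
      have hw1 : 1 ≤ w := by
        have : ({a} : Finset (V × ℕ)).card ≤ w := by
          apply hbound'
          · simpa using haT'
          · intro x hx y hy hxy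
            simp only [mem_singleton] at hx hy
            exact absurd (hx.trans hy.symm) hxy
        simpa using this
      by_cases hcase : ∀ K ⊆ T, BClique G K → K.card ≤ w
      · -- Lovász case: no clique of `T` is larger than `w`
        obtain ⟨n', hn', I', hI', hcov'⟩ := ih T' hT'N w hbound'
        obtain ⟨ja, hja⟩ := hcov' a haT'
        set A := I' ja with hA
        set U := T' \ (A.erase a) with hU
        have hUT' : U ⊆ T' := sdiff_subset
        have hUb : ∀ K ⊆ U, BClique G K → K.card ≤ w - 1 := by
          intro K hKU hKc
          by_contra hcon
          push_neg at hcon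
          have hKT' : K ⊆ T' := hKU.trans hUT'
          have hKw : K.card ≤ w := hbound' K hKT' hKc
          have hKcard : K.card = w := by omega
          have hchoice : ∀ x : V × ℕ, ∃ j : Fin n', x ∈ K → x ∈ I' j := by
            intro x
            by_cases hx : x ∈ K
            · obtain ⟨j, hj⟩ := hcov' x (hKT' hx)
              exact ⟨j, fun _ => hj⟩
            · exact ⟨ja, fun h => absurd h hx⟩
          choose φ hφ using hchoice
          have hinjOn : Set.InjOn φ ↑K := by
            intro x hx y hy hxy
            by_contra hne
            exact (hI' (φ x)).2 x (hφ x (mem_coe.mp hx)) y (hxy ▸ hφ y (mem_coe.mp hy)) hne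
              (hKc x (mem_coe.mp hx) y (mem_coe.mp hy) hne)
          have hKn' : K.card ≤ n' := by
            have := Finset.card_le_card_of_injOn φ (fun x _ => mem_univ (φ x)) hinjOn
            simpa using this
          have hn'K : n' = K.card := by omega
          have himg : K.image φ = (Finset.univ : Finset (Fin n')) := by
            apply Finset.eq_univ_of_card
            rw [Finset.card_image_of_injOn hinjOn, ← hn'K, Fintype.card_fin]
          have hjamem : ja ∈ K.image φ := himg ▸ mem_univ ja
          obtain ⟨x, hxK, hxja⟩ := mem_image.mp hjamem
          have hxA : x ∈ A := by
            rw [hA, ← hxja]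
            exact hφ x hxK
          have haK : a ∈ K := by
            have hxU := hKU hxK
            have := (mem_sdiff.mp hxU).2
            rw [mem_erase] at this
            push_neg at this
            by_cases hxa : x = a
            · rwa [← hxa]
            · exact absurd hxA (by simpa [hxa] using this)
          have hbK : b ∉ K := fun h => hbT' (hKT' h)
          have hadjb : ∀ x ∈ K, (Blow G).Adj x b := by
            intro x hx
            by_cases hxa : x = a
            · subst hxa
              exact Or.inr ⟨hab1, hb2⟩
            · have hxadj := hKc x hx a haK hxa
              rcases hxadj with h | ⟨h1, h2⟩
              · exact Or.inl (hab1 ▸ h)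
              · refine Or.inr ⟨h1.trans hab1, ?_⟩
                intro hx2
                have hxb : x = b := Prod.ext (h1.trans hab1) hx2
                exact hbK (hxb ▸ hx)
          have hKbT : insert b K ⊆ T :=
            insert_subset hbT (hKT'.trans (erase_subset b T))
          have hKbc : BClique G (insert b K) := by
            intro x hx y hy hxy
            rcases mem_insert.mp hx with rfl | hxK
            · rcases mem_insert.mp hy with rfl | hyK
              · exact absurd rfl hxy
              · exact (hadjb y hyK).symm
            · rcases mem_insert.mp hy with rfl | hyK
              · exact hadjb x hxK
              · exact hKc x hxK y hyK hxy
          have := hcase _ hKbT hKbc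
          rw [card_insert_of_notMem hbK, hKcard] at this
          omega
        have hUN : U.card ≤ N := le_trans (card_le_card hUT') hT'N
        obtain ⟨n'', hn'', I'', hI'', hcov''⟩ := ih U hUN (w - 1) hUb
        have hFne : F.Nonempty := by
          refine ⟨∅, mem_filter.mpr ⟨mem_powerset.mpr (empty_subset _), ?_⟩⟩
          intro x hx
          exact absurd hx (notMem_empty x)
        obtain ⟨Ks, hKsF, hKs⟩ := Finset.exists_mem_eq_sup F hFne card
        have hwk : w ≤ k := by
          rw [hw, hKs]
          exact hk Ks ((mem_powerset.mp (mem_filter.mp hKsF).1).trans (erase_subset b T))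
            (mem_filter.mp hKsF).2
        refine ⟨n'' + 1, by omega,
          fun j => if h : (j : ℕ) < n'' then I'' ⟨j, h⟩ else insert b (A.erase a), ?_, ?_⟩
        · intro j
          by_cases h : (j : ℕ) < n''
          · simp only [dif_pos h]
            exact ⟨((hI'' ⟨j, h⟩).1.trans hUT').trans (erase_subset b T), (hI'' ⟨j, h⟩).2⟩
          · simp only [dif_neg h]
            constructor
            · intro x hx
              rcases mem_insert.mp hx with rfl | hx
              · exact hbT
              · exact (erase_subset b T) ((hI' ja).1 (erase_subset a A hx))
            · intro x hx y hy hxy hadj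
              have hstabA := (hI' ja).2
              have hnadjb : ∀ z ∈ A.erase a, ¬ (Blow G).Adj z b := by
                intro z hz hadjz
                have hzA := mem_erase.mp hz
                have hnadj := hstabA z hzA.2 a hja hzA.1
                rcases hadjz with hh | ⟨h1, h2⟩
                · exact hnadj (Or.inl (hab1 ▸ hh))
                · have hz1 : z.1 = a.1 := h1.trans hab1.symm
                  have hz2 : z.2 ≠ a.2 := by
                    intro hz2
                    exact hzA.1 (Prod.ext hz1 hz2)
                  exact hnadj (Or.inr ⟨hz1, hz2⟩)
              rcases mem_insert.mp hx with hxb | hx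
              · rcases mem_insert.mp hy with hyb | hy
                · exact hxy (hxb.trans hyb.symm)
                · exact hnadjb y hy (hxb ▸ hadj.symm)
              · rcases mem_insert.mp hy with hyb | hy
                · exact hnadjb x hx (hyb ▸ hadj)
                · exact (hI' ja).2 x (erase_subset a A hx) y (erase_subset a A hy) hxy hadj
        · intro x hx
          by_cases hxb : x = b
          · subst hxb
            refine ⟨Fin.last n'', ?_⟩
            have hnn : ¬ (((Fin.last n'') : ℕ) < n'') := by simp
            simp only [dif_neg hnn]
            exact mem_insert_self _ _
          · have hxT' : x ∈ T' := mem_erase.mpr ⟨hxb, hx⟩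
            by_cases hxA : x ∈ A.erase a
            · refine ⟨Fin.last n'', ?_⟩
              have hnn : ¬ (((Fin.last n'') : ℕ) < n'') := by simp
              simp only [dif_neg hnn]
              exact mem_insert_of_mem hxA
            · have hxU : x ∈ U := mem_sdiff.mpr ⟨hxT', hxA⟩
              obtain ⟨j, hj⟩ := hcov'' x hxU
              refine ⟨j.castSucc, ?_⟩
              have hlt : ((j.castSucc : Fin (n'' + 1)) : ℕ) < n'' := by
                simpa using j.2
              simp only [dif_pos hlt]
              exact hj
      · push_neg at hcase
        obtain ⟨K, hKT, hKc, hKcard⟩ := hcase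
        have hwk : w + 1 ≤ k := le_trans (Nat.succ_le_of_lt hKcard) (hk K hKT hKc)
        obtain ⟨n', hn', I', hI', hcov'⟩ := ih T' hT'N w hbound'
        refine ⟨n' + 1, by omega,
          fun j => if h : (j : ℕ) < n' then I' ⟨j, h⟩ else {b}, ?_, ?_⟩
        · intro j
          by_cases h : (j : ℕ) < n'
          · simp only [dif_pos h]
            exact ⟨(hI' ⟨j, h⟩).1.trans (erase_subset b T), (hI' ⟨j, h⟩).2⟩
          · simp only [dif_neg h]
            refine ⟨by simpa using hbT, ?_⟩
            intro x hx y hy hxy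
            simp only [mem_singleton] at hx hy
            exact absurd (hx.trans hy.symm) hxy
        · intro x hx
          by_cases hxb : x = b
          · subst hxb
            refine ⟨Fin.last n', ?_⟩
            have hnn : ¬ (((Fin.last n') : ℕ) < n') := by simp
            simp only [dif_neg hnn]
            exact mem_singleton_self _
          · obtain ⟨j, hj⟩ := hcov' x (mem_erase.mpr ⟨hxb, hx⟩)
            refine ⟨j.castSucc, ?_⟩
            have hlt : ((j.castSucc : Fin (n' + 1)) : ℕ) < n' := by
              simpa using j.2
            simp only [dif_pos hlt]
            exact hj

end LocalPerfect

lemma f_mono {V : Type*} [DecidableEq V] (f : Finset V → V → ℝ)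
    (hfmono : ∀ (S : Finset V) (v w : V), v ∈ S → w ∉ S → f S v ≤ f (insert w S) v) :
    ∀ (d : ℕ) (Tf S : Finset V), Tf ⊆ S → S.card ≤ Tf.card + d → ∀ v ∈ Tf, f Tf v ≤ f S v := by
  intro d
  induction d with
  | zero =>
    intro T S hTS hcard v hv
    have : T = S := eq_of_subset_of_card_le hTS (by omega)
    rw [this]
  | succ d ihd =>
    intro T S hTS hcard v hv
    by_cases h : T = S
    · rw [h]
    · obtain ⟨u, huS, huT⟩ := exists_of_ssubset (Finset.ssubset_iff_subset_ne.mpr ⟨hTS, h⟩)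
      have h1 : f T v ≤ f (insert u T) v := hfmono T v u hv huT
      have h2 : f (insert u T) v ≤ f S v := by
        apply ihd (insert u T) S (insert_subset huS hTS) ?_ v (mem_insert_of_mem hv)
        rw [card_insert_of_notMem huT]
        omega
      exact h1.trans h2

open LocalPerfect in
theorem localized_perfect_weights' {V : Type*} [Fintype V] [DecidableEq V]
    (G : SimpleGraph V) (hG : G.IsPerfect)
    (f : Finset V → V → ℝ)
    (hfpos : ∀ (S : Finset V), ∀ v ∈ S, 0 < f S v)
    (hfmono : ∀ (S : Finset V) (v w : V), v ∈ S → w ∉ S → f S v ≤ f (insert w S) v)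
    (hfind : ∀ S : Finset V, ((S : Set V).Pairwise fun u v => ¬ G.Adj u v) →
      ∑ v ∈ S, 1 / f S v ≤ 1)
    (c : Finset V → V → ℕ)
    (hc : ∀ (S : Finset V), ∀ v ∈ S,
      IsGreatest {k : ℕ | ∃ t ⊆ S, G.IsNClique k t ∧ v ∈ t} (c S v)) :
    ∀ S : Finset V, ∑ v ∈ S, 1 / (f S v * (c S v : ℝ)) ≤ 1 := by
  classical
  intro S
  rcases S.eq_empty_or_nonempty with rfl | hSne
  · simp
  have hc1 : ∀ v ∈ S, 1 ≤ c S v := by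
    intro v hv
    refine (hc S v hv).2 ⟨{v}, Finset.singleton_subset_iff.mpr hv, ?_, Finset.mem_singleton_self v⟩
    constructor
    · simp [SimpleGraph.isClique_iff]
    · simp
  set L := ∏ v ∈ S, c S v with hL
  have hL1 : 1 ≤ L := Finset.one_le_prod' hc1
  have cdvd : ∀ v ∈ S, c S v ∣ L := fun v hv => Finset.dvd_prod_of_mem _ hv
  set w : V → ℕ := fun v => L / c S v with hwdef
  have hwL : ∀ v, w v ≤ L := fun v => Nat.div_le_self L (c S v)
  have hw1 : ∀ v ∈ S, 1 ≤ w v := by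
    intro v hv
    rw [hwdef]
    rw [Nat.one_le_div_iff (Nat.lt_of_lt_of_le zero_lt_one (hc1 v hv))]
    exact Nat.le_of_dvd (by omega) (cdvd v hv)
  set T : Finset (V × ℕ) := (S ×ˢ Finset.range L).filter (fun x => x.2 < w x.1) with hTdef
  have hmemT : ∀ v i, ((v, i) ∈ T ↔ v ∈ S ∧ i < w v) := by
    intro v i
    simp only [hTdef, Finset.mem_filter, Finset.mem_product, Finset.mem_range]
    constructor
    · rintro ⟨⟨h1, _⟩, h3⟩
      exact ⟨h1, h3⟩
    · rintro ⟨h1, h2⟩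
      exact ⟨⟨h1, lt_of_lt_of_le h2 (hwL v)⟩, h2⟩
  -- the clique bound for T
  have hbT : ∀ K ⊆ T, BClique G K → K.card ≤ L := by
    intro K hKT hKc
    set P := K.image Prod.fst with hP
    have hPS : P ⊆ S := by
      intro v hv
      obtain ⟨x, hxK, hxv⟩ := Finset.mem_image.mp hv
      have h2 := ((hmemT x.1 x.2).mp (by simpa using hKT hxK)).1
      rwa [hxv] at h2
    rcases P.eq_empty_or_nonempty with hPe | hPne
    · have hK0 : K = ∅ := Finset.image_eq_empty.mp hPe
      rw [hK0]
      simp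
    have hPclique : G.IsClique ↑P := by
      intro u hu v hv huv
      obtain ⟨x, hxK, hxu⟩ := Finset.mem_image.mp hu
      obtain ⟨y, hyK, hyv⟩ := Finset.mem_image.mp hv
      have hxy : x ≠ y := by
        intro h
        exact huv (by rw [← hxu, ← hyv, h])
      rcases hKc x hxK y hyK hxy with h | ⟨h1, _⟩
      · rwa [hxu, hyv] at h
      · exact absurd (by rw [← hxu, ← hyv, h1]) huv
    have hPc : ∀ v ∈ P, P.card ≤ c S v := by
      intro v hv
      exact (hc S v (hPS hv)).2 ⟨P, hPS, ⟨hPclique, rfl⟩, hv⟩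
    have hfiber : K.card = ∑ v ∈ P, (K.filter (fun x => x.1 = v)).card :=
      Finset.card_eq_sum_card_fiberwise (fun x hx => Finset.mem_image_of_mem Prod.fst hx)
    have hfib_le : ∀ v ∈ P, (K.filter (fun x => x.1 = v)).card ≤ w v := by
      intro v hv
      have : ((K.filter (fun x => x.1 = v)).card : ℕ) ≤ (Finset.range (w v)).card := by
        apply Finset.card_le_card_of_injOn (fun x => x.2)
        · intro x hx
          have hx' := Finset.mem_filter.mp hx
          have := (hmemT x.1 x.2).mp (by simpa using hKT hx'.1)
          rw [Finset.mem_coe, Finset.mem_range]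
          rw [← hx'.2]
          exact this.2
        · intro x hx y hy hxy
          have hx' := Finset.mem_filter.mp (Finset.mem_coe.mp hx)
          have hy' := Finset.mem_filter.mp (Finset.mem_coe.mp hy)
          exact Prod.ext (hx'.2.trans hy'.2.symm) hxy
      simpa using this
    calc K.card = ∑ v ∈ P, (K.filter (fun x => x.1 = v)).card := hfiber
      _ ≤ ∑ v ∈ P, w v := Finset.sum_le_sum hfib_le
      _ ≤ ∑ _v ∈ P, (L / P.card) := by
          apply Finset.sum_le_sum
          intro v hv
          exact Nat.div_le_div_left (hPc v hv) (Finset.card_pos.mpr hPne)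
      _ = P.card * (L / P.card) := by rw [Finset.sum_const, smul_eq_mul]
      _ ≤ L := by
          rw [mul_comm]
          exact Nat.div_mul_le_self L P.card
  obtain ⟨n, hnL, I, hI, hcov⟩ := lemmaA G hG T.card T le_rfl L hbT
  -- n ≥ 1
  obtain ⟨v0, hv0⟩ := hSne
  have hT0 : (v0, 0) ∈ T := (hmemT v0 0).mpr ⟨hv0, hw1 v0 hv0⟩
  obtain ⟨j0, _⟩ := hcov _ hT0
  set A : Fin n → Finset V := fun j => (I j).image Prod.fst with hAdef
  have hAS : ∀ j, A j ⊆ S := by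
    intro j v hv
    obtain ⟨x, hxI, hxv⟩ := Finset.mem_image.mp hv
    have h2 := ((hmemT x.1 x.2).mp (by simpa using (hI j).1 hxI)).1
    rwa [hxv] at h2
  have hAind : ∀ j, ((A j : Set V)).Pairwise fun u v => ¬ G.Adj u v := by
    intro j u hu v hv huv hadj
    obtain ⟨x, hxI, hxu⟩ := Finset.mem_image.mp (Finset.mem_coe.mp hu)
    obtain ⟨y, hyI, hyv⟩ := Finset.mem_image.mp (Finset.mem_coe.mp hv)
    have hxy : x ≠ y := by
      intro h
      exact huv (by rw [← hxu, ← hyv, h])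
    exact (hI j).2 x hxI y hyI hxy (Or.inl (by rwa [hxu, hyv]))
  set deg : V → ℕ := fun v => (Finset.univ.filter (fun j : Fin n => v ∈ A j)).card with hdegdef
  have hdeg : ∀ v ∈ S, w v ≤ deg v := by
    intro v hv
    have hch : ∀ i : ℕ, ∃ j : Fin n, i < w v → (v, i) ∈ I j := by
      intro i
      by_cases hi : i < w v
      · obtain ⟨j, hj⟩ := hcov (v, i) ((hmemT v i).mpr ⟨hv, hi⟩)
        exact ⟨j, fun _ => hj⟩
      · exact ⟨j0, fun h => absurd h hi⟩
    choose ψ hψ using hch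
    have : (Finset.range (w v)).card ≤ (Finset.univ.filter (fun j : Fin n => v ∈ A j)).card := by
      apply Finset.card_le_card_of_injOn ψ
      · intro i hi
        rw [Finset.mem_coe, Finset.mem_filter]
        refine ⟨Finset.mem_univ _, ?_⟩
        exact Finset.mem_image_of_mem Prod.fst (hψ i (Finset.mem_range.mp hi))
      · intro i hi i' hi' hii'
        by_contra hne
        exact (hI (ψ i)).2 (v, i) (hψ i (Finset.mem_range.mp (Finset.mem_coe.mp hi)))
          (v, i') (hii' ▸ hψ i' (Finset.mem_range.mp (Finset.mem_coe.mp hi')))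
          (by simp [hne]) (Or.inr ⟨rfl, hne⟩)
    simpa using this
  have hdegc : ∀ v ∈ S, L ≤ deg v * c S v := by
    intro v hv
    calc L = w v * c S v := (Nat.div_mul_cancel (cdvd v hv)).symm
      _ ≤ deg v * c S v := Nat.mul_le_mul_right _ (hdeg v hv)
  -- real computation
  have hLpos : (0:ℝ) < L := by exact_mod_cast hL1
  have step1 : ∑ v ∈ S, 1 / (f S v * (c S v : ℝ)) ≤
      ∑ v ∈ S, (deg v : ℝ) * (1 / f S v) / L := by
    apply Finset.sum_le_sum
    intro v hv
    have hf := hfpos S v hv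
    have hcpos : (0:ℝ) < (c S v : ℝ) :=
      by exact_mod_cast Nat.lt_of_lt_of_le zero_lt_one (hc1 v hv)
    have hLd : (L : ℝ) ≤ (deg v : ℝ) * (c S v : ℝ) := by exact_mod_cast hdegc v hv
    have hfne : f S v ≠ 0 := ne_of_gt hf
    have hkey : (deg v : ℝ) * (1 / f S v) * (f S v * (c S v : ℝ))
        = (deg v : ℝ) * (c S v : ℝ) := by
      field_simp
    rw [div_le_div_iff₀ (by positivity) hLpos, hkey, one_mul]
    exact hLd
  have hdouble : ∑ v ∈ S, (deg v : ℝ) * (1 / f S v) = ∑ j : Fin n, ∑ v ∈ A j, 1 / f S v := by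
    have h1 : ∀ v ∈ S, (deg v : ℝ) * (1 / f S v)
        = ∑ j : Fin n, if v ∈ A j then 1 / f S v else 0 := by
      intro v _
      have hcast : (deg v : ℝ) = ∑ j : Fin n, if v ∈ A j then (1:ℝ) else 0 := by
        rw [hdegdef]
        push_cast [Finset.card_filter]
        simp
      rw [hcast, Finset.sum_mul]
      exact Finset.sum_congr rfl (fun j _ => by split <;> simp)
    calc ∑ v ∈ S, (deg v : ℝ) * (1 / f S v)
        = ∑ v ∈ S, ∑ j : Fin n, (if v ∈ A j then 1 / f S v else 0) :=
          Finset.sum_congr rfl h1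
      _ = ∑ j : Fin n, ∑ v ∈ S, (if v ∈ A j then 1 / f S v else 0) := Finset.sum_comm
      _ = ∑ j : Fin n, ∑ v ∈ A j, 1 / f S v := by
          apply Finset.sum_congr rfl
          intro j _
          rw [Finset.sum_ite_mem, Finset.inter_eq_right.mpr (hAS j)]
  have hclass : ∀ j : Fin n, ∑ v ∈ A j, 1 / f S v ≤ 1 := by
    intro j
    have h1 : ∑ v ∈ A j, 1 / f S v ≤ ∑ v ∈ A j, 1 / f (A j) v := by
      apply Finset.sum_le_sum
      intro v hv
      have hfa : 0 < f (A j) v := hfpos (A j) v hv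
      have hmle : f (A j) v ≤ f S v :=
        f_mono f hfmono S.card (A j) S (hAS j) (by omega) v hv
      exact one_div_le_one_div_of_le hfa hmle
    exact h1.trans (hfind (A j) (hAind j))
  have hsum : ∑ j : Fin n, ∑ v ∈ A j, 1 / f S v ≤ (n : ℝ) := by
    calc ∑ j : Fin n, ∑ v ∈ A j, 1 / f S v ≤ ∑ _j : Fin n, (1:ℝ) :=
          Finset.sum_le_sum (fun j _ => hclass j)
      _ = n := by simp
  calc ∑ v ∈ S, 1 / (f S v * (c S v : ℝ))
      ≤ ∑ v ∈ S, (deg v : ℝ) * (1 / f S v) / L := step1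
    _ = (∑ v ∈ S, (deg v : ℝ) * (1 / f S v)) / L := by rw [Finset.sum_div]
    _ = (∑ j : Fin n, ∑ v ∈ A j, 1 / f S v) / L := by rw [hdouble]
    _ ≤ (n : ℝ) / L := by gcongr
    _ ≤ (L : ℝ) / L := by
        have : (n : ℝ) ≤ (L : ℝ) := by exact_mod_cast hnL
        gcongr
    _ = 1 := div_self (ne_of_gt hLpos)

/-- **Localized weight bound for perfect graphs.** Let `G` be a perfect graph and `f` a positive
function on pairs `(H, v)` with `H` an induced subgraph (given by its vertex set `S`) and
`v ∈ S`, such that `f` is monotone under adding a vertex to `H` and such that for every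
independent set `S`, `∑_{v ∈ S} 1/f(S,v) ≤ 1`. If `c S v` is the size of the largest clique of
the subgraph induced on `S` containing `v`, then for every induced subgraph `S`,
`∑_{v ∈ S} 1/(f(S,v)·c(S,v)) ≤ 1`. -/
theorem localized_perfect_weights {V : Type*} [Fintype V] [DecidableEq V]
    (G : SimpleGraph V) (hG : G.IsPerfect)
    (f : Finset V → V → ℝ)
    (hfpos : ∀ (S : Finset V), ∀ v ∈ S, 0 < f S v)
    (hfmono : ∀ (S : Finset V) (v w : V), v ∈ S → w ∉ S → f S v ≤ f (insert w S) v)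
    (hfind : ∀ S : Finset V, ((S : Set V).Pairwise fun u v => ¬ G.Adj u v) →
      ∑ v ∈ S, 1 / f S v ≤ 1)
    (c : Finset V → V → ℕ)
    (hc : ∀ (S : Finset V), ∀ v ∈ S,
      IsGreatest {k : ℕ | ∃ t ⊆ S, G.IsNClique k t ∧ v ∈ t} (c S v)) :
    ∀ S : Finset V, ∑ v ∈ S, 1 / (f S v * (c S v : ℝ)) ≤ 1 :=
  localized_perfect_weights' G hG f hfpos hfmono hfind c hc
end
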